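/- arXiv:1504.04891 — 6 statements merged into one kernel-verified Lean document; each statement's English description precedes it below -/
import Mathlib

section
/- Let d ≥ 1 and for each n ∈ ℕ let c_n = (c_{n,j})_{j∈ℤ^d} be square-summable real numbers with ‖c_n‖² := Σ_{j∈ℤ^d} c_{n,j}² > 0. If for every q ∈ {1,…,d}, lim_{n→∞} ‖c_n‖^{-2} Σ_{j∈ℤ^d} |c_{n,j}² − c_{n,j+e_q}²| = 0, where e_q is the q-th canonical basis vector of ℤ^d, then lim_{n→∞} ‖c_n‖^{-1} sup_{j∈ℤ^d} |c_{n,j}| = 0. -/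
open Filter

private lemma one_dir_nat {d : ℕ} (f : (Fin d → ℤ) → ℝ) (q : Fin d)
    (hsum : Summable fun j => |f j - f (j + Pi.single q 1)|)
    (j : Fin d → ℤ) (m : ℕ) :
    |f j - f (j + (m : ℤ) • Pi.single q 1)| ≤ ∑' x, |f x - f (x + Pi.single q 1)| := by
  have hstep : ∀ i : ℕ, j + ((i : ℤ) + 1) • Pi.single q 1 =
      (j + (i : ℤ) • Pi.single q 1) + Pi.single q 1 := by
    intro i
    rw [add_smul, one_smul, add_assoc]
  have h1 : |f j - f (j + (m : ℤ) • Pi.single q 1)| ≤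
      ∑ i ∈ Finset.range m,
        |f (j + (i : ℤ) • Pi.single q 1) - f ((j + (i : ℤ) • Pi.single q 1) + Pi.single q 1)| := by
    induction m with
    | zero => simp
    | succ m ih =>
      rw [Finset.sum_range_succ]
      have h2 : |f j - f (j + ((m + 1 : ℕ) : ℤ) • Pi.single q 1)| ≤
          |f j - f (j + (m : ℤ) • Pi.single q 1)| +
          |f (j + (m : ℤ) • Pi.single q 1) - f (j + ((m : ℤ) + 1) • Pi.single q 1)| := by
        push_cast
        exact abs_sub_le _ _ _
      rw [hstep m] at h2
      linarith
  refine h1.trans ?_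
  have hinj : Function.Injective (fun i : ℕ => j + (i : ℤ) • Pi.single q 1) := by
    intro a b hab
    have h := congrFun hab q
    simp only [Pi.add_apply, Pi.smul_apply, Pi.single_eq_same, smul_eq_mul, mul_one,
      add_right_inj] at h
    exact_mod_cast h
  calc ∑ i ∈ Finset.range m,
        |f (j + (i : ℤ) • Pi.single q 1) - f ((j + (i : ℤ) • Pi.single q 1) + Pi.single q 1)|
      = ∑ x ∈ (Finset.range m).image (fun i : ℕ => j + (i : ℤ) • Pi.single q 1),
          |f x - f (x + Pi.single q 1)| := by
        rw [Finset.sum_image (fun a _ b _ hab => hinj hab)]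
    _ ≤ ∑' x, |f x - f (x + Pi.single q 1)| :=
        Summable.sum_le_tsum _ (fun _ _ => abs_nonneg _) hsum

private lemma one_dir {d : ℕ} (f : (Fin d → ℤ) → ℝ) (q : Fin d)
    (hsum : Summable fun j => |f j - f (j + Pi.single q 1)|)
    (j k : Fin d → ℤ) (hjk : ∀ p, p ≠ q → k p = j p) :
    |f j - f k| ≤ ∑' x, |f x - f (x + Pi.single q 1)| := by
  have key : ∀ a b : Fin d → ℤ, (∀ p, p ≠ q → b p = a p) → a q ≤ b q →
      |f a - f b| ≤ ∑' x, |f x - f (x + Pi.single q 1)| := by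
    intro a b hab h
    have hb : b = a + ((b q - a q).toNat : ℤ) • Pi.single q 1 := by
      funext p
      by_cases hp : p = q
      · subst hp
        simp only [Pi.add_apply, Pi.smul_apply, Pi.single_eq_same, smul_eq_mul, mul_one]
        rw [Int.toNat_of_nonneg (sub_nonneg.mpr h)]
        ring
      · simp only [Pi.add_apply, Pi.smul_apply, Pi.single_eq_of_ne hp, smul_zero, add_zero]
        exact hab p hp
    rw [hb]
    exact one_dir_nat f q hsum a _
  rcases le_total (j q) (k q) with h | h
  · exact key j k hjk h
  · rw [abs_sub_comm]
    exact key k j (fun p hp => (hjk p hp).symm) h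

private lemma chain {d : ℕ} (f : (Fin d → ℤ) → ℝ)
    (hsum : ∀ q : Fin d, Summable fun j => |f j - f (j + Pi.single q 1)|)
    (j k : Fin d → ℤ) :
    |f j - f k| ≤ ∑ q : Fin d, ∑' x, |f x - f (x + Pi.single q 1)| := by
  set g : ℕ → (Fin d → ℤ) := fun t i => if (i : ℕ) < t then k i else j i with hg
  have hg0 : g 0 = j := by funext i; simp [hg]
  have hgd : g d = k := by funext i; simp [hg, i.isLt]
  have htel : f j - f k = ∑ t ∈ Finset.range d, (f (g t) - f (g (t + 1))) := by
    rw [Finset.sum_range_sub' (fun t => f (g t)), hg0, hgd]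
  calc |f j - f k| = |∑ t ∈ Finset.range d, (f (g t) - f (g (t + 1)))| := by rw [htel]
    _ ≤ ∑ t ∈ Finset.range d, |f (g t) - f (g (t + 1))| := Finset.abs_sum_le_sum_abs _ _
    _ = ∑ q : Fin d, |f (g q) - f (g (q + 1))| :=
        (Fin.sum_univ_eq_sum_range (fun t => |f (g t) - f (g (t + 1))|) d).symm
    _ ≤ ∑ q : Fin d, ∑' x, |f x - f (x + Pi.single q 1)| := by
        refine Finset.sum_le_sum fun q _ => ?_
        refine one_dir f q (hsum q) (g q) (g (q + 1)) fun p hp => ?_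
        have hpq : (p : ℕ) ≠ (q : ℕ) := fun h => hp (Fin.ext h)
        simp only [hg]
        by_cases h : (p : ℕ) < (q : ℕ)
        · rw [if_pos h, if_pos (by omega)]
        · rw [if_neg h, if_neg (by omega)]

/-- If `(c_n)` are square-summable families indexed by `ℤ^d` with
positive `ℓ²` norm, and for every coordinate direction `q` the normalized sums
`‖c_n‖⁻² Σ_j |c_{n,j}² − c_{n,j+e_q}²|` tend to `0`, then
`‖c_n‖⁻¹ sup_j |c_{n,j}|` tends to `0`. -/
theorem sup_coefficients_negligible_of_translation_condition
    {d : ℕ} (hd : 1 ≤ d) (c : ℕ → (Fin d → ℤ) → ℝ)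
    (hsq : ∀ n, Summable (fun j : Fin d → ℤ => c n j ^ 2))
    (hpos : ∀ n, 0 < ∑' j : Fin d → ℤ, c n j ^ 2)
    (hdiff : ∀ q : Fin d,
      Tendsto (fun n =>
          (∑' j : Fin d → ℤ, |c n j ^ 2 - c n (j + Pi.single q 1) ^ 2|) /
            (∑' j : Fin d → ℤ, c n j ^ 2))
        atTop (nhds 0)) :
    Tendsto (fun n =>
        (⨆ j : Fin d → ℤ, |c n j|) / Real.sqrt (∑' j : Fin d → ℤ, c n j ^ 2))
      atTop (nhds 0) := by
  haveI : Nonempty (Fin d) := ⟨⟨0, hd⟩⟩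
  haveI : Infinite (Fin d → ℤ) := Pi.infinite_of_right
  -- summability of the difference families
  have hsumdiff : ∀ n (q : Fin d),
      Summable fun j : Fin d → ℤ => |c n j ^ 2 - c n (j + Pi.single q 1) ^ 2| := by
    intro n q
    have h1 : Summable fun j : Fin d → ℤ => c n (j + Pi.single q 1) ^ 2 :=
      (hsq n).comp_injective (add_left_injective _)
    exact ((hsq n).sub h1).abs
  -- every square is bounded by the sum of the translation sums
  have key : ∀ n (j : Fin d → ℤ),
      c n j ^ 2 ≤ ∑ q : Fin d, ∑' x : Fin d → ℤ, |c n x ^ 2 - c n (x + Pi.single q 1) ^ 2| := by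
    intro n j
    refine le_of_forall_pos_le_add fun ε hε => ?_
    have htend := (hsq n).tendsto_cofinite_zero
    obtain ⟨k, hk⟩ : ∃ k : Fin d → ℤ, c n k ^ 2 < ε :=
      (htend.eventually_lt_const hε).exists
    have h := chain (fun j => c n j ^ 2) (hsumdiff n) j k
    have h2 : c n j ^ 2 - c n k ^ 2 ≤
        ∑ q : Fin d, ∑' x : Fin d → ℤ, |c n x ^ 2 - c n (x + Pi.single q 1) ^ 2| :=
      (le_abs_self _).trans h
    linarith
  have hsup : ∀ n, (⨆ j : Fin d → ℤ, |c n j|) ≤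
      Real.sqrt (∑ q : Fin d, ∑' x : Fin d → ℤ, |c n x ^ 2 - c n (x + Pi.single q 1) ^ 2|) := by
    intro n
    refine ciSup_le fun j => ?_
    rw [← Real.sqrt_sq_eq_abs]
    exact Real.sqrt_le_sqrt (key n j)
  have hsupnn : ∀ n, 0 ≤ ⨆ j : Fin d → ℤ, |c n j| :=
    fun n => Real.iSup_nonneg fun j => abs_nonneg _
  -- upper bound
  have hub : ∀ n, (⨆ j : Fin d → ℤ, |c n j|) / Real.sqrt (∑' j : Fin d → ℤ, c n j ^ 2) ≤
      Real.sqrt (∑ q : Fin d,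
        (∑' x : Fin d → ℤ, |c n x ^ 2 - c n (x + Pi.single q 1) ^ 2|) /
          (∑' j : Fin d → ℤ, c n j ^ 2)) := by
    intro n
    have hS : 0 ≤ ∑ q : Fin d, ∑' x : Fin d → ℤ, |c n x ^ 2 - c n (x + Pi.single q 1) ^ 2| :=
      Finset.sum_nonneg fun q _ => tsum_nonneg fun x => abs_nonneg _
    rw [← Finset.sum_div, Real.sqrt_div hS]
    exact (div_le_div_iff_of_pos_right (Real.sqrt_pos.mpr (hpos n))).mpr (hsup n)
  -- squeeze
  have hu : Tendsto (fun n => Real.sqrt (∑ q : Fin d,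
      (∑' x : Fin d → ℤ, |c n x ^ 2 - c n (x + Pi.single q 1) ^ 2|) /
        (∑' j : Fin d → ℤ, c n j ^ 2))) atTop (nhds 0) := by
    have h1 : Tendsto (fun n => ∑ q : Fin d,
        (∑' x : Fin d → ℤ, |c n x ^ 2 - c n (x + Pi.single q 1) ^ 2|) /
          (∑' j : Fin d → ℤ, c n j ^ 2)) atTop (nhds 0) := by
      have := tendsto_finset_sum (Finset.univ : Finset (Fin d)) (fun q _ => hdiff q)
      simpa using this
    have h2 := (Real.continuous_sqrt.tendsto 0).comp h1
    simpa [Function.comp_def] using h2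
  refine tendsto_of_tendsto_of_tendsto_of_le_of_le tendsto_const_nhds hu (fun n => ?_) hub
  exact div_nonneg (hsupnn n) (Real.sqrt_nonneg _)
end

section
/- Let d ≥ 1 and for each n ∈ ℕ let c_n = (c_{n,j})_{j∈ℤ^d} be square-summable real numbers with ‖c_n‖² := Σ_{j∈ℤ^d} c_{n,j}² > 0. If for every q ∈ {1,…,d}, lim_{n→∞} ‖c_n‖^{-2} Σ_{j∈ℤ^d} (c_{n,j} − c_{n,j+e_q})² = 0, then lim_{n→∞} ‖c_n‖^{-2} Σ_{j∈ℤ^d} |c_{n,j}² − c_{n,j+e_q}²| = 0 for every q, and consequently lim_{n→∞} ‖c_n‖^{-1} sup_{j∈ℤ^d} |c_{n,j}| = 0. -/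
open Filter

/-- If `(c_n)` are square-summable families indexed by `ℤ^d` with
positive `ℓ²` norm and for every coordinate direction `q` one has
`‖c_n‖⁻² Σ_j (c_{n,j} − c_{n,j+e_q})² → 0`, then also
`‖c_n‖⁻² Σ_j |c_{n,j}² − c_{n,j+e_q}²| → 0` for every `q`, and consequently
`‖c_n‖⁻¹ sup_j |c_{n,j}| → 0`. -/
theorem translation_square_condition_implies_sup_negligible
    {d : ℕ} (hd : 1 ≤ d) (c : ℕ → (Fin d → ℤ) → ℝ)
    (hsq : ∀ n, Summable (fun j : Fin d → ℤ => c n j ^ 2))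
    (hpos : ∀ n, 0 < ∑' j : Fin d → ℤ, c n j ^ 2)
    (hdiff : ∀ q : Fin d,
      Tendsto (fun n =>
          (∑' j : Fin d → ℤ, (c n j - c n (j + Pi.single q 1)) ^ 2) /
            (∑' j : Fin d → ℤ, c n j ^ 2))
        atTop (nhds 0)) :
    (∀ q : Fin d,
      Tendsto (fun n =>
          (∑' j : Fin d → ℤ, |c n j ^ 2 - c n (j + Pi.single q 1) ^ 2|) /
            (∑' j : Fin d → ℤ, c n j ^ 2))
        atTop (nhds 0)) ∧
    Tendsto (fun n =>
        (⨆ j : Fin d → ℤ, |c n j|) / Real.sqrt (∑' j : Fin d → ℤ, c n j ^ 2))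
      atTop (nhds 0) := by
  -- notation
  set S : ℕ → ℝ := fun n => ∑' j : Fin d → ℤ, c n j ^ 2 with hSdef
  have hSpos : ∀ n, 0 < S n := hpos
  -- shifted families are summable with the same sum
  have hshift : ∀ n (e : Fin d → ℤ), Summable (fun j : Fin d → ℤ => c n (j + e) ^ 2) :=
    fun n e => (hsq n).comp_injective (add_left_injective e)
  have hTshift : ∀ n (e : Fin d → ℤ), (∑' j : Fin d → ℤ, c n (j + e) ^ 2) = S n :=
    fun n e => (Equiv.addRight e).tsum_eq (fun j => c n j ^ 2)
  -- summability of difference squares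
  have hDsum : ∀ n (e : Fin d → ℤ),
      Summable (fun j : Fin d → ℤ => (c n j - c n (j + e)) ^ 2) := by
    intro n e
    refine Summable.of_nonneg_of_le (fun j => sq_nonneg _) (fun j => ?_)
      (((hsq n).add (hshift n e)).mul_left 2)
    nlinarith [sq_nonneg (c n j + c n (j + e))]
  -- summability of sums of squares
  have hPsum : ∀ n (e : Fin d → ℤ),
      Summable (fun j : Fin d → ℤ => (c n j + c n (j + e)) ^ 2) := by
    intro n e
    refine Summable.of_nonneg_of_le (fun j => sq_nonneg _) (fun j => ?_)
      (((hsq n).add (hshift n e)).mul_left 2)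
    nlinarith [sq_nonneg (c n j - c n (j + e))]
  -- summability of |a² − b²|
  have hAsum : ∀ n (e : Fin d → ℤ),
      Summable (fun j : Fin d → ℤ => |c n j ^ 2 - c n (j + e) ^ 2|) := by
    intro n e
    refine Summable.of_nonneg_of_le (fun j => abs_nonneg _) (fun j => ?_)
      ((hsq n).add (hshift n e))
    refine abs_le.2 ⟨?_, ?_⟩ <;> nlinarith [sq_nonneg (c n j), sq_nonneg (c n (j + e))]
  -- bound on the sum of (a+b)²
  have hPle : ∀ n (e : Fin d → ℤ),
      (∑' j : Fin d → ℤ, (c n j + c n (j + e)) ^ 2) ≤ 4 * S n := by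
    intro n e
    have h1 : (∑' j : Fin d → ℤ, (c n j + c n (j + e)) ^ 2)
        ≤ ∑' j : Fin d → ℤ, (2 * c n j ^ 2 + 2 * c n (j + e) ^ 2) := by
      refine Summable.tsum_le_tsum (fun j => ?_) (hPsum n e)
        (((hsq n).mul_left 2).add ((hshift n e).mul_left 2))
      nlinarith [sq_nonneg (c n j - c n (j + e))]
    have h2 : (∑' j : Fin d → ℤ, (2 * c n j ^ 2 + 2 * c n (j + e) ^ 2))
        = 2 * S n + 2 * S n := by
      rw [Summable.tsum_add ((hsq n).mul_left 2) ((hshift n e).mul_left 2),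
        tsum_mul_left, tsum_mul_left, hTshift n e]
    linarith
  -- PART 1
  have part1 : ∀ q : Fin d,
      Tendsto (fun n =>
          (∑' j : Fin d → ℤ, |c n j ^ 2 - c n (j + Pi.single q 1) ^ 2|) / S n)
        atTop (nhds 0) := by
    intro q
    set e : Fin d → ℤ := Pi.single q 1 with he
    set D : ℕ → ℝ := fun n => ∑' j : Fin d → ℤ, (c n j - c n (j + e)) ^ 2 with hDdef
    set A : ℕ → ℝ := fun n => ∑' j : Fin d → ℤ, |c n j ^ 2 - c n (j + e) ^ 2| with hAdef
    have hDnn : ∀ n, 0 ≤ D n := fun n => tsum_nonneg fun j => sq_nonneg _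
    have hAnn : ∀ n, 0 ≤ A n := fun n => tsum_nonneg fun j => abs_nonneg _
    -- key pointwise-in-n inequality
    have key : ∀ n, A n / S n ≤ (5 / 2) * Real.sqrt (D n / S n) := by
      intro n
      rcases eq_or_lt_of_le (hDnn n) with hD0 | hDpos
      · -- D n = 0 : all differences vanish
        have hz : ∀ j : Fin d → ℤ, (c n j - c n (j + e)) ^ 2 = 0 := by
          intro j
          have hle : (c n j - c n (j + e)) ^ 2 ≤ D n :=
            Summable.le_tsum (hDsum n e) j (fun k _ => sq_nonneg _)
          exact le_antisymm (hle.trans hD0.ge) (sq_nonneg _)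
        have hA0 : A n = 0 := by
          have : ∀ j : Fin d → ℤ, |c n j ^ 2 - c n (j + e) ^ 2| = 0 := by
            intro j
            have := hz j
            have hcc : c n j = c n (j + e) := by nlinarith
            simp [hcc]
          simp [hAdef, this]
        rw [hA0, zero_div]
        positivity
      · -- D n > 0
        set ε : ℝ := Real.sqrt (D n / S n) with hε
        have hεpos : 0 < ε := Real.sqrt_pos.2 (div_pos hDpos (hSpos n))
        have hε2 : ε ^ 2 = D n / S n := Real.sq_sqrt (div_nonneg (hDnn n) (hSpos n).le)
        have hDeq : D n = ε ^ 2 * S n := by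
          rw [hε2, div_mul_cancel₀ _ (hSpos n).ne']
        -- pointwise bound
        have hpt : ∀ j : Fin d → ℤ, |c n j ^ 2 - c n (j + e) ^ 2|
            ≤ (ε / 2) * (c n j + c n (j + e)) ^ 2
              + (1 / (2 * ε)) * (c n j - c n (j + e)) ^ 2 := by
          intro j
          set a := c n j
          set b := c n (j + e)
          have hfac : |a ^ 2 - b ^ 2| = |a + b| * |a - b| := by
            rw [← abs_mul]; ring_nf
          rw [hfac]
          have h1 : (a + b) ^ 2 = |a + b| ^ 2 := (sq_abs _).symm
          have h2 : (a - b) ^ 2 = |a - b| ^ 2 := (sq_abs _).symm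
          rw [h1, h2, ← sub_nonneg]
          set x := |a + b| with hx
          set y := |a - b| with hy
          have hkey : (ε / 2) * x ^ 2 + (1 / (2 * ε)) * y ^ 2 - x * y
              = (ε * x - y) ^ 2 / (2 * ε) := by
            have h2ε : (2 * ε) ≠ 0 := by positivity
            field_simp
            ring
          rw [hkey]
          positivity
        have hA_le : A n ≤ (ε / 2) * (∑' j : Fin d → ℤ, (c n j + c n (j + e)) ^ 2)
            + (1 / (2 * ε)) * D n := by
          have hsumR : Summable (fun j : Fin d → ℤ =>
              (ε / 2) * (c n j + c n (j + e)) ^ 2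
                + (1 / (2 * ε)) * (c n j - c n (j + e)) ^ 2) :=
            ((hPsum n e).mul_left _).add ((hDsum n e).mul_left _)
          have := Summable.tsum_le_tsum hpt (hAsum n e) hsumR
          rwa [Summable.tsum_add ((hPsum n e).mul_left _) ((hDsum n e).mul_left _),
            tsum_mul_left, tsum_mul_left] at this
        have hA_le2 : A n ≤ (5 / 2) * ε * S n := by
          have hP := hPle n e
          have h4 : (ε / 2) * (∑' j : Fin d → ℤ, (c n j + c n (j + e)) ^ 2)
              ≤ (ε / 2) * (4 * S n) :=
            mul_le_mul_of_nonneg_left hP (by positivity)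
          have h5 : (1 / (2 * ε)) * D n = ε * S n / 2 := by
            rw [hDeq]
            field_simp
          nlinarith
        rw [div_le_iff₀ (hSpos n)]
        calc A n ≤ (5 / 2) * ε * S n := hA_le2
          _ = 5 / 2 * ε * S n := by ring
    -- squeeze
    have hub : Tendsto (fun n => (5 / 2) * Real.sqrt (D n / S n)) atTop (nhds 0) := by
      have h0 : Tendsto (fun n => D n / S n) atTop (nhds 0) := hdiff q
      have h1 : Tendsto (fun n => Real.sqrt (D n / S n)) atTop (nhds 0) := by
        have := (Real.continuous_sqrt.tendsto 0).comp h0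
        simpa [Function.comp_def] using this
      simpa using h1.const_mul (5 / 2 : ℝ)
    refine tendsto_of_tendsto_of_tendsto_of_le_of_le tendsto_const_nhds hub
      (fun n => div_nonneg (hAnn n) (hSpos n).le) key
  refine ⟨part1, ?_⟩
  -- PART 2
  have hd0 : (0 : ℕ) < d := hd
  set q₀ : Fin d := ⟨0, hd0⟩ with hq₀
  set e : Fin d → ℤ := Pi.single q₀ 1 with he
  set T : ℕ → ℝ := fun n => ∑' j : Fin d → ℤ, |c n j ^ 2 - c n (j + e) ^ 2| with hTdef
  have hTnn : ∀ n, 0 ≤ T n := fun n => tsum_nonneg fun j => abs_nonneg _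
  -- key: every square is dominated by T n
  have hkey : ∀ n (j : Fin d → ℤ), c n j ^ 2 ≤ T n := by
    intro n j
    set g : ℕ → (Fin d → ℤ) := fun t => j + (t : ℤ) • e with hg
    have hginj : Function.Injective g := by
      intro t s h
      have := congrFun h q₀
      simp only [hg, Pi.add_apply, Pi.smul_apply, he, Pi.single_eq_same, smul_eq_mul,
        mul_one, add_right_inj] at this
      exact_mod_cast this
    have hgsucc : ∀ t : ℕ, g (t + 1) = g t + e := by
      intro t
      simp only [hg]
      push_cast
      rw [add_smul, one_smul, add_assoc]
    set f : ℕ → ℝ := fun t => c n (g t) ^ 2 with hf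
    have hfs : Summable f := (hsq n).comp_injective hginj
    have hf0 : Tendsto f atTop (nhds 0) := hfs.tendsto_atTop_zero
    have habs : Summable (fun t => |f t - f (t + 1)|) := by
      have h1 : Summable ((fun k : Fin d → ℤ => |c n k ^ 2 - c n (k + e) ^ 2|) ∘ g) :=
        (hAsum n e).comp_injective hginj
      refine h1.congr fun t => ?_
      simp only [Function.comp, hf, ← hgsucc t]
    have hT'le : (∑' t : ℕ, |f t - f (t + 1)|) ≤ T n := by
      refine Summable.tsum_le_tsum_of_inj g hginj (fun k _ => abs_nonneg _) (fun t => ?_)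
        habs (hAsum n e)
      have hge : g t + e = g (t + 1) := (hgsucc t).symm
      rw [hge]
    have hN : ∀ N : ℕ, f 0 ≤ f N + ∑' t : ℕ, |f t - f (t + 1)| := by
      intro N
      have h2 : ∑ t ∈ Finset.range N, (f t - f (t + 1)) = f 0 - f N :=
        Finset.sum_range_sub' f N
      have h3 : ∑ t ∈ Finset.range N, (f t - f (t + 1))
          ≤ ∑ t ∈ Finset.range N, |f t - f (t + 1)| :=
        Finset.sum_le_sum fun t _ => le_abs_self _
      have h4 : ∑ t ∈ Finset.range N, |f t - f (t + 1)|
          ≤ ∑' t : ℕ, |f t - f (t + 1)| :=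
        Summable.sum_le_tsum _ (fun t _ => abs_nonneg _) habs
      linarith
    have hlim : Tendsto (fun N : ℕ => f N + ∑' t : ℕ, |f t - f (t + 1)|) atTop
        (nhds (0 + ∑' t : ℕ, |f t - f (t + 1)|)) := hf0.add tendsto_const_nhds
    have hf0le : f 0 ≤ 0 + ∑' t : ℕ, |f t - f (t + 1)| := ge_of_tendsto' hlim hN
    have hg0 : g 0 = j := by
      simp only [hg, Nat.cast_zero, zero_smul, add_zero]
    calc c n j ^ 2 = f 0 := by rw [hf]; simp [hg0]
      _ ≤ 0 + ∑' t : ℕ, |f t - f (t + 1)| := hf0le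
      _ = ∑' t : ℕ, |f t - f (t + 1)| := by ring
      _ ≤ T n := hT'le
  -- the sup bound
  have hsup_le : ∀ n, (⨆ j : Fin d → ℤ, |c n j|) ≤ Real.sqrt (T n) := by
    intro n
    exact ciSup_le fun j => Real.abs_le_sqrt (hkey n j)
  have hub : ∀ n, (⨆ j : Fin d → ℤ, |c n j|) / Real.sqrt (S n)
      ≤ Real.sqrt (T n / S n) := by
    intro n
    rw [Real.sqrt_div (hTnn n)]
    gcongr
    exact hsup_le n
  have hlb : ∀ n, 0 ≤ (⨆ j : Fin d → ℤ, |c n j|) / Real.sqrt (S n) :=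
    fun n => div_nonneg (Real.iSup_nonneg fun j => abs_nonneg _) (Real.sqrt_nonneg _)
  have hTS : Tendsto (fun n => T n / S n) atTop (nhds 0) := part1 q₀
  have hsqrt : Tendsto (fun n => Real.sqrt (T n / S n)) atTop (nhds 0) := by
    have := (Real.continuous_sqrt.tendsto 0).comp hTS
    simpa [Function.comp_def] using this
  exact tendsto_of_tendsto_of_tendsto_of_le_of_le tendsto_const_nhds hsqrt hlb hub
end

section
/- Let μ be a probability measure on ℤ^d whose support is contained in {1,2,…}^d. Let (Z_i)_{i∈ℤ^d} be i.i.d. random vectors with common law μ, define f : ℤ^d → ℤ^d by f(i) = i − Z_i, and for n ∈ ℤ^d define the ancestral line A_n = {f^{∘m}(n) : m ∈ ℕ} as the forward orbit of n under f; set q_k = P(0 ∈ A_k) for k ∈ ℤ^d. Assume Σ_{k∈ℕ^d} q_k² < ∞. Then for every n ∈ ℤ^d, the series Σ_{k∈ℤ^d} q_k q_{k+n} converges and P(A_0 ∩ A_n ≠ ∅) · Σ_{k∈ℕ^d} q_k² = Σ_{k∈ℤ^d} q_k q_{k+n}. -/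
set_option linter.unusedSectionVars false
open MeasureTheory ProbabilityTheory
open scoped ENNReal NNReal

namespace AncAux
variable {d : ℕ}

abbrev Pt (d : ℕ) := Fin d → ℤ

def PosL (s : List (Pt d)) : Prop := ∀ z ∈ s, ∀ i, 1 ≤ z i

instance {s : List (Pt d)} : Decidable (PosL s) :=
  decidable_of_iff (∀ z ∈ s, ∀ i, 1 ≤ z i) Iff.rfl

noncomputable def W (μ : Measure (Pt d)) (s : List (Pt d)) : ℝ≥0∞ :=
  (s.map fun z => μ {z}).prod

lemma W_append (μ : Measure (Pt d)) (s t : List (Pt d)) :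
    W μ (s ++ t) = W μ s * W μ t := by
  simp [W, List.map_append, List.prod_append]

lemma PosL_append {s t : List (Pt d)} (hs : PosL s) (ht : PosL t) : PosL (s ++ t) := by
  intro z hz; rcases List.mem_append.1 hz with h | h
  · exact hs z h
  · exact ht z h

lemma PosL_take {s : List (Pt d)} (hs : PosL s) (i : ℕ) : PosL (s.take i) :=
  fun z hz => hs z (List.mem_of_mem_take hz)

lemma PosL_drop {s : List (Pt d)} (hs : PosL s) (i : ℕ) : PosL (s.drop i) :=
  fun z hz => hs z (List.mem_of_mem_drop hz)

lemma listsum_apply (l : List (Pt d)) (c : Fin d) : l.sum c = (l.map fun z => z c).sum := by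
  induction l with
  | nil => rfl
  | cons a t ih => simp [List.sum_cons, Pi.add_apply, ih]

lemma intlist_sum_take {l : List ℤ} (hl : ∀ x ∈ l, 1 ≤ x) :
    ∀ i j : ℕ, i ≤ j → j ≤ l.length → (l.take i).sum + ((j : ℤ) - i) ≤ (l.take j).sum := by
  intro i j hij hj
  obtain ⟨k, rfl⟩ := Nat.exists_eq_add_of_le hij
  induction k with
  | zero => simp
  | succ k ih =>
    have hk : i + k < l.length := by omega
    have := List.sum_take_succ l (i + k) hk
    have hmem : l.get ⟨i + k, hk⟩ ∈ l := l.get_mem _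
    have h1 : 1 ≤ l.get ⟨i + k, hk⟩ := hl _ hmem
    have := ih (by omega) (by omega)
    have heq : i + (k + 1) = (i + k) + 1 := by omega
    rw [heq, List.sum_take_succ l (i + k) hk]
    push_cast
    push_cast at this
    simp only [List.get_eq_getElem] at h1
    linarith


lemma sum_take_le {s : List (Pt d)} (hs : PosL s) (c : Fin d) {i j : ℕ}
    (hij : i ≤ j) (hj : j ≤ s.length) : (s.take i).sum c ≤ (s.take j).sum c := by
  have h := intlist_sum_take (l := s.map fun z => z c)
    (fun x hx => by
      obtain ⟨z, hz, rfl⟩ := List.mem_map.1 hx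
      exact hs z hz c) i j hij (by simpa using hj)
  rw [listsum_apply, listsum_apply, List.map_take, List.map_take] at *
  have : (0:ℤ) ≤ (j : ℤ) - i := by
    have : (i:ℤ) ≤ j := by exact_mod_cast hij
    linarith
  linarith

lemma sum_take_lt {s : List (Pt d)} (hs : PosL s) (c : Fin d) {i j : ℕ}
    (hij : i < j) (hj : j ≤ s.length) : (s.take i).sum c < (s.take j).sum c := by
  have h := intlist_sum_take (l := s.map fun z => z c)
    (fun x hx => by
      obtain ⟨z, hz, rfl⟩ := List.mem_map.1 hx
      exact hs z hz c) i j (le_of_lt hij) (by simpa using hj)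
  rw [listsum_apply, listsum_apply, List.map_take, List.map_take] at *
  have : (1:ℤ) ≤ (j : ℤ) - i := by
    have : (i:ℤ) < j := by exact_mod_cast hij
    linarith
  linarith

lemma sum_nonneg_of_pos {s : List (Pt d)} (hs : PosL s) (c : Fin d) : 0 ≤ s.sum c := by
  have := sum_take_le hs c (Nat.zero_le s.length) (le_refl s.length)
  simpa [List.take_length] using this

lemma sum_take_lt_sum {s : List (Pt d)} (hs : PosL s) (c : Fin d) {i : ℕ}
    (hi : i < s.length) : (s.take i).sum c < s.sum c := by
  have := sum_take_lt hs c hi (le_refl s.length)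
  simpa [List.take_length] using this


variable {Ω : Type*} [MeasurableSpace Ω]

/-- Event that the trajectory started at `a` follows precisely the steps in `s`. -/
def Ev (Z : Pt d → Ω → Pt d) (a : Pt d) (s : List (Pt d)) : Set Ω :=
  {ω | ∀ i : Fin s.length, Z (a - (s.take i.1).sum) ω = s.get i}

lemma Ev_iterate {Z : Pt d → Ω → Pt d} {a : Pt d} {s : List (Pt d)} {ω : Ω}
    (hω : ω ∈ Ev Z a s) : ∀ m, m ≤ s.length →
      (fun i => i - Z i ω)^[m] a = a - (s.take m).sum := by
  intro m
  induction m with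
  | zero => simp
  | succ m ih =>
    intro hm
    have hm' : m < s.length := hm
    have h1 := ih (le_of_lt hm')
    rw [Function.iterate_succ_apply', h1, List.sum_take_succ s m hm']
    have h2 := hω ⟨m, hm'⟩
    simp only [List.get_eq_getElem] at h2 ⊢
    rw [h2]
    abel

lemma Ev_prefix {Z : Pt d → Ω → Pt d} {a : Pt d} {s s' : List (Pt d)} {ω : Ω}
    (h : ω ∈ Ev Z a s) (h' : ω ∈ Ev Z a s') (hl : s.length ≤ s'.length) :
    s = s'.take s.length := by
  have key : ∀ i, i ≤ s.length → s.take i = s'.take i := by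
    intro i
    induction i with
    | zero => simp
    | succ i ih =>
      intro hi
      have hi1 : i < s.length := hi
      have hi2 : i < s'.length := lt_of_lt_of_le hi1 hl
      have e1 := h ⟨i, hi1⟩
      have e2 := h' ⟨i, hi2⟩
      have hs : s[i] = s'[i] := by
        simp only [List.get_eq_getElem] at e1 e2
        rw [← e1, ← e2, ih (le_of_lt hi1)]
      rw [List.take_succ, List.take_succ, ih (le_of_lt hi1)]
      congr 1
      rw [List.getElem?_eq_getElem hi1, List.getElem?_eq_getElem hi2, hs]
  calc s = s.take s.length := by rw [List.take_length]
    _ = s'.take s.length := key _ (le_refl _)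

/-- The list of the first `m` steps of the trajectory from `a`. -/
noncomputable def steps (Z : Pt d → Ω → Pt d) (ω : Ω) (a : Pt d) (m : ℕ) : List (Pt d) :=
  List.ofFn (fun i : Fin m => Z ((fun x => x - Z x ω)^[i.1] a) ω)

@[simp] lemma steps_length (Z : Pt d → Ω → Pt d) (ω : Ω) (a : Pt d) (m : ℕ) :
    (steps Z ω a m).length = m := by simp [steps]

lemma iterate_eq_steps (Z : Pt d → Ω → Pt d) (ω : Ω) (a : Pt d) (m : ℕ) :
    ∀ j, j ≤ m → (fun i => i - Z i ω)^[j] a = a - ((steps Z ω a m).take j).sum := by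
  intro j
  induction j with
  | zero => simp
  | succ j ih =>
    intro hj
    have hj' : j < m := hj
    have hj'' : j < (steps Z ω a m).length := by simpa using hj'
    rw [Function.iterate_succ_apply', ih (le_of_lt hj'), List.sum_take_succ _ j hj'']
    have : (steps Z ω a m).get ⟨j, hj''⟩ = Z ((fun x => x - Z x ω)^[j] a) ω := by
      simp [steps]
    simp only [List.get_eq_getElem] at this
    rw [this, ih (le_of_lt hj')]
    abel

lemma mem_Ev_steps (Z : Pt d → Ω → Pt d) (ω : Ω) (a : Pt d) (m : ℕ) :
    ω ∈ Ev Z a (steps Z ω a m) := by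
  intro i
  have hi : i.1 < m := by have := i.2; simpa using this
  have h1 := iterate_eq_steps Z ω a m i.1 (le_of_lt hi)
  have : (steps Z ω a m).get i = Z ((fun x => x - Z x ω)^[i.1] a) ω := by
    rw [List.get_eq_getElem]; simp [steps]
  rw [this, h1]

lemma steps_sum (Z : Pt d → Ω → Pt d) (ω : Ω) (a : Pt d) (m : ℕ) :
    (steps Z ω a m).sum = a - (fun i => i - Z i ω)^[m] a := by
  have := iterate_eq_steps Z ω a m m (le_refl m)
  have ht : (steps Z ω a m).take m = steps Z ω a m :=
    List.take_of_length_le (by simp)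
  rw [ht] at this
  rw [this]; abel


lemma msing (k : Pt d) : MeasurableSet ({k} : Set (Pt d)) := by
  have : ({k} : Set (Pt d)) = ⋂ i, (fun f : Pt d => f i) ⁻¹' {k i} := by
    ext w
    simp only [Set.mem_singleton_iff, Set.mem_iInter, Set.mem_preimage]
    constructor
    · rintro rfl i; rfl
    · intro h; funext i; exact h i
  rw [this]
  exact MeasurableSet.iInter fun i => (measurable_pi_apply i) (measurableSet_singleton _)

lemma meas_forall_eq (P : Measure Ω) (μ : Measure (Pt d))
    (Z : Pt d → Ω → Pt d) (hZmeas : ∀ i, Measurable (Z i))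
    (hZlaw : ∀ i, Measure.map (Z i) P = μ)
    (hZindep : iIndepFun Z P)
    {ι : Type} [Fintype ι] (p z : ι → Pt d) (hp : Function.Injective p) :
    P {ω | ∀ j, Z (p j) ω = z j} = ∏ j, μ {z j} := by
  classical
  set S : Finset (Pt d) := Finset.image p Finset.univ with hS
  set sets : Pt d → Set (Pt d) :=
    fun v => ⋂ j : ι, if p j = v then ({z j} : Set (Pt d)) else Set.univ with hsets
  have hmeas : ∀ v, v ∈ S → MeasurableSet (sets v) := by
    intro v _
    refine MeasurableSet.iInter fun j => ?_
    by_cases h : p j = v <;> simp [h, msing]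
  have key := hZindep.measure_inter_preimage_eq_mul S hmeas
  have hsets_p : ∀ j, sets (p j) = ({z j} : Set (Pt d)) := by
    intro j
    ext w
    simp only [hsets, Set.mem_iInter, Set.mem_singleton_iff]
    constructor
    · intro h
      have := h j
      simpa using this
    · intro h j'
      by_cases hj : p j' = p j
      · have : j' = j := hp hj
        subst this; simpa using h
      · simp [hj]
  have hset_eq : (⋂ v ∈ S, Z v ⁻¹' sets v) = {ω | ∀ j, Z (p j) ω = z j} := by
    ext ω
    simp only [Set.mem_iInter, Set.mem_setOf_eq, Set.mem_preimage]
    constructor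
    · intro h j
      have := h (p j) (Finset.mem_image_of_mem p (Finset.mem_univ j))
      rw [hsets_p j] at this
      simpa using this
    · intro h v hv
      obtain ⟨j, _, rfl⟩ := Finset.mem_image.1 hv
      rw [hsets_p j]
      simpa using h j
  have hprod : (∏ v ∈ S, P (Z v ⁻¹' sets v)) = ∏ j, μ {z j} := by
    rw [hS, Finset.prod_image (fun a _ b _ h => hp h)]
    refine Finset.prod_congr rfl fun j _ => ?_
    rw [hsets_p j, ← hZlaw (p j), Measure.map_apply (hZmeas _) (msing _)]
  rw [hset_eq, hprod] at key
  exact key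


lemma W_eq_prod (μ : Measure (Pt d)) (s : List (Pt d)) :
    W μ s = ∏ j : Fin s.length, μ {s.get j} := by
  calc W μ s = ((List.ofFn s.get).map fun z => μ {z}).prod := by rw [List.ofFn_get]; rfl
    _ = (List.ofFn fun i => μ {s.get i}).prod := by rw [List.map_ofFn]; rfl
    _ = ∏ j, μ {s.get j} := by rw [List.prod_ofFn]

lemma pathpt_inj (hd : 0 < d) {s : List (Pt d)} (hs : PosL s) (a : Pt d) :
    Function.Injective (fun i : Fin s.length => a - (s.take i.1).sum) := by
  intro i j h
  simp only at h
  have hsum : (s.take i.1).sum = (s.take j.1).sum := by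
    have h2 := congrArg (fun x => a - x) h
    simpa using h2
  rcases lt_trichotomy i.1 j.1 with hlt | heq | hgt
  · exfalso
    have := sum_take_lt hs ⟨0, hd⟩ hlt (le_of_lt j.2)
    rw [hsum] at this; exact lt_irrefl _ this
  · exact Fin.ext heq
  · exfalso
    have := sum_take_lt hs ⟨0, hd⟩ hgt (le_of_lt i.2)
    rw [hsum] at this; exact lt_irrefl _ this

lemma Ev_meas {Z : Pt d → Ω → Pt d} (hZmeas : ∀ i, Measurable (Z i))
    (a : Pt d) (s : List (Pt d)) : MeasurableSet (Ev Z a s) := by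
  have : Ev Z a s = ⋂ i : Fin s.length,
      (Z (a - (s.take i.1).sum)) ⁻¹' {s.get i} := by
    ext ω
    simp only [Ev, Set.mem_setOf_eq, Set.mem_iInter, Set.mem_preimage, Set.mem_singleton_iff]
  rw [this]
  exact MeasurableSet.iInter fun i => (hZmeas _) (msing _)

lemma P_Ev (hd : 0 < d) (P : Measure Ω) (μ : Measure (Pt d))
    (Z : Pt d → Ω → Pt d) (hZmeas : ∀ i, Measurable (Z i))
    (hZlaw : ∀ i, Measure.map (Z i) P = μ)
    (hZindep : iIndepFun Z P)
    {s : List (Pt d)} (hs : PosL s) (a : Pt d) :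
    P (Ev Z a s) = W μ s := by
  have key := meas_forall_eq P μ Z hZmeas hZlaw hZindep
    (ι := Fin s.length) (fun i => a - (s.take i.1).sum) (fun i => s.get i)
    (pathpt_inj hd hs a)
  have hEv : Ev Z a s = {ω | ∀ j : Fin s.length, Z (a - (s.take j.1).sum) ω = s.get j} := rfl
  rw [hEv, key, W_eq_prod]

lemma P_EvEv (hd : 0 < d) (P : Measure Ω) (μ : Measure (Pt d))
    (Z : Pt d → Ω → Pt d) (hZmeas : ∀ i, Measurable (Z i))
    (hZlaw : ∀ i, Measure.map (Z i) P = μ)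
    (hZindep : iIndepFun Z P)
    {s t : List (Pt d)} (hs : PosL s) (ht : PosL t) (a b : Pt d)
    (hdisj : ∀ i < s.length, ∀ j < t.length,
      a - (s.take i).sum ≠ b - (t.take j).sum) :
    P (Ev Z a s ∩ Ev Z b t) = W μ s * W μ t := by
  set p : Fin s.length ⊕ Fin t.length → Pt d :=
    Sum.elim (fun i => a - (s.take i.1).sum) (fun j => b - (t.take j.1).sum) with hp
  set z : Fin s.length ⊕ Fin t.length → Pt d :=
    Sum.elim (fun i => s.get i) (fun j => t.get j) with hz
  have hpinj : Function.Injective p := by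
    rintro (i | i) (j | j) h
    · exact congrArg Sum.inl (pathpt_inj hd hs a h)
    · exact absurd h (hdisj i.1 i.2 j.1 j.2)
    · exact absurd h.symm (hdisj j.1 j.2 i.1 i.2)
    · exact congrArg Sum.inr (pathpt_inj hd ht b h)
  have key := meas_forall_eq P μ Z hZmeas hZlaw hZindep p z hpinj
  have hset : {ω | ∀ j, Z (p j) ω = z j} = Ev Z a s ∩ Ev Z b t := by
    ext ω
    simp only [Set.mem_setOf_eq, Set.mem_inter_iff, Ev]
    constructor
    · intro h
      exact ⟨fun i => h (Sum.inl i), fun j => h (Sum.inr j)⟩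
    · rintro ⟨h1, h2⟩ (i | j)
      · exact h1 i
      · exact h2 j
  rw [hset] at key
  rw [key, Fintype.prod_sum_type]
  have e1 : (∏ a₁ : Fin s.length, μ {z (Sum.inl a₁)}) = W μ s := by
    rw [W_eq_prod]; rfl
  have e2 : (∏ a₂ : Fin t.length, μ {z (Sum.inr a₂)}) = W μ t := by
    rw [W_eq_prod]; rfl
  rw [e1, e2]


/-- Conditions for a pair of step lists to represent the two lines up to first meeting. -/
def ICond (n : Pt d) (s t : List (Pt d)) : Prop :=
  PosL s ∧ PosL t ∧ (0 : Pt d) - s.sum = n - t.sum ∧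
    ∀ i < s.length, ∀ j < t.length, (0 : Pt d) - (s.take i).sum ≠ n - (t.take j).sum

def YCond (r r' : List (Pt d)) : Prop := PosL r ∧ PosL r' ∧ r.sum = r'.sum

def XCond (n : Pt d) (u v : List (Pt d)) : Prop :=
  PosL u ∧ PosL v ∧ (0 : Pt d) - u.sum = n - v.sum

instance {n : Pt d} {s t : List (Pt d)} : Decidable (ICond n s t) :=
  decidable_of_iff (PosL s ∧ PosL t ∧ (0 : Pt d) - s.sum = n - t.sum ∧
    ∀ i < s.length, ∀ j < t.length,
      (0 : Pt d) - (s.take i).sum ≠ n - (t.take j).sum) Iff.rfl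

instance {r r' : List (Pt d)} : Decidable (YCond r r') :=
  decidable_of_iff (PosL r ∧ PosL r' ∧ r.sum = r'.sum) Iff.rfl

instance {n : Pt d} {u v : List (Pt d)} : Decidable (XCond n u v) :=
  decidable_of_iff (PosL u ∧ PosL v ∧ (0 : Pt d) - u.sum = n - v.sum) Iff.rfl

lemma split_exists (n : Pt d) {u v : List (Pt d)} (hX : XCond n u v) :
    ∃ s r t r', u = s ++ r ∧ v = t ++ r' ∧ ICond n s t ∧ YCond r r' := by
  classical
  obtain ⟨hu, hv, hsum⟩ := hX
  have hPA : ∃ i, i ≤ u.length ∧ ∃ j, j ≤ v.length ∧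
      (0 : Pt d) - (u.take i).sum = n - (v.take j).sum :=
    ⟨u.length, le_refl _, v.length, le_refl _, by
      rw [List.take_length, List.take_length]; exact hsum⟩
  set a := Nat.find hPA with ha
  obtain ⟨haleb, hb⟩ := Nat.find_spec hPA
  set b := Nat.find hb with hbdef
  obtain ⟨hbleb, hab⟩ := Nat.find_spec hb
  refine ⟨u.take a, u.drop a, v.take b, v.drop b,
    (List.take_append_drop a u).symm, (List.take_append_drop b v).symm, ?_, ?_⟩
  · refine ⟨PosL_take hu a, PosL_take hv b, hab, ?_⟩
    intro i hi j hj heq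
    rw [List.length_take] at hi hj
    have hia : i < a := lt_of_lt_of_le hi (min_le_left _ _)
    have hjb : j < b := lt_of_lt_of_le hj (min_le_left _ _)
    have hti : (u.take a).take i = u.take i := by
      rw [List.take_take, min_eq_left (le_of_lt hia)]
    have htj : (v.take b).take j = v.take j := by
      rw [List.take_take, min_eq_left (le_of_lt hjb)]
    rw [hti, htj] at heq
    exact Nat.find_min hPA hia ⟨le_trans (le_of_lt hia) haleb,
      j, le_trans (le_of_lt hjb) hbleb, heq⟩
  · refine ⟨PosL_drop hu a, PosL_drop hv b, ?_⟩
    have h1 : (u.take a).sum + (u.drop a).sum = u.sum := by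
      rw [← List.sum_append, List.take_append_drop]
    have h2 : (v.take b).sum + (v.drop b).sum = v.sum := by
      rw [← List.sum_append, List.take_append_drop]
    have := hsum
    funext c
    have e1 := congrFun hab c
    have e2 := congrFun hsum c
    have e3 := congrFun h1 c
    have e4 := congrFun h2 c
    simp only [Pi.sub_apply, Pi.add_apply, Pi.zero_apply] at e1 e2 e3 e4 ⊢
    linarith

lemma prefix_of_append_eq {α : Type*} {s r s' q : List α} (h : s ++ r = s' ++ q)
    (hl : s.length ≤ s'.length) : s = s'.take s.length := by
  have h1 : (s ++ r).take s.length = s := List.take_left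
  have h2 : (s' ++ q).take s.length = s'.take s.length :=
    List.take_append_of_le_length hl
  conv_lhs => rw [← h1, h, h2]

lemma split_unique (hd : 0 < d) (n : Pt d) {s t r r' s' t' p p' : List (Pt d)}
    (h1 : ICond n s t) (hY1 : YCond r r') (h2 : ICond n s' t') (hY2 : YCond p p')
    (hu : s ++ r = s' ++ p) (hv : t ++ r' = t' ++ p') : s = s' ∧ t = t' := by
  set c0 : Fin d := ⟨0, hd⟩
  obtain ⟨hs1, ht1, he1, hd1⟩ := h1
  obtain ⟨hs2, ht2, he2, hd2⟩ := h2
  -- asymmetric key step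
  have key : ∀ (s t r r' s' t' p p' : List (Pt d)), PosL s → PosL t → PosL s' → PosL t' →
      ((0:Pt d) - s.sum = n - t.sum) → ((0:Pt d) - s'.sum = n - t'.sum) →
      (∀ i < s'.length, ∀ j < t'.length,
        (0 : Pt d) - (s'.take i).sum ≠ n - (t'.take j).sum) →
      s ++ r = s' ++ p → t ++ r' = t' ++ p' → s.length ≤ s'.length → s.length = s'.length := by
    intro s t r r' s' t' p p' hs1 ht1 hs2 ht2 he1 he2 hd2 hu hv hl
    by_contra hne
    have hlt : s.length < s'.length := lt_of_le_of_ne hl hne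
    have hpre : s = s'.take s.length := prefix_of_append_eq hu hl
    have hsum_s : s.sum = (s'.take s.length).sum := by rw [← hpre]
    rcases le_or_gt t'.length t.length with hbb | hbb
    · -- t' is a prefix of t : contradiction via coordinate c0
      have hpret : t' = t.take t'.length := prefix_of_append_eq hv.symm hbb
      have hstrict : (s'.take s.length).sum c0 < s'.sum c0 :=
        sum_take_lt_sum hs2 c0 hlt
      have htle : (t.take t'.length).sum c0 ≤ t.sum c0 := by
        have := sum_take_le ht1 c0 hbb (le_refl t.length)
        simpa [List.take_length] using this
      have e1 := congrFun he1 c0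
      have e2 := congrFun he2 c0
      simp only [Pi.sub_apply, Pi.zero_apply] at e1 e2
      have hts : t'.sum c0 = (t.take t'.length).sum c0 :=
        congrArg (fun l : List (Pt d) => l.sum c0) hpret
      have hss : s.sum c0 = (s'.take s.length).sum c0 :=
        congrArg (fun l : List (Pt d) => l.sum c0) hpre
      linarith
    · -- t is a proper prefix of t' : contradicts disjointness of (s', t')
      have hpret : t = t'.take t.length := prefix_of_append_eq hv (le_of_lt hbb)
      refine hd2 s.length hlt t.length hbb ?_
      rw [← hpre, ← hpret, he1]
  have hslen : s.length = s'.length := by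
    rcases le_total s.length s'.length with hl | hl
    · exact key s t r r' s' t' p p' hs1 ht1 hs2 ht2 he1 he2 hd2 hu hv hl
    · exact (key s' t' p p' s t r r' hs2 ht2 hs1 ht1 he2 he1 hd1 hu.symm hv.symm hl).symm
  have hseq : s = s' := by
    have := prefix_of_append_eq hu (le_of_eq hslen)
    rw [this, hslen, List.take_length]
  subst hseq
  have hmeq : n - t.sum = n - t'.sum := by rw [← he1, ← he2]
  have htsum : t.sum = t'.sum := by
    funext c
    have := congrFun hmeq c
    simp only [Pi.sub_apply] at this
    linarith
  have hteq : t.length = t'.length := by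
    by_contra hne
    rcases lt_or_gt_of_ne hne with hlt | hlt
    · have hpret : t = t'.take t.length := prefix_of_append_eq hv (le_of_lt hlt)
      have : (t'.take t.length).sum c0 < t'.sum c0 := sum_take_lt_sum ht2 c0 hlt
      rw [← hpret, htsum] at this
      exact lt_irrefl _ this
    · have hpret : t' = t.take t'.length := prefix_of_append_eq hv.symm (le_of_lt hlt)
      have : (t.take t'.length).sum c0 < t.sum c0 := sum_take_lt_sum ht1 c0 hlt
      rw [← hpret, htsum] at this
      exact lt_irrefl _ this
  refine ⟨rfl, ?_⟩
  have := prefix_of_append_eq hv (le_of_eq hteq)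
  rw [this, hteq, List.take_length]

lemma P_eq_tsum {ι : Type*} [Countable ι] (P : Measure Ω) (E O : Set Ω)
    (hO : P Oᶜ = 0) (F : ι → Set Ω) (hFm : ∀ i, MeasurableSet (F i))
    (hdisj : Pairwise (Function.onFun Disjoint F)) (hsub : ∀ i, F i ⊆ E)
    (hcov : E ∩ O ⊆ ⋃ i, F i) : P E = ∑' i, P (F i) := by
  have h1 : P E ≤ P (⋃ i, F i) := by
    calc P E = P ((E ∩ O) ∪ (E ∩ Oᶜ)) := by rw [Set.inter_union_compl]
      _ ≤ P (E ∩ O) + P (E ∩ Oᶜ) := measure_union_le _ _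
      _ ≤ P (⋃ i, F i) + 0 := add_le_add (measure_mono hcov)
          (le_trans (measure_mono Set.inter_subset_right) (le_of_eq hO))
      _ = P (⋃ i, F i) := add_zero _
  have h2 : P (⋃ i, F i) ≤ P E := measure_mono (Set.iUnion_subset hsub)
  rw [le_antisymm h1 h2, measure_iUnion hdisj hFm]


lemma tsum_subtype_ite {α : Type*} (C : α → Prop) [inst : ∀ x, Decidable (C x)] (f : α → ℝ≥0∞) :
    (∑' x : {x // C x}, f x.1) = ∑' x, if C x then f x else 0 := by
  classical
  have h := tsum_subtype {x | C x} f
  have h2 : ∑' x, Set.indicator {x | C x} f x = ∑' x, if C x then f x else 0 :=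
    tsum_congr fun x => by
      by_cases hx : C x <;> simp [Set.indicator_apply, Set.mem_setOf_eq, hx]
  exact h.trans h2

lemma tsum_mul_tsum' {α β : Type*} (f : α → ℝ≥0∞) (g : β → ℝ≥0∞) :
    (∑' a, f a) * (∑' b, g b) = ∑' p : α × β, f p.1 * g p.2 := by
  calc (∑' a, f a) * (∑' b, g b) = ∑' a, f a * (∑' b, g b) := (ENNReal.tsum_mul_right).symm
    _ = ∑' a, ∑' b, f a * g b := by
        congr 1; funext a; exact (ENNReal.tsum_mul_left).symm
    _ = ∑' p : α × β, f p.1 * g p.2 := (ENNReal.tsum_prod).symm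

lemma QW_collapse (μ : Measure (Pt d)) (n' : Pt d) :
    (∑' k : Pt d, (∑' u : List (Pt d), if PosL u ∧ u.sum = k then W μ u else 0) *
        (∑' v : List (Pt d), if PosL v ∧ v.sum = k + n' then W μ v else 0))
    = ∑' uv : List (Pt d) × List (Pt d),
        if XCond n' uv.1 uv.2 then W μ uv.1 * W μ uv.2 else 0 := by
  classical
  have step1 : ∀ k : Pt d,
      (∑' u : List (Pt d), if PosL u ∧ u.sum = k then W μ u else 0) *
        (∑' v : List (Pt d), if PosL v ∧ v.sum = k + n' then W μ v else 0)
      = ∑' uv : List (Pt d) × List (Pt d),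
          (if PosL uv.1 ∧ uv.1.sum = k then W μ uv.1 else 0) *
          (if PosL uv.2 ∧ uv.2.sum = k + n' then W μ uv.2 else 0) :=
    fun k => tsum_mul_tsum' _ _
  calc (∑' k : Pt d, _) = ∑' (k : Pt d) (uv : List (Pt d) × List (Pt d)),
          (if PosL uv.1 ∧ uv.1.sum = k then W μ uv.1 else 0) *
          (if PosL uv.2 ∧ uv.2.sum = k + n' then W μ uv.2 else 0) := by
        exact tsum_congr step1
    _ = ∑' (uv : List (Pt d) × List (Pt d)) (k : Pt d),
          (if PosL uv.1 ∧ uv.1.sum = k then W μ uv.1 else 0) *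
          (if PosL uv.2 ∧ uv.2.sum = k + n' then W μ uv.2 else 0) := ENNReal.tsum_comm
    _ = ∑' uv : List (Pt d) × List (Pt d),
          if XCond n' uv.1 uv.2 then W μ uv.1 * W μ uv.2 else 0 := by
        refine tsum_congr fun uv => ?_
        obtain ⟨u, v⟩ := uv
        have hpt : ∀ k : Pt d,
            (if PosL u ∧ u.sum = k then W μ u else 0) *
            (if PosL v ∧ v.sum = k + n' then W μ v else 0)
            = if k = u.sum then (if XCond n' u v then W μ u * W μ v else 0) else 0 := by
          intro k
          by_cases hk : k = u.sum
          · subst hk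
            by_cases h1 : PosL u
            · by_cases h2 : PosL v
              · by_cases h3 : v.sum = u.sum + n'
                · have hx : XCond n' u v := ⟨h1, h2, by
                    funext c
                    have := congrFun h3 c
                    simp only [Pi.add_apply] at this
                    simp only [Pi.sub_apply, Pi.zero_apply]
                    linarith⟩
                  simp [h1, h2, h3, hx]
                · have hx : ¬ XCond n' u v := by
                    rintro ⟨-, -, hx⟩
                    refine h3 ?_
                    funext c
                    have := congrFun hx c
                    simp only [Pi.sub_apply, Pi.zero_apply] at this
                    simp only [Pi.add_apply]
                    linarith
                  simp [h3, hx]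
              · have hx : ¬ XCond n' u v := fun hx => h2 hx.2.1
                simp [h2, hx]
            · have hx : ¬ XCond n' u v := fun hx => h1 hx.1
              simp [h1, hx]
          · have hne : ¬ (PosL u ∧ u.sum = k) := fun h => hk h.2.symm
            simp [hne, hk]
        calc (∑' k : Pt d, (if PosL u ∧ u.sum = k then W μ u else 0) *
              (if PosL v ∧ v.sum = k + n' then W μ v else 0))
            = ∑' k : Pt d, if k = u.sum then (if XCond n' u v then W μ u * W μ v else 0) else 0 :=
              tsum_congr hpt
          _ = if XCond n' u v then W μ u * W μ v else 0 := tsum_ite_eq _ _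

lemma tsum_X_eq (hd : 0 < d) (μ : Measure (Pt d)) (n : Pt d) :
    (∑' uv : List (Pt d) × List (Pt d),
        if XCond n uv.1 uv.2 then W μ uv.1 * W μ uv.2 else 0)
    = (∑' st : List (Pt d) × List (Pt d),
        if ICond n st.1 st.2 then W μ st.1 * W μ st.2 else 0) *
      (∑' rr : List (Pt d) × List (Pt d),
        if YCond rr.1 rr.2 then W μ rr.1 * W μ rr.2 else 0) := by
  classical
  rw [tsum_mul_tsum']
  set g : (List (Pt d) × List (Pt d)) × (List (Pt d) × List (Pt d)) → ℝ≥0∞ :=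
    fun p => (if ICond n p.1.1 p.1.2 then W μ p.1.1 * W μ p.1.2 else 0) *
      (if YCond p.2.1 p.2.2 then W μ p.2.1 * W μ p.2.2 else 0) with hg
  set f : List (Pt d) × List (Pt d) → ℝ≥0∞ :=
    fun uv => if XCond n uv.1 uv.2 then W μ uv.1 * W μ uv.2 else 0 with hf
  have hcond : ∀ p, g p ≠ 0 → ICond n p.1.1 p.1.2 ∧ YCond p.2.1 p.2.2 := by
    intro p hp
    by_cases h1 : ICond n p.1.1 p.1.2
    · by_cases h2 : YCond p.2.1 p.2.2
      · exact ⟨h1, h2⟩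
      · exact absurd (by simp [hg, h2]) hp
    · exact absurd (by simp [hg, h1]) hp
  refine tsum_eq_tsum_of_ne_zero_bij
    (fun x => ((x.1.1.1 ++ x.1.2.1, x.1.1.2 ++ x.1.2.2) : List (Pt d) × List (Pt d))) ?_ ?_ ?_
  · rintro ⟨⟨⟨s, t⟩, ⟨r, r'⟩⟩, hx⟩ ⟨⟨⟨s', t'⟩, ⟨p, p'⟩⟩, hy⟩ h
    obtain ⟨hI1, hY1⟩ := hcond _ hx
    obtain ⟨hI2, hY2⟩ := hcond _ hy
    simp only [Prod.mk.injEq] at h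
    obtain ⟨h1, h2⟩ := h
    obtain ⟨hseq, hteq⟩ := split_unique hd n hI1 hY1 hI2 hY2 h1 h2
    subst hseq; subst hteq
    have hr : r = p := List.append_cancel_left h1
    have hr' : r' = p' := List.append_cancel_left h2
    subst hr; subst hr'
    rfl
  · rintro ⟨u, v⟩ huv
    have hX : XCond n u v := by
      by_contra h
      exact huv (by simp [hf, h])
    obtain ⟨s, r, t, r', hu, hv, hI, hY⟩ := split_exists n hX
    have hfne : W μ u * W μ v ≠ 0 := by
      intro h0
      exact huv (by simp [hf, h0])
    have hWu : W μ u = W μ s * W μ r := by rw [hu, W_append]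
    have hWv : W μ v = W μ t * W μ r' := by rw [hv, W_append]
    have hgne : g ((s, t), (r, r')) ≠ 0 := by
      simp only [hg, if_pos hI, if_pos hY]
      intro h0
      refine hfne ?_
      rw [hWu, hWv]
      rcases mul_eq_zero.1 h0 with h | h
      · rcases mul_eq_zero.1 h with h | h <;> simp [h, mul_comm, mul_assoc, mul_left_comm]
      · rcases mul_eq_zero.1 h with h | h <;> simp [h, mul_comm, mul_assoc, mul_left_comm]
    refine ⟨⟨((s, t), (r, r')), hgne⟩, ?_⟩
    simp only
    rw [← hu, ← hv]
  · rintro ⟨⟨⟨s, t⟩, ⟨r, r'⟩⟩, hx⟩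
    obtain ⟨hI, hY⟩ := hcond _ hx
    have hX : XCond n (s ++ r) (t ++ r') := by
      refine ⟨PosL_append hI.1 hY.1, PosL_append hI.2.1 hY.2.1, ?_⟩
      funext c
      have e1 := congrFun hI.2.2.1 c
      have e2 := congrFun hY.2.2 c
      simp only [Pi.sub_apply, Pi.zero_apply] at e1 ⊢
      rw [List.sum_append, List.sum_append]
      simp only [Pi.add_apply]
      linarith
    simp only [hf, hg, if_pos hX, if_pos hI, if_pos hY]
    rw [W_append, W_append]
    ring


lemma ICond_Ev_unique (hd : 0 < d) {Z : Pt d → Ω → Pt d} {n : Pt d}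
    {s t s' t' : List (Pt d)} (h1 : ICond n s t) (h2 : ICond n s' t') {ω : Ω}
    (hs : ω ∈ Ev Z 0 s) (ht : ω ∈ Ev Z n t) (hs' : ω ∈ Ev Z 0 s')
    (ht' : ω ∈ Ev Z n t') : s = s' ∧ t = t' := by
  set c0 : Fin d := ⟨0, hd⟩
  obtain ⟨hps1, hpt1, he1, hdj1⟩ := h1
  obtain ⟨hps2, hpt2, he2, hdj2⟩ := h2
  have key : ∀ (s t s' t' : List (Pt d)), PosL s → PosL t → PosL s' → PosL t' →
      ((0 : Pt d) - s.sum = n - t.sum) → ((0 : Pt d) - s'.sum = n - t'.sum) →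
      (∀ i < s'.length, ∀ j < t'.length,
        (0 : Pt d) - (s'.take i).sum ≠ n - (t'.take j).sum) →
      ω ∈ Ev Z 0 s → ω ∈ Ev Z n t → ω ∈ Ev Z 0 s' → ω ∈ Ev Z n t' →
      s.length ≤ s'.length → s.length = s'.length := by
    intro s t s' t' hps hpt hps' hpt' he1 he2 hdj2 hs ht hs' ht' hl
    by_contra hne
    have hlt : s.length < s'.length := lt_of_le_of_ne hl hne
    have hpre : s = s'.take s.length := Ev_prefix hs hs' hl
    rcases le_or_gt t'.length t.length with hbb | hbb
    · have hpret : t' = t.take t'.length := Ev_prefix ht' ht hbb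
      have hstrict : (s'.take s.length).sum c0 < s'.sum c0 := sum_take_lt_sum hps' c0 hlt
      have htle : (t.take t'.length).sum c0 ≤ t.sum c0 := by
        have := sum_take_le hpt c0 hbb (le_refl t.length)
        simpa [List.take_length] using this
      have e1 := congrFun he1 c0
      have e2 := congrFun he2 c0
      simp only [Pi.sub_apply, Pi.zero_apply] at e1 e2
      have hts := congrArg (fun l : List (Pt d) => l.sum c0) hpret
      have hss := congrArg (fun l : List (Pt d) => l.sum c0) hpre
      linarith
    · have hpret : t = t'.take t.length := Ev_prefix ht ht' (le_of_lt hbb)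
      refine absurd ?_ (hdj2 s.length hlt t.length hbb)
      rw [← hpre, ← hpret]
      exact he1
  have hslen : s.length = s'.length := by
    rcases le_total s.length s'.length with hl | hl
    · exact key s t s' t' hps1 hpt1 hps2 hpt2 he1 he2 hdj2 hs ht hs' ht' hl
    · exact (key s' t' s t hps2 hpt2 hps1 hpt1 he2 he1 hdj1 hs' ht' hs ht hl).symm
  have hseq : s = s' := by
    have := Ev_prefix hs hs' (le_of_eq hslen)
    rw [this, hslen, List.take_length]
  subst hseq
  have htsum : t.sum = t'.sum := by
    have hmeq : n - t.sum = n - t'.sum := by rw [← he1, ← he2]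
    funext c
    have := congrFun hmeq c
    simp only [Pi.sub_apply] at this
    linarith
  have hteq : t.length = t'.length := by
    by_contra hne
    rcases lt_or_gt_of_ne hne with hlt | hlt
    · have hpret : t = t'.take t.length := Ev_prefix ht ht' (le_of_lt hlt)
      have : (t'.take t.length).sum c0 < t'.sum c0 := sum_take_lt_sum hpt2 c0 hlt
      rw [← hpret, htsum] at this
      exact lt_irrefl _ this
    · have hpret : t' = t.take t'.length := Ev_prefix ht' ht (le_of_lt hlt)
      have : (t.take t'.length).sum c0 < t.sum c0 := sum_take_lt_sum hpt1 c0 hlt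
      rw [← hpret, htsum] at this
      exact lt_irrefl _ this
  refine ⟨rfl, ?_⟩
  have := Ev_prefix ht ht' (le_of_eq hteq)
  rw [this, hteq, List.take_length]

end AncAux

open AncAux

/-- For the random graph on `ℤ^d` built from i.i.d. jumps with law `μ`
supported in `{1,2,…}^d`, with ancestral lines `A_n` (forward orbits of `i ↦ i − Z_i`)
and `q_k = P(0 ∈ A_k)`: if `Σ_{k∈ℕ^d} q_k² < ∞` then for every `n ∈ ℤ^d` the series
`Σ_{k∈ℤ^d} q_k q_{k+n}` converges and
`P(A_0 ∩ A_n ≠ ∅) · Σ_{k∈ℕ^d} q_k² = Σ_{k∈ℤ^d} q_k q_{k+n}`. -/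
theorem ancestral_lines_intersection_probability
    {d : ℕ} {Ω : Type*} [MeasurableSpace Ω]
    (P : Measure Ω) [IsProbabilityMeasure P]
    (μ : Measure (Fin d → ℤ)) [IsProbabilityMeasure μ]
    (hsupp : ∀ k : Fin d → ℤ, (¬ ∀ i, 1 ≤ k i) → μ {k} = 0)
    (Z : (Fin d → ℤ) → Ω → (Fin d → ℤ))
    (hZmeas : ∀ i, Measurable (Z i))
    (hZlaw : ∀ i, Measure.map (Z i) P = μ)
    (hZindep : iIndepFun Z P)
    (A : (Fin d → ℤ) → Ω → Set (Fin d → ℤ))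
    (hA : ∀ n ω, A n ω = {j | ∃ m : ℕ, (fun i => i - Z i ω)^[m] n = j})
    (q : (Fin d → ℤ) → ℝ)
    (hq : ∀ k, q k = (P {ω | (0 : Fin d → ℤ) ∈ A k ω}).toReal)
    (hsum : Summable (fun k : Fin d → ℕ => q (fun i => (k i : ℤ)) ^ 2)) :
    ∀ n : Fin d → ℤ,
      Summable (fun k : Fin d → ℤ => q k * q (k + n)) ∧
      (P {ω | (A 0 ω ∩ A n ω).Nonempty}).toReal *
          (∑' k : Fin d → ℕ, q (fun i => (k i : ℤ)) ^ 2)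
        = ∑' k : Fin d → ℤ, q k * q (k + n) := by
  intro n
  classical
  rcases Nat.eq_zero_or_pos d with hd0 | hd
  · -- degenerate case d = 0
    subst hd0
    have hsub : Subsingleton (Fin 0 → ℤ) := ⟨fun a b => funext fun i => i.elim0⟩
    have hsubN : Subsingleton (Fin 0 → ℕ) := ⟨fun a b => funext fun i => i.elim0⟩
    have hmem : ∀ (k : Fin 0 → ℤ) (ω : Ω), (0 : Fin 0 → ℤ) ∈ A k ω := by
      intro k ω
      rw [hA]
      exact ⟨0, Subsingleton.elim _ _⟩
    have hq1 : ∀ k, q k = 1 := by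
      intro k
      rw [hq]
      have : {ω | (0 : Fin 0 → ℤ) ∈ A k ω} = Set.univ :=
        Set.eq_univ_of_forall fun ω => hmem k ω
      rw [this, measure_univ, ENNReal.toReal_one]
    have hmeet : {ω | (A 0 ω ∩ A n ω).Nonempty} = Set.univ := by
      ext ω
      simp only [Set.mem_setOf_eq, Set.mem_univ, iff_true]
      exact ⟨0, hmem 0 ω, hmem n ω⟩
    have hfinZ : Finite (Fin 0 → ℤ) := Finite.of_subsingleton
    have hfinN : Finite (Fin 0 → ℕ) := Finite.of_subsingleton
    constructor
    · exact Summable.of_finite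
    · have h1 : ∑' k : Fin 0 → ℕ, q (fun i => (k i : ℤ)) ^ 2 = 1 := by
        have : ∀ k : Fin 0 → ℕ, q (fun i => (k i : ℤ)) ^ 2 = 1 := fun k => by
          rw [hq1]; norm_num
        rw [tsum_congr this]
        have : Unique (Fin 0 → ℕ) := ⟨⟨fun i => 0⟩, fun a => Subsingleton.elim _ _⟩
        rw [tsum_eq_single default (fun b hb => absurd (Subsingleton.elim b default) hb)]
      have h2 : ∑' k : Fin 0 → ℤ, q k * q (k + n) = 1 := by
        have : ∀ k : Fin 0 → ℤ, q k * q (k + n) = 1 := fun k => by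
          rw [hq1, hq1]; norm_num
        rw [tsum_congr this]
        have : Unique (Fin 0 → ℤ) := ⟨⟨fun i => 0⟩, fun a => Subsingleton.elim _ _⟩
        rw [tsum_eq_single default (fun b hb => absurd (Subsingleton.elim b default) hb)]
      rw [h1, h2, hmeet, measure_univ, ENNReal.toReal_one, one_mul]
  · -- main case d > 0
    set QK : (Fin d → ℤ) → ℝ≥0∞ := fun k => P {ω | (0 : Fin d → ℤ) ∈ A k ω} with hQKdef
    set O : Set Ω := {ω | ∀ v : Fin d → ℤ, ∀ c : Fin d, 1 ≤ Z v ω c} with hOdef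
    have hMSC : MeasurableSingletonClass (Fin d → ℤ) := ⟨msing⟩
    have hBadMeas : MeasurableSet {z : Fin d → ℤ | ¬ ∀ c, 1 ≤ z c} :=
      (Set.to_countable _).measurableSet
    have hBad : μ {z : Fin d → ℤ | ¬ ∀ c, 1 ≤ z c} = 0 := by
      have hcov : {z : Fin d → ℤ | ¬ ∀ c, 1 ≤ z c} ⊆
          ⋃ x : {z : Fin d → ℤ // ¬ ∀ c, 1 ≤ z c}, {x.1} :=
        fun z hz => Set.mem_iUnion.2 ⟨⟨z, hz⟩, rfl⟩
      exact le_antisymm (le_trans (measure_mono hcov)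
        (le_of_eq (measure_iUnion_null fun x => hsupp x.1 x.2))) zero_le
    have hOc : P Oᶜ = 0 := by
      have hsub : Oᶜ ⊆ ⋃ v : Fin d → ℤ, Z v ⁻¹' {z : Fin d → ℤ | ¬ ∀ c, 1 ≤ z c} := by
        intro ω hω
        simp only [hOdef, Set.mem_compl_iff, Set.mem_setOf_eq, not_forall] at hω
        obtain ⟨v, c, hc⟩ := hω
        exact Set.mem_iUnion.2 ⟨v, by
          simp only [Set.mem_preimage, Set.mem_setOf_eq, not_forall]
          exact ⟨c, hc⟩⟩
      refine le_antisymm (le_trans (measure_mono hsub) (le_of_eq ?_)) zero_le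
      refine measure_iUnion_null fun v => ?_
      rw [← Measure.map_apply (hZmeas v) hBadMeas, hZlaw v]
      exact hBad
    -- representation of QK as a sum over paths
    have hQrep : ∀ k : Fin d → ℤ, QK k
        = ∑' u : List (Fin d → ℤ), if PosL u ∧ u.sum = k then W μ u else 0 := by
      intro k
      have hdec : P {ω | (0 : Fin d → ℤ) ∈ A k ω}
          = ∑' u : {u : List (Fin d → ℤ) // PosL u ∧ u.sum = k}, P (Ev Z k u.1) := by
        refine P_eq_tsum P _ O hOc
          (fun u : {u : List (Fin d → ℤ) // PosL u ∧ u.sum = k} => Ev Z k u.1)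
          (fun u => Ev_meas hZmeas k u.1) ?_ ?_ ?_
        · -- pairwise disjoint
          intro u u' hne
          refine Set.disjoint_left.2 fun ω hω hω' => hne (Subtype.ext ?_)
          have key : ∀ (a b : List (Fin d → ℤ)), PosL b → a.sum = k → b.sum = k →
              ω ∈ Ev Z k a → ω ∈ Ev Z k b → a.length ≤ b.length → a = b := by
            intro a b hb hsa hsb ha hbev hl
            have hpre := Ev_prefix ha hbev hl
            rcases eq_or_lt_of_le hl with heq | hlt
            · rw [hpre, heq, List.take_length]
            · exfalso
              have h1 : (b.take a.length).sum ⟨0, hd⟩ < b.sum ⟨0, hd⟩ :=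
                sum_take_lt_sum hb _ hlt
              have h2 : (b.take a.length).sum = a.sum :=
                (congrArg List.sum hpre).symm
              rw [h2, hsa, hsb] at h1
              exact lt_irrefl _ h1
          rcases le_total u.1.length u'.1.length with hl | hl
          · exact key u.1 u'.1 u'.2.1 u.2.2 u'.2.2 hω hω' hl
          · exact (key u'.1 u.1 u.2.1 u'.2.2 u.2.2 hω' hω hl).symm
        · -- subset
          rintro ⟨u, hu, hsu⟩ ω hω
          have hiter := Ev_iterate hω u.length (le_refl _)
          rw [List.take_length] at hiter
          show (0 : Fin d → ℤ) ∈ A k ω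
          rw [hA]
          exact ⟨u.length, by rw [hiter, hsu, sub_self]⟩
        · -- coverage
          rintro ω ⟨hω1, hω2⟩
          have hω1' : (0 : Fin d → ℤ) ∈ A k ω := hω1
          rw [hA] at hω1'
          obtain ⟨m, hm⟩ := hω1'
          have hPos : PosL (steps Z ω k m) := by
            intro z hz c
            obtain ⟨i, hiz⟩ := (List.mem_ofFn).1 hz
            rw [← hiz]
            exact hω2 _ c
          have hsum' : (steps Z ω k m).sum = k := by
            rw [steps_sum, hm, sub_zero]
          exact Set.mem_iUnion.2 ⟨⟨steps Z ω k m, hPos, hsum'⟩, mem_Ev_steps Z ω k m⟩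
      calc QK k = ∑' u : {u : List (Fin d → ℤ) // PosL u ∧ u.sum = k}, P (Ev Z k u.1) := hdec
        _ = ∑' u : {u : List (Fin d → ℤ) // PosL u ∧ u.sum = k}, W μ u.1 :=
            tsum_congr fun u => P_Ev hd P μ Z hZmeas hZlaw hZindep u.2.1 k
        _ = ∑' u : List (Fin d → ℤ), if PosL u ∧ u.sum = k then W μ u else 0 :=
            tsum_subtype_ite _ _
    -- representation of the meeting probability
    have hPrep : P {ω | (A 0 ω ∩ A n ω).Nonempty}
        = ∑' st : List (Fin d → ℤ) × List (Fin d → ℤ),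
            if ICond n st.1 st.2 then W μ st.1 * W μ st.2 else 0 := by
      have hdec : P {ω | (A 0 ω ∩ A n ω).Nonempty}
          = ∑' st : {st : List (Fin d → ℤ) × List (Fin d → ℤ) // ICond n st.1 st.2},
              P (Ev Z 0 st.1.1 ∩ Ev Z n st.1.2) := by
        refine P_eq_tsum P _ O hOc
          (fun st : {st : List (Fin d → ℤ) × List (Fin d → ℤ) // ICond n st.1 st.2} =>
            Ev Z 0 st.1.1 ∩ Ev Z n st.1.2)
          (fun st => (Ev_meas hZmeas _ _).inter (Ev_meas hZmeas _ _)) ?_ ?_ ?_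
        · intro st st' hne
          refine Set.disjoint_left.2 fun ω hω hω' => hne (Subtype.ext ?_)
          obtain ⟨hs, ht⟩ := hω
          obtain ⟨hs', ht'⟩ := hω'
          obtain ⟨e1, e2⟩ := ICond_Ev_unique hd st.2 st'.2 hs ht hs' ht'
          exact Prod.ext e1 e2
        · rintro ⟨⟨s, t⟩, hI⟩ ω ⟨h1, h2⟩
          have e1 := Ev_iterate h1 s.length (le_refl _)
          have e2 := Ev_iterate h2 t.length (le_refl _)
          rw [List.take_length] at e1 e2
          show (A 0 ω ∩ A n ω).Nonempty
          refine ⟨(0 : Fin d → ℤ) - s.sum, ?_, ?_⟩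
          · rw [hA]; exact ⟨s.length, e1⟩
          · rw [hA]; exact ⟨t.length, e2.trans hI.2.2.1.symm⟩
        · rintro ω ⟨hω1, hω2⟩
          have hω1' : (A 0 ω ∩ A n ω).Nonempty := hω1
          obtain ⟨j, hj0, hjn⟩ := hω1'
          rw [hA] at hj0 hjn
          obtain ⟨a0, ha0⟩ := hj0
          obtain ⟨b0, hb0⟩ := hjn
          have hPA : ∃ a : ℕ, ∃ b : ℕ,
              (fun i => i - Z i ω)^[a] 0 = (fun i => i - Z i ω)^[b] n :=
            ⟨a0, b0, ha0.trans hb0.symm⟩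
          have hspecA := Nat.find_spec hPA
          have hspecB := Nat.find_spec hspecA
          set a := Nat.find hPA with hadef
          set b := Nat.find hspecA with hbdef
          have hPos : ∀ (start : Fin d → ℤ) (m : ℕ), PosL (steps Z ω start m) := by
            intro start m z hz c
            obtain ⟨i, hiz⟩ := (List.mem_ofFn).1 hz
            rw [← hiz]
            exact hω2 _ c
          have hends : (0 : Fin d → ℤ) - (steps Z ω 0 a).sum
              = n - (steps Z ω n b).sum := by
            rw [steps_sum, steps_sum]
            have l1 : (0 : Fin d → ℤ) - ((0 : Fin d → ℤ) - (fun i => i - Z i ω)^[a] 0)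
                = (fun i => i - Z i ω)^[a] 0 := by abel
            have l2 : n - (n - (fun i => i - Z i ω)^[b] n)
                = (fun i => i - Z i ω)^[b] n := by abel
            rw [l1, l2]
            exact hspecB
          have hIc : ICond n (steps Z ω 0 a) (steps Z ω n b) := by
            refine ⟨hPos 0 a, hPos n b, hends, ?_⟩
            intro i hi j hj heq
            rw [steps_length] at hi hj
            have e1 := iterate_eq_steps Z ω 0 a i (le_of_lt hi)
            have e2 := iterate_eq_steps Z ω n b j (le_of_lt hj)
            refine Nat.find_min hPA hi ⟨j, ?_⟩
            rw [e1, e2]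
            exact heq
          exact Set.mem_iUnion.2 ⟨⟨(steps Z ω 0 a, steps Z ω n b), hIc⟩,
            mem_Ev_steps Z ω 0 a, mem_Ev_steps Z ω n b⟩
      calc P {ω | (A 0 ω ∩ A n ω).Nonempty}
          = ∑' st : {st : List (Fin d → ℤ) × List (Fin d → ℤ) // ICond n st.1 st.2},
              P (Ev Z 0 st.1.1 ∩ Ev Z n st.1.2) := hdec
        _ = ∑' st : {st : List (Fin d → ℤ) × List (Fin d → ℤ) // ICond n st.1 st.2},
              W μ st.1.1 * W μ st.1.2 :=
            tsum_congr fun st => P_EvEv hd P μ Z hZmeas hZlaw hZindep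
              st.2.1 st.2.2.1 0 n st.2.2.2.2
        _ = ∑' st : List (Fin d → ℤ) × List (Fin d → ℤ),
              if ICond n st.1 st.2 then W μ st.1 * W μ st.2 else 0 :=
            tsum_subtype_ite (fun st : List (Fin d → ℤ) × List (Fin d → ℤ) =>
              ICond n st.1 st.2) (fun st => W μ st.1 * W μ st.2)
    -- the collapsed sums
    have hG1 : ∑' k : Fin d → ℤ, QK k * QK (k + n)
        = ∑' uv : List (Fin d → ℤ) × List (Fin d → ℤ),
            if XCond n uv.1 uv.2 then W μ uv.1 * W μ uv.2 else 0 := by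
      rw [← QW_collapse μ n]
      exact tsum_congr fun k => by rw [hQrep k, hQrep (k + n)]
    have hQsq : ∑' k : Fin d → ℤ, QK k * QK k
        = ∑' rr : List (Fin d → ℤ) × List (Fin d → ℤ),
            if YCond rr.1 rr.2 then W μ rr.1 * W μ rr.2 else 0 := by
      have h0 : ∑' k : Fin d → ℤ, QK k * QK k
          = ∑' uv : List (Fin d → ℤ) × List (Fin d → ℤ),
              if XCond 0 uv.1 uv.2 then W μ uv.1 * W μ uv.2 else 0 := by
        rw [← QW_collapse μ 0]
        exact tsum_congr fun k => by rw [hQrep k]; simp only [add_zero]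
      rw [h0]
      refine tsum_congr fun uv => ?_
      have hiff : XCond (0 : Fin d → ℤ) uv.1 uv.2 ↔ YCond uv.1 uv.2 := by
        constructor
        · rintro ⟨h1, h2, h3⟩
          refine ⟨h1, h2, ?_⟩
          funext c
          have := congrFun h3 c
          simp only [Pi.sub_apply, Pi.zero_apply] at this
          linarith
        · rintro ⟨h1, h2, h3⟩
          exact ⟨h1, h2, by rw [h3]⟩
      exact if_congr hiff rfl rfl
    -- master identity in ℝ≥0∞
    have master : P {ω | (A 0 ω ∩ A n ω).Nonempty} * (∑' k : Fin d → ℤ, QK k * QK k)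
        = ∑' k : Fin d → ℤ, QK k * QK (k + n) := by
      rw [hG1, tsum_X_eq hd μ n, hPrep, hQsq]
    -- restrict the square sum to ℕ^d
    have hinj : Function.Injective (fun (k : Fin d → ℕ) => (fun i => (k i : ℤ))) := by
      intro a b h
      funext i
      exact Nat.cast_injective (congrFun h i)
    have hQ0 : ∀ k : Fin d → ℤ, (¬ ∃ k' : Fin d → ℕ, (fun i => (k' i : ℤ)) = k) →
        QK k * QK k = 0 := by
      intro k hk
      have hQz : QK k = 0 := by
        rw [hQrep k]
        refine ENNReal.tsum_eq_zero.2 fun u => ?_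
        by_cases h : PosL u ∧ u.sum = k
        · exfalso
          refine hk ⟨fun i => (k i).toNat, funext fun i => Int.toNat_of_nonneg ?_⟩
          rw [← h.2]
          exact sum_nonneg_of_pos h.1 i
        · simp [h]
      rw [hQz, zero_mul]
    have hrange : ∑' k : Fin d → ℤ, QK k * QK k
        = ∑' k' : Fin d → ℕ, QK (fun i => (k' i : ℤ)) * QK (fun i => (k' i : ℤ)) := by
      symm
      refine Function.Injective.tsum_eq hinj (f := fun k : Fin d → ℤ => QK k * QK k) ?_
      intro k hk
      by_contra hnot
      exact hk (hQ0 k (fun h => hnot (by obtain ⟨k', hk'⟩ := h; exact ⟨k', hk'⟩)))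
    -- pass to real numbers
    have hQtop : ∀ k, QK k ≠ ⊤ := fun k => measure_ne_top P _
    have hqQK : ∀ k, q k = (QK k).toReal := fun k => hq k
    have hofReal : ∀ k, QK k = ENNReal.ofReal (q k) := fun k => by
      rw [hqQK k, ENNReal.ofReal_toReal (hQtop k)]
    have hTn : (∑' k' : Fin d → ℕ, QK (fun i => (k' i : ℤ)) * QK (fun i => (k' i : ℤ)))
        = ENNReal.ofReal (∑' k' : Fin d → ℕ, q (fun i => (k' i : ℤ)) ^ 2) := by
      rw [ENNReal.ofReal_tsum_of_nonneg (fun k' => sq_nonneg _) hsum]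
      refine tsum_congr fun k' => ?_
      rw [hofReal, ← ENNReal.ofReal_mul (by rw [hqQK]; exact ENNReal.toReal_nonneg)]
      congr 1
      ring
    have hT : (∑' k : Fin d → ℤ, QK k * QK k) ≠ ⊤ := by
      rw [hrange, hTn]
      exact ENNReal.ofReal_ne_top
    have hPm : P {ω | (A 0 ω ∩ A n ω).Nonempty} ≠ ⊤ := measure_ne_top P _
    have hRHS : (∑' k : Fin d → ℤ, QK k * QK (k + n)) ≠ ⊤ := by
      rw [← master]
      exact ENNReal.mul_ne_top hPm hT
    constructor
    · refine (ENNReal.summable_toReal hRHS).congr fun k => ?_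
      rw [ENNReal.toReal_mul, ← hqQK, ← hqQK]
    · have hreal : ∑' k : Fin d → ℤ, q k * q (k + n)
          = (∑' k : Fin d → ℤ, QK k * QK (k + n)).toReal := by
        rw [ENNReal.tsum_toReal_eq (fun k => ENNReal.mul_ne_top (hQtop _) (hQtop _))]
        exact tsum_congr fun k => by rw [ENNReal.toReal_mul, hqQK, hqQK]
      rw [hreal, ← master, ENNReal.toReal_mul]
      congr 1
      rw [hrange, hTn, ENNReal.toReal_ofReal (tsum_nonneg fun _ => sq_nonneg _)]
end

section
/- Let μ be a probability measure on ℤ^d whose support is contained in {1,2,…}^d. Let (Z_i)_{i∈ℤ^d} and (Z'_i)_{i∈ℤ^d} be two independent i.i.d. families with common law μ, define f(i) = i − Z_i, f'(i) = i − Z'_i, and let A = {f^{∘m}(0) : m ∈ ℕ}, A' = {f'^{∘m}(0) : m ∈ ℕ} be the ancestral lines of 0 in the two families; set q_k = P(0 ∈ {f^{∘m}(k) : m ∈ ℕ}). Then: (1) E[#(A ∩ A')] = Σ_{k∈ℕ^d} q_k² (as an identity in [0,∞]); (2) for every integer k ≥ 0, P(#(A ∩ A') > k) = P(A ∩ A'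 ≠ {0})^k; and consequently (3) E[#(A ∩ A')] = (1 − P(A ∩ A' ≠ {0}))^{-1} in [0,∞]. -/
open MeasureTheory ProbabilityTheory
open scoped ENNReal

open Set
open scoped Classical
set_option maxHeartbeats 1000000
noncomputable section
namespace AncestralAux



variable {d : ℕ}

/-- weight of a site -/
def wt (v : Fin d → ℤ) : ℤ := ∑ j, v j

/-- configuration space -/
abbrev Gi (d : ℕ) := (Bool × (Fin d → ℤ)) → (Fin d → ℤ)

/-- truncated step: move only from sites in `C` -/
noncomputable def stp (b : Bool) (C : Set (Fin d → ℤ)) (g : Gi d) (n : Fin d → ℤ) : Fin d → ℤ :=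
  if n ∈ C then n - g (b, n) else n

/-- truncated orbit -/
def orb (b : Bool) (C : Set (Fin d → ℤ)) (g : Gi d) (n : Fin d → ℤ) : Set (Fin d → ℤ) :=
  {j | ∃ m : ℕ, (stp b C g)^[m] n = j}

def com (C : Set (Fin d → ℤ)) (g : Gi d) (n : Fin d → ℤ) : Set (Fin d → ℤ) :=
  orb false C g n ∩ orb true C g n

/-- good configurations : all jumps have all coordinates ≥ 1 -/
def Pos : Set (Gi d) := {g | ∀ q : Bool × (Fin d → ℤ), ∀ j, 1 ≤ g q j}

/-- σ-algebra generated by coordinates in `T` -/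
def MT (T : Set (Bool × (Fin d → ℤ))) : MeasurableSpace (Gi d) :=
  ⨆ q ∈ T, MeasurableSpace.comap (fun g : Gi d => g q) inferInstance

lemma MT_le (T : Set (Bool × (Fin d → ℤ))) : MT T ≤ MeasurableSpace.pi := by
  refine iSup₂_le fun q _ => ?_
  exact MeasurableSpace.comap_le_iff_le_map.mpr (fun s hs => (measurable_pi_apply q) hs)

lemma meas_eval {T : Set (Bool × (Fin d → ℤ))} {q} (hq : q ∈ T) :
    Measurable[MT T] (fun g : Gi d => g q) := by
  rw [measurable_iff_comap_le]
  exact le_iSup₂ (f := fun q _ => MeasurableSpace.comap (fun g : Gi d => g q) inferInstance) q hq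

lemma meas_iter {T : Set (Bool × (Fin d → ℤ))} {b : Bool} {C : Set (Fin d → ℤ)}
    (hC : ∀ n ∈ C, (b, n) ∈ T) (m : ℕ) (n : Fin d → ℤ) :
    Measurable[MT T] (fun g => (stp b C g)^[m] n) := by
  induction m with
  | zero => simpa using measurable_const
  | succ m ih =>
    simp only [Function.iterate_succ_apply']
    intro s _
    have hs : (fun g : Gi d => stp b C g ((stp b C g)^[m] n)) ⁻¹' s
        = ⋃ x ∈ s, (fun g : Gi d => stp b C g ((stp b C g)^[m] n)) ⁻¹' {x} := by
      ext g; simp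
    rw [hs]
    refine MeasurableSet.biUnion (Set.to_countable s) fun x _ => ?_
    have : (fun g : Gi d => stp b C g ((stp b C g)^[m] n)) ⁻¹' {x}
        = ⋃ j : Fin d → ℤ, ((fun g => (stp b C g)^[m] n) ⁻¹' {j}) ∩
            {g : Gi d | stp b C g j = x} := by
      ext g
      simp only [mem_preimage, mem_singleton_iff, mem_iUnion, mem_inter_iff, mem_setOf_eq]
      constructor
      · intro h; exact ⟨(stp b C g)^[m] n, rfl, h⟩
      · rintro ⟨j, hj, hx⟩; rw [hj]; exact hx
    rw [this]
    refine MeasurableSet.iUnion fun j => (ih (measurableSet_singleton j)).inter ?_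
    by_cases hj : j ∈ C
    · have : {g : Gi d | stp b C g j = x} = (fun g : Gi d => g (b, j)) ⁻¹' {j - x} := by
        ext g; simp only [mem_preimage, mem_singleton_iff, stp, if_pos hj, mem_setOf_eq]
        constructor
        · intro h; rw [← h, sub_sub_cancel]
        · intro h; rw [h, sub_sub_cancel]
      rw [this]
      exact meas_eval (hC j hj) (measurableSet_singleton _)
    · have : {g : Gi d | stp b C g j = x} = if j = x then univ else (∅ : Set (Gi d)) := by
        split_ifs with h
        · subst h; ext g; simp [stp, if_neg hj]
        · ext g; simp [stp, if_neg hj, h]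
      rw [this]
      split_ifs <;> simp

lemma meas_hit {T : Set (Bool × (Fin d → ℤ))} {b : Bool} {C : Set (Fin d → ℤ)}
    (hC : ∀ n ∈ C, (b, n) ∈ T) (n x : Fin d → ℤ) :
    MeasurableSet[MT T] {g : Gi d | x ∈ orb b C g n} := by
  have : {g : Gi d | x ∈ orb b C g n} = ⋃ m : ℕ, (fun g => (stp b C g)^[m] n) ⁻¹' {x} := by
    ext g; simp [orb, eq_comm]
  rw [this]
  exact MeasurableSet.iUnion fun m => meas_iter hC m n (measurableSet_singleton x)

lemma encard_lt_iff {α : Type*} {s : Set α} {k : ℕ} :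
    (k : ℕ∞) < s.encard ↔ ∃ F : Finset α, ↑F ⊆ s ∧ F.card = k + 1 := by
  constructor
  · intro h
    obtain ⟨t, hts, ht⟩ := Set.exists_subset_encard_eq (Order.add_one_le_of_lt h)
    have htfin : t.Finite := Set.finite_of_encard_eq_coe (by exact_mod_cast ht)
    refine ⟨htfin.toFinset, by simpa using hts, ?_⟩
    have h2 : (htfin.toFinset.card : ℕ∞) = ((k + 1 : ℕ) : ℕ∞) := by
      rw [← Set.encard_coe_eq_coe_finsetCard htfin.toFinset, Set.Finite.coe_toFinset]
      exact_mod_cast ht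
    exact_mod_cast h2
  · rintro ⟨F, hFs, hF⟩
    have : (F : Set α).encard ≤ s.encard := Set.encard_mono hFs
    rw [Set.encard_coe_eq_coe_finsetCard, hF] at this
    calc (k : ℕ∞) < (k + 1 : ℕ) := by exact_mod_cast Nat.lt_succ_self k
    _ ≤ s.encard := this

lemma meas_card {T : Set (Bool × (Fin d → ℤ))} {C : Set (Fin d → ℤ)}
    (hC : ∀ n ∈ C, ∀ b, (b, n) ∈ T) (n : Fin d → ℤ) (k : ℕ) :
    MeasurableSet[MT T] {g : Gi d | (k : ℕ∞) < (com C g n).encard} := by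
  have : {g : Gi d | (k : ℕ∞) < (com C g n).encard}
      = ⋃ F : {F : Finset (Fin d → ℤ) // F.card = k + 1},
          ⋂ y ∈ (F : Finset (Fin d → ℤ)),
            ({g : Gi d | y ∈ orb false C g n} ∩ {g : Gi d | y ∈ orb true C g n}) := by
    ext g
    simp only [mem_setOf_eq, mem_iUnion, mem_iInter, mem_inter_iff, encard_lt_iff]
    constructor
    · rintro ⟨F, hFs, hF⟩
      exact ⟨⟨F, hF⟩, fun y hy => ⟨(hFs hy).1, (hFs hy).2⟩⟩
    · rintro ⟨⟨F, hF⟩, h⟩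
      exact ⟨F, fun y hy => ⟨(h y hy).1, (h y hy).2⟩, hF⟩
  rw [this]
  refine MeasurableSet.iUnion fun F => MeasurableSet.biInter (Finset.countable_toSet _) ?_
  intro y _
  exact (meas_hit (fun n' hn' => hC n' hn' false) n y).inter (meas_hit (fun n' hn' => hC n' hn' true) n y)

variable {d : ℕ}

variable {g : Gi d} {b : Bool} {C : Set (Fin d → ℤ)} {n x y : Fin d → ℤ}

lemma wt_zero : wt (0 : Fin d → ℤ) = 0 := by simp [wt]

lemma wt_sub (n v : Fin d → ℤ) : wt (n - v) = wt n - wt v := by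
  simp [wt, Finset.sum_sub_distrib]

lemma wt_jump (hg : g ∈ Pos) (q : Bool × (Fin d → ℤ)) : (d : ℤ) ≤ wt (g q) := by
  have : ∑ j : Fin d, (1 : ℤ) ≤ ∑ j, g q j := Finset.sum_le_sum fun j _ => hg q j
  simpa [wt] using this

lemma stp_univ : stp b univ g n = n - g (b, n) := if_pos (mem_univ n)

lemma mem_orb_self : n ∈ orb b C g n := ⟨0, rfl⟩

lemma stp_mem_orb (hx : x ∈ orb b univ g n) : stp b univ g x ∈ orb b univ g n := by
  obtain ⟨m, rfl⟩ := hx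
  exact ⟨m + 1, (Function.iterate_succ_apply' _ _ _)⟩

lemma wt_stp (hg : g ∈ Pos) (hd : 0 < d) : wt (stp b univ g x) < wt x := by
  rw [stp_univ, wt_sub]
  have := wt_jump hg (b, x)
  omega

lemma wt_iter_strictAnti (hg : g ∈ Pos) (hd : 0 < d) :
    StrictAnti fun m => wt ((stp b univ g)^[m] n) := by
  apply strictAnti_nat_of_succ_lt
  intro m
  rw [Function.iterate_succ_apply']
  exact wt_stp hg hd

lemma orb_trans (hx : x ∈ orb b univ g n) : orb b univ g x ⊆ orb b univ g n := by
  obtain ⟨m, rfl⟩ := hx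
  rintro y ⟨m', rfl⟩
  exact ⟨m' + m, Function.iterate_add_apply _ _ _ _⟩

lemma wt_orb_lt (hg : g ∈ Pos) (hd : 0 < d) (hx : x ∈ orb b univ g n) (hxn : x ≠ n) :
    wt x < wt n := by
  obtain ⟨m, rfl⟩ := hx
  rcases Nat.eq_zero_or_pos m with rfl | hm
  · exact absurd rfl hxn
  · exact wt_iter_strictAnti hg hd hm

lemma wt_orb_le (hg : g ∈ Pos) (hd : 0 < d) (hx : x ∈ orb b univ g n) : wt x ≤ wt n := by
  rcases eq_or_ne x n with rfl | h
  · exact le_rfl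
  · exact (wt_orb_lt hg hd hx h).le

lemma orb_le_mem (hg : g ∈ Pos) (hd : 0 < d) (hx : x ∈ orb b univ g n)
    (hy : y ∈ orb b univ g n) (hw : wt y ≤ wt x) : y ∈ orb b univ g x := by
  obtain ⟨m, rfl⟩ := hx
  obtain ⟨m', rfl⟩ := hy
  have hmm : m ≤ m' := by
    by_contra h
    push_neg at h
    exact absurd hw (not_le.mpr (wt_iter_strictAnti hg hd h))
  refine ⟨m' - m, ?_⟩
  rw [← Function.iterate_add_apply]
  congr 1
  omega

lemma orb_wt_inj (hg : g ∈ Pos) (hd : 0 < d) (hx : x ∈ orb b univ g n)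
    (hy : y ∈ orb b univ g n) (hw : wt y = wt x) : y = x := by
  by_contra h
  have h1 : y ∈ orb b univ g x := orb_le_mem hg hd hx hy hw.le
  exact absurd (wt_orb_lt hg hd h1 h) (by omega)

lemma orb_coords (hg : g ∈ Pos) (hx : x ∈ orb b univ g 0) : ∀ j, x j ≤ 0 := by
  obtain ⟨m, rfl⟩ := hx
  induction m with
  | zero => simp
  | succ m ih =>
    intro j
    rw [Function.iterate_succ_apply', stp_univ]
    have := hg (b, (stp b univ g)^[m] (0 : Fin d → ℤ)) j
    have := ih j
    simp only [Pi.sub_apply]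
    omega

lemma orb_mono_univ : orb b C g n ⊆ orb b univ g n := by
  rintro x ⟨m, rfl⟩
  induction m with
  | zero => exact mem_orb_self
  | succ m ih =>
    rw [Function.iterate_succ_apply']
    set y := (stp b C g)^[m] n with hy
    by_cases hC : y ∈ C
    · have : stp b C g y = stp b univ g y := by rw [stp, if_pos hC, stp_univ]
      rw [this]
      exact stp_mem_orb ih
    · rw [stp, if_neg hC]
      exact ih

lemma orb_hi_eq (hg : g ∈ Pos) (hd : 0 < d) {t : ℤ} (hx : t ≤ wt x) :
    x ∈ orb b {n' | t < wt n'} g n ↔ x ∈ orb b univ g n := by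
  constructor
  · exact fun h => orb_mono_univ h
  · rintro ⟨m, rfl⟩
    have key : ∀ m' ≤ m, (stp b {n' | t < wt n'} g)^[m'] n = (stp b univ g)^[m'] n := by
      intro m' hm'
      induction m' with
      | zero => rfl
      | succ m' ih =>
        rw [Function.iterate_succ_apply', Function.iterate_succ_apply',
          ih (Nat.le_of_succ_le hm')]
        have hwt : t < wt ((stp b univ g)^[m'] n) := by
          have h1 : wt ((stp b univ g)^[m] n) ≤ wt ((stp b univ g)^[m'] n) :=
            (wt_iter_strictAnti hg hd).antitone (Nat.le_of_succ_le hm')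
          have h2 : m' < m := hm'
          have h3 : wt ((stp b univ g)^[m] n) < wt ((stp b univ g)^[m'] n) :=
            wt_iter_strictAnti hg hd h2
          omega
        rw [stp, if_pos (show (stp b univ g)^[m'] n ∈ {n' | t < wt n'} from hwt), stp_univ]
    exact ⟨m, key m le_rfl⟩

lemma orb_lo_eq (hg : g ∈ Pos) (hd : 0 < d) {t : ℤ} (hx : wt x ≤ t) :
    orb b {n' | wt n' ≤ t} g x = orb b univ g x := by
  apply Set.Subset.antisymm orb_mono_univ
  rintro y ⟨m, rfl⟩
  have key : ∀ m', (stp b {n' | wt n' ≤ t} g)^[m'] x = (stp b univ g)^[m'] x := by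
    intro m'
    induction m' with
    | zero => rfl
    | succ m' ih =>
      rw [Function.iterate_succ_apply', Function.iterate_succ_apply', ih]
      have hwt : wt ((stp b univ g)^[m'] x) ≤ t := by
        have : wt ((stp b univ g)^[m'] x) ≤ wt x :=
          wt_orb_le hg hd ⟨m', rfl⟩
        omega
      rw [stp, if_pos (show (stp b univ g)^[m'] x ∈ {n' | wt n' ≤ t} from hwt), stp_univ]
  exact ⟨m, key m⟩

variable {Ω : Type*} [MeasurableSpace Ω] {P : Measure Ω} [IsProbabilityMeasure P]
  {μ : Measure (Fin d → ℤ)} [IsProbabilityMeasure μ]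

lemma measS (s : Set (Fin d → ℤ)) : MeasurableSet s := s.to_countable.measurableSet

/-- the full configuration map -/
def tup (W : Bool × (Fin d → ℤ) → Ω → (Fin d → ℤ)) (ω : Ω) : Gi d := fun q => W q ω

/-- admissible families -/
structure Adm (P : Measure Ω) (μ : Measure (Fin d → ℤ))
    (W : Bool × (Fin d → ℤ) → Ω → (Fin d → ℤ)) : Prop where
  meas : ∀ q, Measurable (W q)
  law : ∀ q, Measure.map (W q) P = μ
  indep : iIndepFun W P

lemma Adm.tup_meas {W} (hW : Adm P μ W) : Measurable (tup W) :=
  measurable_pi_lambda _ fun q => hW.meas q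

/-- the W-independent value of the measure of a cylinder -/
noncomputable def cylVal (μ : Measure (Fin d → ℤ)) (t : Finset (Bool × (Fin d → ℤ)))
    (St : Set (∀ _ : t, Fin d → ℤ)) : ℝ≥0∞ :=
  ∑' y : St, ∏ q ∈ t, μ (if h : q ∈ t then ({(y : ∀ _ : t, Fin d → ℤ) ⟨q, h⟩} : Set (Fin d → ℤ)) else univ)

lemma map_tup_cylinder {W} (hW : Adm P μ W) (t : Finset (Bool × (Fin d → ℤ)))
    (St : Set (∀ _ : t, Fin d → ℤ)) :
    Measure.map (tup W) P (cylinder t St) = cylVal μ t St := by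
  rw [Measure.map_apply hW.tup_meas (St.to_countable.measurableSet.cylinder)]
  have hX : Measurable (fun ω => t.restrict (tup W ω)) :=
    measurable_pi_lambda _ fun p => hW.meas p
  have hdecomp : (tup W) ⁻¹' cylinder t St
      = ⋃ y : St, (fun ω => t.restrict (tup W ω)) ⁻¹' {(y : ∀ _ : t, Fin d → ℤ)} := by
    ext ω
    simp only [mem_preimage, mem_cylinder, mem_iUnion, mem_singleton_iff]
    constructor
    · intro h; exact ⟨⟨_, h⟩, rfl⟩
    · rintro ⟨y, hy⟩; rw [hy]; exact y.2
  rw [hdecomp, measure_iUnion ?_ (fun y => hX (measurableSet_singleton _))]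
  · unfold cylVal
    congr 1
    funext y
    have hset : (fun ω => t.restrict (tup W ω)) ⁻¹' {(y : ∀ _ : t, Fin d → ℤ)}
        = ⋂ q ∈ t, W q ⁻¹' (if h : q ∈ t then ({(y : ∀ _ : t, Fin d → ℤ) ⟨q, h⟩} : Set (Fin d → ℤ)) else univ) := by
      ext ω
      simp only [mem_preimage, mem_singleton_iff, mem_iInter]
      constructor
      · intro h q hq
        rw [dif_pos hq]
        exact mem_singleton_iff.mpr (congrFun h ⟨q, hq⟩)
      · intro h
        funext p
        have := h p p.2
        rw [dif_pos p.2] at this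
        exact this
    rw [hset, hW.indep.measure_inter_preimage_eq_mul t (fun q _ => measS _)]
    refine Finset.prod_congr rfl fun q hq => ?_
    rw [← hW.law q, Measure.map_apply (hW.meas q) (measS _)]
  · intro y y' hyy'
    simp only [Function.onFun]
    apply Disjoint.preimage
    simp [Set.disjoint_singleton, Subtype.coe_injective.ne hyy']

lemma law_eq {W V} (hW : Adm P μ W) (hV : Adm P μ V) :
    Measure.map (tup W) P = Measure.map (tup V) P := by
  haveI := Measure.isProbabilityMeasure_map (μ := P) hW.tup_meas.aemeasurable
  haveI := Measure.isProbabilityMeasure_map (μ := P) hV.tup_meas.aemeasurable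
  refine ext_of_generate_finite (measurableCylinders _)
    generateFrom_measurableCylinders.symm isPiSystem_measurableCylinders (fun s hs => ?_) ?_
  · obtain ⟨t, St, hSt, rfl⟩ := (mem_measurableCylinders s).mp hs
    rw [map_tup_cylinder hW, map_tup_cylinder hV]
  · simp [measure_univ]

lemma pre_eq {W V} (hW : Adm P μ W) (hV : Adm P μ V) {B : Set (Gi d)} (hB : MeasurableSet B) :
    P ((tup W) ⁻¹' B) = P ((tup V) ⁻¹' B) := by
  rw [← Measure.map_apply hW.tup_meas hB, ← Measure.map_apply hV.tup_meas hB, law_eq hW hV]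

/-- reindexing an admissible family by a bijection of the index set -/
lemma Adm.reindex {W} (hW : Adm P μ W) (e : Bool × (Fin d → ℤ) ≃ Bool × (Fin d → ℤ)) :
    Adm P μ (fun q => W (e q)) := by
  refine ⟨fun q => hW.meas _, fun q => hW.law _, ?_⟩
  rw [iIndepFun_iff_measure_inter_preimage_eq_mul]
  intro s sets _
  have h := hW.indep.measure_inter_preimage_eq_mul (s.image e)
    (sets := fun q => sets (e.symm q)) (fun q _ => measS _)
  have h1 : (⋂ i ∈ s.image e, W i ⁻¹' sets (e.symm i)) = ⋂ i ∈ s, (fun ω => W (e i) ω) ⁻¹' sets i := by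
    ext ω
    simp only [mem_iInter, Finset.mem_image, mem_preimage]
    constructor
    · intro h i hi
      have := h (e i) ⟨i, hi, rfl⟩
      simpa using this
    · rintro h q ⟨i, hi, rfl⟩
      simpa using h i hi
  have h2 : (∏ i ∈ s.image e, P (W i ⁻¹' sets (e.symm i)))
      = ∏ i ∈ s, P ((fun ω => W (e i) ω) ⁻¹' sets i) := by
    rw [Finset.prod_image (fun a _ b _ h => e.injective h)]
    refine Finset.prod_congr rfl fun i _ => by simp
  rw [h1, h2] at h
  exact h

/-- measurability transfer from the configuration space -/
lemma transfer {W : Bool × (Fin d → ℤ) → Ω → (Fin d → ℤ)} (hW : ∀ q, Measurable (W q))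
    {T : Set (Bool × (Fin d → ℤ))} {B : Set (Gi d)} (hB : MeasurableSet[MT T] B) :
    MeasurableSet[⨆ q ∈ T, MeasurableSpace.comap (W q) inferInstance] ((tup W) ⁻¹' B) := by
  have hc : MeasurableSpace.comap (tup W) (MT T)
      ≤ ⨆ q ∈ T, MeasurableSpace.comap (W q) inferInstance := by
    rw [MT]
    simp only [MeasurableSpace.comap_iSup]
    refine iSup₂_le fun q hq => ?_
    rw [MeasurableSpace.comap_comp]
    exact le_iSup₂ (f := fun q _ => MeasurableSpace.comap (W q) inferInstance) q hq
  exact hc _ ⟨B, hB, rfl⟩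

lemma indep_events {W} (hW : Adm P μ W) {T T' : Set (Bool × (Fin d → ℤ))}
    (hTT' : Disjoint T T') {B B' : Set (Gi d)}
    (hB : MeasurableSet[MT T] B) (hB' : MeasurableSet[MT T'] B') :
    P ((tup W) ⁻¹' B ∩ (tup W) ⁻¹' B') = P ((tup W) ⁻¹' B) * P ((tup W) ⁻¹' B') := by
  have h := indep_iSup_of_disjoint
    (m := fun q : Bool × (Fin d → ℤ) => MeasurableSpace.comap (W q) inferInstance)
    (fun q => (hW.meas q).comap_le) hW.indep hTT'
  exact (Indep_iff _ _ _).mp h _ _ (transfer hW.meas hB) (transfer hW.meas hB')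



lemma encard_tsum {α : Type*} (s : Set α) :
    (s.encard : ℝ≥0∞) = ∑' x : α, s.indicator (fun _ => (1 : ℝ≥0∞)) x := by
  rw [← tsum_subtype s (fun _ => (1 : ℝ≥0∞)), ENNReal.tsum_set_one]

lemma encard_tsum_of_range {α β : Type*} (h : β → α) (hinj : Function.Injective h)
    {s : Set α} (hs : s ⊆ Set.range h) :
    (s.encard : ℝ≥0∞) = ∑' k : β, if h k ∈ s then (1 : ℝ≥0∞) else 0 := by
  have h1 : s = h '' (h ⁻¹' s) := by
    rw [Set.image_preimage_eq_iff.mpr hs]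
  have h2 : s.encard = (h ⁻¹' s).encard := by
    conv_lhs => rw [h1]
    exact Set.InjOn.encard_image (hinj.injOn)
  rw [h2, encard_tsum]
  refine tsum_congr fun k => ?_
  by_cases hk : h k ∈ s <;> simp [Set.indicator_apply, Set.mem_preimage, hk]

lemma enat_cast_eq_tsum (c : ℕ∞) :
    (c : ℝ≥0∞) = ∑' k : ℕ, if (k : ℕ∞) < c then (1 : ℝ≥0∞) else 0 := by
  induction c using ENat.recTopCoe with
  | top =>
    have h1 : ∀ k : ℕ, (if (k : ℕ∞) < ⊤ then (1 : ℝ≥0∞) else 0) = 1 := fun k =>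
      if_pos (lt_top_iff_ne_top.mpr (by simp))
    rw [tsum_congr h1, ENNReal.tsum_const_eq_top_of_ne_zero one_ne_zero, ENat.toENNReal_top]
  | coe n =>
    have hvanish : ∀ k ∉ Finset.range n, (if (k : ℕ∞) < (n : ℕ∞) then (1 : ℝ≥0∞) else 0) = 0 := by
      intro k hk
      rw [if_neg]
      simp only [Finset.mem_range, not_lt] at hk
      exact fun h => absurd (Nat.cast_lt.mp h) (not_lt.mpr hk)
    rw [tsum_eq_sum hvanish]
    have : ∀ k ∈ Finset.range n, (if (k : ℕ∞) < (n : ℕ∞) then (1 : ℝ≥0∞) else 0) = 1 := by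
      intro k hk
      rw [if_pos (Nat.cast_lt.mpr (Finset.mem_range.mp hk))]
    rw [Finset.sum_congr rfl this]
    simp



section CORE
variable {d : ℕ}

/-- sites of weight greater than `t` -/
def Hi (d : ℕ) (t : ℤ) : Set (Fin d → ℤ) := {n | t < wt n}
def Lo (d : ℕ) (t : ℤ) : Set (Fin d → ℤ) := {n | wt n ≤ t}
def HiQ (d : ℕ) (t : ℤ) : Set (Bool × (Fin d → ℤ)) := {q | t < wt q.2}
def LoQ (d : ℕ) (t : ℤ) : Set (Bool × (Fin d → ℤ)) := {q | wt q.2 ≤ t}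

def Tke (d : ℕ) (k : ℕ) : Set (Gi d) := {g | (k : ℕ∞) < (com univ g 0).encard}

def Exx (x : Fin d → ℤ) : Set (Gi d) :=
  {g | x ∈ com (Hi d (wt x)) g 0} ∩
    ⋂ y : {y : Fin d → ℤ // y ≠ 0 ∧ wt x < wt y},
      {g | (y : Fin d → ℤ) ∈ com (Hi d (wt x)) g 0}ᶜ

def Fxx (k : ℕ) (x : Fin d → ℤ) : Set (Gi d) :=
  {g | (k : ℕ∞) < (com (Lo d (wt x)) g x).encard}

def NTe (d : ℕ) : Set (Gi d) := {g | com univ g 0 ≠ ({0} : Set (Fin d → ℤ))}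

/-! ### measurability -/

lemma meas_com_mem {T : Set (Bool × (Fin d → ℤ))} {C : Set (Fin d → ℤ)}
    (hC : ∀ n' ∈ C, ∀ b : Bool, (b, n') ∈ T) (n y : Fin d → ℤ) :
    MeasurableSet[MT T] {g : Gi d | y ∈ com C g n} :=
  (meas_hit (fun n' h => hC n' h false) n y).inter (meas_hit (fun n' h => hC n' h true) n y)

lemma meas_Exx (x : Fin d → ℤ) : MeasurableSet[MT (HiQ d (wt x))] (Exx x) := by
  have hC : ∀ n' ∈ Hi d (wt x), ∀ b : Bool, (b, n') ∈ HiQ d (wt x) := fun n' h b => h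
  exact (meas_com_mem hC 0 x).inter
    (MeasurableSet.iInter fun y => (meas_com_mem hC 0 y).compl)

lemma meas_Fxx (k : ℕ) (x : Fin d → ℤ) : MeasurableSet[MT (LoQ d (wt x))] (Fxx k x) :=
  meas_card (fun n' h b => h) x k

lemma meas_Tke (k : ℕ) : MeasurableSet (Tke d k) :=
  MT_le univ _ (meas_card (fun n' _ b => mem_univ _) 0 k)

lemma zero_mem_com (g : Gi d) : (0 : Fin d → ℤ) ∈ com univ g 0 :=
  ⟨mem_orb_self, mem_orb_self⟩

lemma NTe_eq : NTe d = ⋃ y : {y : Fin d → ℤ // y ≠ 0}, {g : Gi d | (y : Fin d → ℤ) ∈ com univ g 0} := by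
  ext g
  simp only [NTe, mem_setOf_eq, mem_iUnion]
  constructor
  · intro h
    by_contra hc
    push_neg at hc
    apply h
    apply Set.eq_singleton_iff_unique_mem.mpr
    refine ⟨zero_mem_com g, fun y hy => ?_⟩
    by_contra hy0
    exact hc ⟨y, hy0⟩ hy
  · rintro ⟨⟨y, hy0⟩, hy⟩ h
    rw [h] at hy
    exact hy0 hy

lemma meas_NTe : MeasurableSet (NTe d) := by
  rw [NTe_eq]
  exact MeasurableSet.iUnion fun y =>
    MT_le univ _ (meas_com_mem (C := univ) (fun n' _ b => mem_univ _) 0 (y : Fin d → ℤ))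

/-! ### semantics on the good event -/

variable {g : Gi d} {x y : Fin d → ℤ}

lemma com_hi_iff (hg : g ∈ Pos) (hd : 0 < d) {t : ℤ} (hy : t ≤ wt y) :
    y ∈ com (Hi d t) g 0 ↔ y ∈ com univ g 0 := by
  unfold com Hi
  rw [mem_inter_iff, mem_inter_iff, orb_hi_eq hg hd hy, orb_hi_eq hg hd hy]

lemma com_lo_eq (hg : g ∈ Pos) (hd : 0 < d) (x : Fin d → ℤ) :
    com (Lo d (wt x)) g x = com univ g x := by
  unfold com Lo
  rw [orb_lo_eq hg hd le_rfl, orb_lo_eq hg hd le_rfl]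

lemma mem_Exx_iff (hg : g ∈ Pos) (hd : 0 < d) :
    g ∈ Exx x ↔ (x ∈ com univ g 0 ∧ ∀ y, y ≠ 0 → y ∈ com univ g 0 → wt y ≤ wt x) := by
  simp only [Exx, mem_inter_iff, mem_iInter, mem_compl_iff, mem_setOf_eq]
  constructor
  · rintro ⟨h1, h2⟩
    refine ⟨(com_hi_iff hg hd le_rfl).mp h1, fun y hy0 hyc => ?_⟩
    by_contra hlt
    push_neg at hlt
    exact h2 ⟨y, hy0, hlt⟩ ((com_hi_iff hg hd hlt.le).mpr hyc)
  · rintro ⟨h1, h2⟩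
    refine ⟨(com_hi_iff hg hd le_rfl).mpr h1, ?_⟩
    rintro ⟨y, hy0, hlt⟩ hy
    exact absurd (h2 y hy0 ((com_hi_iff hg hd hlt.le).mp hy)) (not_le.mpr hlt)

lemma mem_Fxx_iff (hg : g ∈ Pos) (hd : 0 < d) {k : ℕ} :
    g ∈ Fxx k x ↔ (k : ℕ∞) < (com univ g x).encard := by
  unfold Fxx
  rw [mem_setOf_eq, com_lo_eq hg hd]

lemma wt_neg_of_mem (hg : g ∈ Pos) (hd : 0 < d) (hx : x ∈ com univ g 0) (hx0 : x ≠ 0) :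
    wt x < 0 := by
  have := wt_orb_lt hg hd hx.1 hx0
  rwa [wt_zero] at this

/-- existence of the first nontrivial common point -/
lemma exists_first (hg : g ∈ Pos) (hd : 0 < d) (hNT : com univ g 0 ≠ ({0} : Set (Fin d → ℤ))) :
    ∃ x, x ≠ 0 ∧ x ∈ com univ g 0 ∧ ∀ y, y ≠ 0 → y ∈ com univ g 0 → wt y ≤ wt x := by
  have h0 : ∃ y, y ∈ com univ g 0 ∧ y ≠ 0 := by
    by_contra hc
    push_neg at hc
    exact hNT (Set.eq_singleton_iff_unique_mem.mpr ⟨zero_mem_com g, fun y hy => hc y hy⟩)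
  obtain ⟨y0, hy0c, hy00⟩ := h0
  obtain ⟨m0, hm0⟩ := hy0c.1
  have hm0pos : m0 ≠ 0 := by
    rintro rfl
    exact hy00 hm0.symm
  have hpred : ∃ m : ℕ, (stp false univ g)^[m + 1] 0 ∈ orb true univ g 0 := by
    refine ⟨m0 - 1, ?_⟩
    have : m0 - 1 + 1 = m0 := Nat.succ_pred_eq_of_ne_zero hm0pos
    rw [this, hm0]
    exact hy0c.2
  set M := Nat.find hpred with hM
  refine ⟨(stp false univ g)^[M + 1] 0, ?_, ⟨⟨M + 1, rfl⟩, Nat.find_spec hpred⟩, ?_⟩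
  · intro h0'
    have hwt : wt ((stp false univ g)^[M + 1] (0 : Fin d → ℤ)) < wt ((stp false univ g)^[0] (0 : Fin d → ℤ)) :=
      wt_iter_strictAnti hg hd (Nat.succ_pos M)
    rw [h0'] at hwt
    simp at hwt
  · intro y hy0 hyc
    obtain ⟨m, hm⟩ := hyc.1
    have hmpos : m ≠ 0 := by
      rintro rfl
      exact hy0 hm.symm
    have : M ≤ m - 1 := by
      apply Nat.find_min' hpred
      have : m - 1 + 1 = m := Nat.succ_pred_eq_of_ne_zero hmpos
      rw [this, hm]
      exact hyc.2
    have hMm : M + 1 ≤ m := by omega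
    rw [← hm]
    exact (wt_iter_strictAnti hg hd).antitone hMm

lemma decomp (hg : g ∈ Pos) (hd : 0 < d) (hx0 : x ≠ 0) (hxc : x ∈ com univ g 0)
    (hmax : ∀ y, y ≠ 0 → y ∈ com univ g 0 → wt y ≤ wt x) :
    com univ g 0 = insert (0 : Fin d → ℤ) (com univ g x)
      ∧ (0 : Fin d → ℤ) ∉ com univ g x := by
  have hwtx : wt x < 0 := wt_neg_of_mem hg hd hxc hx0
  have h0not : (0 : Fin d → ℤ) ∉ com univ g x := by
    intro h
    have := wt_orb_le hg hd h.1
    rw [wt_zero] at this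
    omega
  refine ⟨?_, h0not⟩
  apply Set.Subset.antisymm
  · intro z hz
    rcases eq_or_ne z 0 with rfl | hz0
    · exact mem_insert _ _
    · refine mem_insert_of_mem _ ?_
      have hwz : wt z ≤ wt x := hmax z hz0 hz
      exact ⟨orb_le_mem hg hd hxc.1 hz.1 hwz, orb_le_mem hg hd hxc.2 hz.2 hwz⟩
  · intro z hz
    rcases mem_insert_iff.mp hz with rfl | hz'
    · exact zero_mem_com g
    · exact ⟨orb_trans hxc.1 hz'.1, orb_trans hxc.2 hz'.2⟩

lemma encard_split (hg : g ∈ Pos) (hd : 0 < d) (hx0 : x ≠ 0) (hxc : x ∈ com univ g 0)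
    (hmax : ∀ y, y ≠ 0 → y ∈ com univ g 0 → wt y ≤ wt x) :
    (com univ g 0).encard = (com univ g x).encard + 1 := by
  obtain ⟨h1, h2⟩ := decomp hg hd hx0 hxc hmax
  rw [h1, Set.encard_insert_of_notMem h2]

lemma tke_succ_iff (hg : g ∈ Pos) (hd : 0 < d) (k : ℕ) :
    g ∈ Tke d (k + 1) ↔ ∃ x : {x : Fin d → ℤ // x ≠ 0}, g ∈ Exx (x : Fin d → ℤ) ∩ Fxx k x := by
  constructor
  · intro h
    have hNT : com univ g 0 ≠ ({0} : Set (Fin d → ℤ)) := by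
      intro hc
      have : ((k : ℕ∞) + 1) < 1 := by
        have := h
        simp only [Tke, mem_setOf_eq, hc, Set.encard_singleton] at this
        exact_mod_cast this
      exact lt_irrefl _ (lt_of_lt_of_le this le_add_self)
    obtain ⟨x, hx0, hxc, hmax⟩ := exists_first hg hd hNT
    refine ⟨⟨x, hx0⟩, (mem_Exx_iff hg hd).mpr ⟨hxc, hmax⟩, (mem_Fxx_iff hg hd).mpr ?_⟩
    have hsplit := encard_split hg hd hx0 hxc hmax
    have h' : ((k : ℕ∞) + 1) < (com univ g x).encard + 1 := by
      have := h
      simp only [Tke, mem_setOf_eq, hsplit] at this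
      exact_mod_cast this
    exact (ENat.add_lt_add_iff_right (by simp)).mp h'
  · rintro ⟨⟨x, hx0⟩, hEx, hFx⟩
    obtain ⟨hxc, hmax⟩ := (mem_Exx_iff hg hd).mp hEx
    have hk := (mem_Fxx_iff hg hd).mp hFx
    have hsplit := encard_split hg hd hx0 hxc hmax
    simp only [Tke, mem_setOf_eq, hsplit]
    have : ((k : ℕ∞) + 1) < (com univ g x).encard + 1 :=
      (ENat.add_lt_add_iff_right (by simp)).mpr hk
    exact_mod_cast this

lemma exx_disj (hg : g ∈ Pos) (hd : 0 < d) {x x' : Fin d → ℤ} (hx0 : x ≠ 0) (hx0' : x' ≠ 0)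
    (hx : g ∈ Exx x) (hx' : g ∈ Exx x') : x = x' := by
  obtain ⟨h1, h2⟩ := (mem_Exx_iff hg hd).mp hx
  obtain ⟨h1', h2'⟩ := (mem_Exx_iff hg hd).mp hx'
  have ha : wt x ≤ wt x' := h2' x hx0 h1
  have hb : wt x' ≤ wt x := h2 x' hx0' h1'
  exact (orb_wt_inj hg hd h1'.1 h1.1 (le_antisymm ha hb))

lemma nte_iff (hg : g ∈ Pos) (hd : 0 < d) :
    g ∈ NTe d ↔ ∃ x : {x : Fin d → ℤ // x ≠ 0}, g ∈ Exx (x : Fin d → ℤ) := by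
  constructor
  · intro h
    obtain ⟨x, hx0, hxc, hmax⟩ := exists_first hg hd h
    exact ⟨⟨x, hx0⟩, (mem_Exx_iff hg hd).mpr ⟨hxc, hmax⟩⟩
  · rintro ⟨⟨x, hx0⟩, hEx⟩
    obtain ⟨hxc, _⟩ := (mem_Exx_iff hg hd).mp hEx
    intro hc
    rw [hc] at hxc
    exact hx0 hxc

/-! ### translation and swap -/

def shiftG (x : Fin d → ℤ) (g : Gi d) : Gi d := fun q => g (q.1, q.2 + x)

def swapG (g : Gi d) : Gi d := fun q => g (!q.1, q.2)

lemma shiftG_meas (x : Fin d → ℤ) : Measurable (shiftG x : Gi d → Gi d) :=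
  measurable_pi_lambda _ fun q => measurable_pi_apply _

lemma iter_translate (b : Bool) (g : Gi d) (x : Fin d → ℤ) (m : ℕ) :
    (stp b univ g)^[m] x = x + (stp b univ (shiftG x g))^[m] 0 := by
  induction m with
  | zero => simp
  | succ m ih =>
    rw [Function.iterate_succ_apply', Function.iterate_succ_apply', ih, stp_univ, stp_univ]
    have harg : (b, x + (stp b univ (shiftG x g))^[m] (0 : Fin d → ℤ))
        = (b, (stp b univ (shiftG x g))^[m] (0 : Fin d → ℤ) + x) := by
      rw [add_comm]
    rw [harg]
    show _ = x + ((stp b univ (shiftG x g))^[m] 0 - shiftG x g (b, (stp b univ (shiftG x g))^[m] 0))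
    rw [shiftG]
    abel

lemma orb_translate (b : Bool) (g : Gi d) (x y : Fin d → ℤ) :
    y ∈ orb b univ g x ↔ y - x ∈ orb b univ (shiftG x g) 0 := by
  constructor
  · rintro ⟨m, rfl⟩
    rw [iter_translate]
    exact ⟨m, by abel⟩
  · rintro ⟨m, hm⟩
    refine ⟨m, ?_⟩
    rw [iter_translate, hm]
    abel

lemma com_translate_encard (g : Gi d) (x : Fin d → ℤ) :
    (com univ g x).encard = (com univ (shiftG x g) 0).encard := by
  have him : com univ g x = (fun z => z + x) '' com univ (shiftG x g) 0 := by
    ext z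
    simp only [com, mem_inter_iff, mem_image]
    constructor
    · intro hz
      exact ⟨z - x, ⟨(orb_translate false g x z).mp hz.1, (orb_translate true g x z).mp hz.2⟩,
        by abel⟩
    · rintro ⟨w, hw, rfl⟩
      constructor
      · rw [orb_translate]
        simpa using hw.1
      · rw [orb_translate]
        simpa using hw.2
  rw [him, ((add_left_injective x).injOn).encard_image]

lemma Fx_translate (k : ℕ) (x : Fin d → ℤ) :
    {g : Gi d | (k : ℕ∞) < (com univ g x).encard} = (shiftG x) ⁻¹' (Tke d k) := by
  ext g
  simp only [mem_setOf_eq, mem_preimage, Tke, com_translate_encard g x]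

lemma orb_swap (b : Bool) (g : Gi d) (n : Fin d → ℤ) :
    orb b univ (swapG g) n = orb (!b) univ g n := by
  have : stp b univ (swapG g) = stp (!b) univ g := by
    funext n'
    rw [stp_univ, stp_univ]
    rfl
  unfold orb
  rw [this]

end CORE

section OMEGA
variable {d : ℕ} {Ω : Type*} [MeasurableSpace Ω] {P : Measure Ω} [IsProbabilityMeasure P]
  {μ : Measure (Fin d → ℤ)} {W : Bool × (Fin d → ℤ) → Ω → (Fin d → ℤ)}

lemma meas_Pos : MeasurableSet (Pos : Set (Gi d)) := by
  have : (Pos : Set (Gi d)) = ⋂ q, (fun g : Gi d => g q) ⁻¹' {v | ∀ j, 1 ≤ v j} := by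
    ext g; simp [Pos]
  rw [this]
  exact MeasurableSet.iInter fun q => (measurable_pi_apply q) (measS _)

lemma pos_null (hW : Adm P μ W) [IsProbabilityMeasure μ]
    (hsupp : ∀ k : Fin d → ℤ, (¬ ∀ i, 1 ≤ k i) → μ {k} = 0) :
    P ((tup W) ⁻¹' (Posᶜ : Set (Gi d))) = 0 := by
  have hBad : μ {v : Fin d → ℤ | ¬ ∀ j, 1 ≤ v j} = 0 := by
    have hb : {v : Fin d → ℤ | ¬ ∀ j, 1 ≤ v j} = ⋃ v ∈ {v : Fin d → ℤ | ¬ ∀ j, 1 ≤ v j}, {v} :=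
      (Set.biUnion_of_singleton _).symm
    rw [hb, measure_biUnion_null_iff (to_countable _)]
    exact fun v hv => hsupp v hv
  have hcover : (tup W) ⁻¹' (Posᶜ : Set (Gi d)) = ⋃ q, W q ⁻¹' {v | ¬ ∀ j, 1 ≤ v j} := by
    ext ω
    simp only [mem_preimage, mem_compl_iff, Pos, mem_setOf_eq, mem_iUnion, tup]
    constructor
    · intro h
      by_contra hc
      push_neg at hc
      exact h fun q j => hc q j
    · rintro ⟨q, hq⟩ h
      exact hq fun j => h q j
  rw [hcover]
  refine measure_iUnion_null fun q => ?_
  rw [← Measure.map_apply (hW.meas q) (measS _), hW.law q]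
  exact hBad

lemma hi_lo_disj (t : ℤ) : Disjoint (HiQ d t) (LoQ d t) := by
  rw [Set.disjoint_left]
  intro q hq hq'
  have h1 : t < wt q.2 := hq
  have h2 : wt q.2 ≤ t := hq'
  omega

lemma tke_pow (hd : 0 < d) (hW : Adm P μ W) [IsProbabilityMeasure μ]
    (hsupp : ∀ k : Fin d → ℤ, (¬ ∀ i, 1 ≤ k i) → μ {k} = 0) :
    ∀ k : ℕ, P ((tup W) ⁻¹' (Tke d k)) = (P ((tup W) ⁻¹' (NTe d))) ^ k := by
  have hconull : ∀ s : Set Ω, P (s ∩ (tup W) ⁻¹' (Pos : Set (Gi d))) = P s := by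
    intro s
    apply measure_inter_conull
    rw [← Set.preimage_compl]
    exact pos_null hW hsupp
  intro k
  induction k with
  | zero =>
    rw [pow_zero]
    have huniv : (tup W) ⁻¹' (Tke d 0) = univ := by
      ext ω
      simp only [mem_preimage, Tke, mem_setOf_eq, mem_univ, iff_true, Nat.cast_zero]
      exact Set.encard_pos.mpr ⟨0, zero_mem_com _⟩
    rw [huniv, measure_univ]
  | succ k ih =>
    have hmeas_i : ∀ x : {x : Fin d → ℤ // x ≠ 0},
        MeasurableSet (((tup W) ⁻¹' Exx (x : Fin d → ℤ) ∩ (tup W) ⁻¹' Fxx k (x : Fin d → ℤ))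
          ∩ (tup W) ⁻¹' (Pos : Set (Gi d))) := fun x =>
      ((hW.tup_meas (MT_le _ _ (meas_Exx _))).inter (hW.tup_meas (MT_le _ _ (meas_Fxx k _)))).inter
        (hW.tup_meas meas_Pos)
    have hdec : (tup W) ⁻¹' (Tke d (k + 1)) ∩ (tup W) ⁻¹' (Pos : Set (Gi d))
        = ⋃ x : {x : Fin d → ℤ // x ≠ 0},
            ((tup W) ⁻¹' Exx (x : Fin d → ℤ) ∩ (tup W) ⁻¹' Fxx k (x : Fin d → ℤ))
              ∩ (tup W) ⁻¹' (Pos : Set (Gi d)) := by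
      ext ω
      simp only [mem_inter_iff, mem_preimage, mem_iUnion]
      constructor
      · rintro ⟨h1, h2⟩
        obtain ⟨x, hx⟩ := (tke_succ_iff h2 hd k).mp h1
        exact ⟨x, ⟨hx.1, hx.2⟩, h2⟩
      · rintro ⟨x, ⟨h1, h2⟩, h3⟩
        exact ⟨(tke_succ_iff h3 hd k).mpr ⟨x, h1, h2⟩, h3⟩
    have hdisj : Pairwise (Function.onFun Disjoint fun x : {x : Fin d → ℤ // x ≠ 0} =>
        ((tup W) ⁻¹' Exx (x : Fin d → ℤ) ∩ (tup W) ⁻¹' Fxx k (x : Fin d → ℤ))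
          ∩ (tup W) ⁻¹' (Pos : Set (Gi d))) := by
      intro x x' hne
      rw [Function.onFun]
      refine Set.disjoint_left.mpr ?_
      rintro ω ⟨⟨hEx, _⟩, hPos⟩ ⟨⟨hEx', _⟩, hPos'⟩
      exact hne (Subtype.ext (exx_disj hPos hd x.2 x'.2 hEx hEx'))
    have e1 : P ((tup W) ⁻¹' (Tke d (k + 1)))
        = ∑' x : {x : Fin d → ℤ // x ≠ 0},
            P (((tup W) ⁻¹' Exx (x : Fin d → ℤ) ∩ (tup W) ⁻¹' Fxx k (x : Fin d → ℤ))
              ∩ (tup W) ⁻¹' (Pos : Set (Gi d))) := by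
      rw [← hconull ((tup W) ⁻¹' (Tke d (k + 1))), hdec, measure_iUnion hdisj hmeas_i]
    have e2 : ∀ x : {x : Fin d → ℤ // x ≠ 0},
        P (((tup W) ⁻¹' Exx (x : Fin d → ℤ) ∩ (tup W) ⁻¹' Fxx k (x : Fin d → ℤ))
            ∩ (tup W) ⁻¹' (Pos : Set (Gi d)))
          = P ((tup W) ⁻¹' Exx (x : Fin d → ℤ)) * P ((tup W) ⁻¹' Fxx k (x : Fin d → ℤ)) := by
      intro x
      rw [hconull]
      exact indep_events hW (hi_lo_disj (wt (x : Fin d → ℤ))) (meas_Exx _) (meas_Fxx k _)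
    have e3 : ∀ x : {x : Fin d → ℤ // x ≠ 0},
        P ((tup W) ⁻¹' Fxx k (x : Fin d → ℤ)) = P ((tup W) ⁻¹' (Tke d k)) := by
      intro x
      have h1 : (tup W) ⁻¹' Fxx k (x : Fin d → ℤ) ∩ (tup W) ⁻¹' (Pos : Set (Gi d))
          = (tup W) ⁻¹' {g : Gi d | (k : ℕ∞) < (com univ g (x : Fin d → ℤ)).encard}
            ∩ (tup W) ⁻¹' (Pos : Set (Gi d)) := by
        ext ω
        simp only [mem_inter_iff, mem_preimage, mem_setOf_eq]
        exact and_congr_left fun hPos => mem_Fxx_iff hPos hd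
      have h2 : P ((tup W) ⁻¹' Fxx k (x : Fin d → ℤ))
          = P ((tup W) ⁻¹' {g : Gi d | (k : ℕ∞) < (com univ g (x : Fin d → ℤ)).encard}) := by
        rw [← hconull ((tup W) ⁻¹' Fxx k (x : Fin d → ℤ)), h1, hconull]
      rw [h2, Fx_translate k (x : Fin d → ℤ)]
      have h3 : (tup W) ⁻¹' ((shiftG (x : Fin d → ℤ)) ⁻¹' (Tke d k))
          = (tup (fun q => W (q.1, q.2 + (x : Fin d → ℤ)))) ⁻¹' (Tke d k) := rfl
      rw [h3]
      exact pre_eq (μ := μ)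
        (hW.reindex (Equiv.prodCongr (Equiv.refl Bool) (Equiv.addRight (x : Fin d → ℤ)))) hW
        (meas_Tke k)
    have e4 : ∑' x : {x : Fin d → ℤ // x ≠ 0}, P ((tup W) ⁻¹' Exx (x : Fin d → ℤ))
        = P ((tup W) ⁻¹' (NTe d)) := by
      have hdecN : (tup W) ⁻¹' (NTe d) ∩ (tup W) ⁻¹' (Pos : Set (Gi d))
          = ⋃ x : {x : Fin d → ℤ // x ≠ 0},
              (tup W) ⁻¹' Exx (x : Fin d → ℤ) ∩ (tup W) ⁻¹' (Pos : Set (Gi d)) := by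
        ext ω
        simp only [mem_inter_iff, mem_preimage, mem_iUnion]
        constructor
        · rintro ⟨h1, h2⟩
          obtain ⟨x, hx⟩ := (nte_iff h2 hd).mp h1
          exact ⟨x, hx, h2⟩
        · rintro ⟨x, h1, h2⟩
          exact ⟨(nte_iff h2 hd).mpr ⟨x, h1⟩, h2⟩
      have hdisjN : Pairwise (Function.onFun Disjoint fun x : {x : Fin d → ℤ // x ≠ 0} =>
          (tup W) ⁻¹' Exx (x : Fin d → ℤ) ∩ (tup W) ⁻¹' (Pos : Set (Gi d))) := by
        intro x x' hne
        rw [Function.onFun]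
        refine Set.disjoint_left.mpr ?_
        rintro ω ⟨hEx, hPos⟩ ⟨hEx', hPos'⟩
        exact hne (Subtype.ext (exx_disj hPos hd x.2 x'.2 hEx hEx'))
      have hmeasN : ∀ x : {x : Fin d → ℤ // x ≠ 0},
          MeasurableSet ((tup W) ⁻¹' Exx (x : Fin d → ℤ) ∩ (tup W) ⁻¹' (Pos : Set (Gi d))) :=
        fun x => (hW.tup_meas (MT_le _ _ (meas_Exx _))).inter (hW.tup_meas meas_Pos)
      calc ∑' x : {x : Fin d → ℤ // x ≠ 0}, P ((tup W) ⁻¹' Exx (x : Fin d → ℤ))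
          = ∑' x : {x : Fin d → ℤ // x ≠ 0},
              P ((tup W) ⁻¹' Exx (x : Fin d → ℤ) ∩ (tup W) ⁻¹' (Pos : Set (Gi d))) :=
            tsum_congr fun x => (hconull _).symm
        _ = P (⋃ x : {x : Fin d → ℤ // x ≠ 0},
              (tup W) ⁻¹' Exx (x : Fin d → ℤ) ∩ (tup W) ⁻¹' (Pos : Set (Gi d))) :=
            (measure_iUnion hdisjN hmeasN).symm
        _ = P ((tup W) ⁻¹' (NTe d) ∩ (tup W) ⁻¹' (Pos : Set (Gi d))) := by rw [hdecN]
        _ = P ((tup W) ⁻¹' (NTe d)) := hconull _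
    calc P ((tup W) ⁻¹' (Tke d (k + 1)))
        = ∑' x : {x : Fin d → ℤ // x ≠ 0},
            P ((tup W) ⁻¹' Exx (x : Fin d → ℤ)) * P ((tup W) ⁻¹' Fxx k (x : Fin d → ℤ)) := by
          rw [e1]; exact tsum_congr e2
      _ = ∑' x : {x : Fin d → ℤ // x ≠ 0},
            P ((tup W) ⁻¹' Exx (x : Fin d → ℤ)) * P ((tup W) ⁻¹' (Tke d k)) :=
          tsum_congr fun x => by rw [e3]
      _ = (∑' x : {x : Fin d → ℤ // x ≠ 0}, P ((tup W) ⁻¹' Exx (x : Fin d → ℤ)))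
            * P ((tup W) ⁻¹' (Tke d k)) := ENNReal.tsum_mul_right
      _ = P ((tup W) ⁻¹' (NTe d)) * P ((tup W) ⁻¹' (NTe d)) ^ k := by rw [e4, ih]
      _ = P ((tup W) ⁻¹' (NTe d)) ^ (k + 1) := (pow_succ' _ _).symm

end OMEGA


section ASSEMBLY
variable {d : ℕ} {Ω : Type*} [MeasurableSpace Ω] {P : Measure Ω} [IsProbabilityMeasure P]
  {μ : Measure (Fin d → ℤ)} [IsProbabilityMeasure μ]
  {W : Bool × (Fin d → ℤ) → Ω → (Fin d → ℤ)}

/-- negated cast embedding of ℕ^d -/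
def negc (k : Fin d → ℕ) : Fin d → ℤ := fun i => -(k i : ℤ)

lemma negc_inj : Function.Injective (negc (d := d)) := by
  intro k k' h
  funext i
  have := congrFun h i
  simp only [negc, neg_inj, Nat.cast_inj] at this
  exact this

lemma com_subset_negc {g : Gi d} (hg : g ∈ Pos) :
    com univ g 0 ⊆ Set.range (negc (d := d)) := by
  intro z hz
  have hcoord : ∀ j, z j ≤ 0 := orb_coords hg hz.1
  refine ⟨fun i => (-(z i)).toNat, ?_⟩
  funext i
  simp only [negc]
  rw [Int.toNat_of_nonneg (by have := hcoord i; omega)]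
  omega

/-- the boolean swap equivalence -/
def bswap : Bool × (Fin d → ℤ) ≃ Bool × (Fin d → ℤ) :=
  Equiv.prodCongr ⟨Bool.not, Bool.not, Bool.not_not, Bool.not_not⟩ (Equiv.refl _)

lemma meas_hit_univ (b : Bool) (n y : Fin d → ℤ) :
    MeasurableSet {g : Gi d | y ∈ orb b univ g n} :=
  MT_le univ _ (meas_hit (T := univ) (fun n' _ => mem_univ _) n y)

lemma hitF_prob (hW : Adm P μ W) (k : Fin d → ℕ) :
    P ((tup W) ⁻¹' {g : Gi d | negc k ∈ orb false univ g 0})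
      = P ((tup W) ⁻¹' {g : Gi d | (0 : Fin d → ℤ) ∈ orb false univ g (fun i => (k i : ℤ))}) := by
  have htr : {g : Gi d | (0 : Fin d → ℤ) ∈ orb false univ g (fun i => (k i : ℤ))}
      = (shiftG (fun i => (k i : ℤ))) ⁻¹' {g : Gi d | negc k ∈ orb false univ g 0} := by
    ext g
    simp only [mem_setOf_eq, mem_preimage]
    rw [orb_translate]
    have : (0 : Fin d → ℤ) - (fun i => (k i : ℤ)) = negc k := by
      funext i; simp [negc]
    rw [this]
  rw [htr]
  have h3 : (tup W) ⁻¹' ((shiftG (fun i => (k i : ℤ))) ⁻¹' {g : Gi d | negc k ∈ orb false univ g 0})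
      = (tup (fun q => W (q.1, q.2 + (fun i => (k i : ℤ))))) ⁻¹' {g : Gi d | negc k ∈ orb false univ g 0} := rfl
  rw [h3]
  exact (pre_eq (μ := μ)
    (hW.reindex (Equiv.prodCongr (Equiv.refl Bool) (Equiv.addRight (fun i => (k i : ℤ))))) hW
    (meas_hit_univ false 0 (negc k))).symm

lemma hitT_prob (hW : Adm P μ W) (y : Fin d → ℤ) :
    P ((tup W) ⁻¹' {g : Gi d | y ∈ orb true univ g 0})
      = P ((tup W) ⁻¹' {g : Gi d | y ∈ orb false univ g 0}) := by
  have hsw : {g : Gi d | y ∈ orb true univ g 0}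
      = swapG ⁻¹' {g : Gi d | y ∈ orb false univ g 0} := by
    ext g
    simp only [mem_setOf_eq, mem_preimage, orb_swap, Bool.not_false]
  rw [hsw]
  have h3 : (tup W) ⁻¹' (swapG ⁻¹' {g : Gi d | y ∈ orb false univ g 0})
      = (tup (fun q => W (bswap q))) ⁻¹' {g : Gi d | y ∈ orb false univ g 0} := rfl
  rw [h3]
  exact pre_eq (μ := μ) (hW.reindex bswap) hW (meas_hit_univ false 0 y)

lemma com_prob_sq (hW : Adm P μ W) (k : Fin d → ℕ) :
    P ((tup W) ⁻¹' {g : Gi d | negc k ∈ com univ g 0})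
      = (P ((tup W) ⁻¹' {g : Gi d | (0 : Fin d → ℤ) ∈ orb false univ g (fun i => (k i : ℤ))})) ^ 2 := by
  have hsplit : (tup W) ⁻¹' {g : Gi d | negc k ∈ com univ g 0}
      = (tup W) ⁻¹' {g : Gi d | negc k ∈ orb false univ g 0}
        ∩ (tup W) ⁻¹' {g : Gi d | negc k ∈ orb true univ g 0} := rfl
  have hdisjbool : Disjoint {q : Bool × (Fin d → ℤ) | q.1 = false} {q : Bool × (Fin d → ℤ) | q.1 = true} := by
    rw [Set.disjoint_left]
    intro q hq hq'
    have h1 : q.1 = false := hq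
    have h2 : q.1 = true := hq'
    rw [h1] at h2
    exact Bool.false_ne_true h2
  have hindep := indep_events (μ := μ) hW hdisjbool
    (B := {g : Gi d | negc k ∈ orb false univ g 0})
    (B' := {g : Gi d | negc k ∈ orb true univ g 0})
    (meas_hit (T := {q : Bool × (Fin d → ℤ) | q.1 = false}) (b := false) (C := univ)
      (fun n' _ => rfl) 0 (negc k))
    (meas_hit (T := {q : Bool × (Fin d → ℤ) | q.1 = true}) (b := true) (C := univ)
      (fun n' _ => rfl) 0 (negc k))
  rw [hsplit, hindep, hitT_prob hW, hitF_prob hW, sq]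

end ASSEMBLY

end AncestralAux



end

open AncestralAux

/-- For two independent copies of the ancestral-line graph driven by
i.i.d. jumps with law `μ` supported in `{1,2,…}^d`, with `A, A'` the two ancestral lines
of `0` and `q_k = P(0 ∈ A_k)`:
(1) `E[#(A ∩ A')] = Σ_{k∈ℕ^d} q_k²` in `[0,∞]`;
(2) `P(#(A ∩ A') > k) = P(A ∩ A' ≠ {0})^k` for every `k ∈ ℕ`;
(3) `E[#(A ∩ A')] = (1 − P(A ∩ A' ≠ {0}))⁻¹` in `[0,∞]`. -/
theorem expected_intersection_of_independent_ancestral_lines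
    {d : ℕ} {Ω : Type*} [MeasurableSpace Ω]
    (P : Measure Ω) [IsProbabilityMeasure P]
    (μ : Measure (Fin d → ℤ)) [IsProbabilityMeasure μ]
    (hsupp : ∀ k : Fin d → ℤ, (¬ ∀ i, 1 ≤ k i) → μ {k} = 0)
    (Z : Bool → (Fin d → ℤ) → Ω → (Fin d → ℤ))
    (hZmeas : ∀ b i, Measurable (Z b i))
    (hZlaw : ∀ b i, Measure.map (Z b i) P = μ)
    (hZindep : iIndepFun
      (fun p : Bool × (Fin d → ℤ) => Z p.1 p.2) P)
    (A : (Fin d → ℤ) → Ω → Set (Fin d → ℤ))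
    (hA : ∀ n ω, A n ω = {j | ∃ m : ℕ, (fun i => i - Z false i ω)^[m] n = j})
    (A' : (Fin d → ℤ) → Ω → Set (Fin d → ℤ))
    (hA' : ∀ n ω, A' n ω = {j | ∃ m : ℕ, (fun i => i - Z true i ω)^[m] n = j}) :
    (∫⁻ ω, ((A 0 ω ∩ A' 0 ω).encard : ℝ≥0∞) ∂P
        = ∑' k : Fin d → ℕ,
            (P {ω | (0 : Fin d → ℤ) ∈ A (fun i => (k i : ℤ)) ω}) ^ 2) ∧
    (∀ k : ℕ, P {ω | (k : ℕ∞) < (A 0 ω ∩ A' 0 ω).encard}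
        = (P {ω | A 0 ω ∩ A' 0 ω ≠ {0}}) ^ k) ∧
    (∫⁻ ω, ((A 0 ω ∩ A' 0 ω).encard : ℝ≥0∞) ∂P
        = (1 - P {ω | A 0 ω ∩ A' 0 ω ≠ {0}})⁻¹) := by
  rcases Nat.eq_zero_or_pos d with rfl | hd
  · -- degenerate dimension 0
    have hsub : ∀ (s : Set (Fin 0 → ℤ)), (0 : Fin 0 → ℤ) ∈ s → s = {0} := fun s h0 =>
      Set.eq_singleton_iff_unique_mem.mpr ⟨h0, fun y _ => Subsingleton.elim y 0⟩
    have hA0 : ∀ ω, A 0 ω ∩ A' 0 ω = {0} := by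
      intro ω
      apply hsub
      constructor
      · rw [hA]; exact ⟨0, rfl⟩
      · rw [hA']; exact ⟨0, rfl⟩
    have hint : ∫⁻ ω, ((A 0 ω ∩ A' 0 ω).encard : ℝ≥0∞) ∂P = 1 := by
      have : ∀ ω, ((A 0 ω ∩ A' 0 ω).encard : ℝ≥0∞) = 1 := fun ω => by
        rw [hA0 ω, Set.encard_singleton]; simp
      simp only [this]
      rw [lintegral_one, measure_univ]
    have hNT0 : P {ω | A 0 ω ∩ A' 0 ω ≠ {0}} = 0 := by
      have : {ω | A 0 ω ∩ A' 0 ω ≠ {0}} = (∅ : Set Ω) := by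
        ext ω
        simp only [mem_setOf_eq, mem_empty_iff_false, iff_false, ne_eq, not_not]
        exact hA0 ω
      rw [this, measure_empty]
    refine ⟨?_, ?_, ?_⟩
    · rw [hint]
      have hq : ∀ k : Fin 0 → ℕ, (P {ω | (0 : Fin 0 → ℤ) ∈ A (fun i => (k i : ℤ)) ω}) ^ 2 = 1 := by
        intro k
        have : {ω | (0 : Fin 0 → ℤ) ∈ A (fun i => (k i : ℤ)) ω} = univ := by
          ext ω
          simp only [mem_setOf_eq, mem_univ, iff_true]
          rw [hA]
          exact ⟨0, Subsingleton.elim _ _⟩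
        rw [this, measure_univ, one_pow]
      rw [tsum_congr hq]
      haveI : Unique (Fin 0 → ℕ) := ⟨⟨fun i => 0⟩, fun f => funext fun i => Fin.elim0 i⟩
      rw [tsum_eq_single default (fun b hb => absurd (Subsingleton.elim b default) hb)]
    · intro k
      rw [hNT0]
      rcases Nat.eq_zero_or_pos k with rfl | hk
      · rw [pow_zero]
        have : {ω | ((0 : ℕ) : ℕ∞) < (A 0 ω ∩ A' 0 ω).encard} = univ := by
          ext ω
          simp only [mem_setOf_eq, mem_univ, iff_true, hA0 ω, Set.encard_singleton,
            Nat.cast_zero]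
          exact zero_lt_one
        rw [this, measure_univ]
      · rw [zero_pow (Nat.pos_iff_ne_zero.mp hk)]
        have : {ω | ((k : ℕ) : ℕ∞) < (A 0 ω ∩ A' 0 ω).encard} = (∅ : Set Ω) := by
          ext ω
          simp only [mem_setOf_eq, mem_empty_iff_false, iff_false, not_lt, hA0 ω,
            Set.encard_singleton]
          exact_mod_cast hk
        rw [this, measure_empty]
    · rw [hint, hNT0, tsub_zero, inv_one]
  · -- main case : d ≥ 1
    set W : Bool × (Fin d → ℤ) → Ω → (Fin d → ℤ) := fun q => Z q.1 q.2 with hWdef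
    have hW : Adm P μ W := ⟨fun q => hZmeas q.1 q.2, fun q => hZlaw q.1 q.2, hZindep⟩
    have hstepF : ∀ ω, (fun i => i - Z false i ω) = stp false univ (tup W ω) :=
      fun ω => funext fun i => (stp_univ (b := false) (g := tup W ω) (n := i)).symm
    have hstepT : ∀ ω, (fun i => i - Z true i ω) = stp true univ (tup W ω) :=
      fun ω => funext fun i => (stp_univ (b := true) (g := tup W ω) (n := i)).symm
    have hAgen : ∀ n ω, A n ω = orb false univ (tup W ω) n := by
      intro n ω
      rw [hA, hstepF ω]
      rfl
    have hA'gen : ∀ n ω, A' n ω = orb true univ (tup W ω) n := by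
      intro n ω
      rw [hA', hstepT ω]
      rfl
    have hcomeq : ∀ ω, A 0 ω ∩ A' 0 ω = com univ (tup W ω) 0 := by
      intro ω
      rw [hAgen 0 ω, hA'gen 0 ω]
      rfl
    have hsetNT : {ω | A 0 ω ∩ A' 0 ω ≠ {0}} = (tup W) ⁻¹' (NTe d) := by
      ext ω
      simp only [mem_setOf_eq, mem_preimage, NTe, hcomeq ω]
    have hset2 : ∀ k : ℕ, {ω | (k : ℕ∞) < (A 0 ω ∩ A' 0 ω).encard} = (tup W) ⁻¹' (Tke d k) := by
      intro k
      ext ω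
      simp only [mem_setOf_eq, mem_preimage, Tke, hcomeq ω]
    have haePos : ∀ᵐ ω ∂P, tup W ω ∈ Pos := by
      rw [ae_iff]
      exact pos_null hW hsupp
    -- part (1)
    have part1 : ∫⁻ ω, ((A 0 ω ∩ A' 0 ω).encard : ℝ≥0∞) ∂P
        = ∑' k : Fin d → ℕ, (P {ω | (0 : Fin d → ℤ) ∈ A (fun i => (k i : ℤ)) ω}) ^ 2 := by
      have hmeasCom : ∀ k : Fin d → ℕ,
          MeasurableSet ((tup W) ⁻¹' {g : Gi d | negc k ∈ com univ g 0}) := fun k =>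
        hW.tup_meas (MT_le univ _ (meas_com_mem (fun n' _ b => mem_univ _) 0 (negc k)))
      have haeq : (fun ω => ((A 0 ω ∩ A' 0 ω).encard : ℝ≥0∞))
          =ᵐ[P] fun ω => ∑' k : Fin d → ℕ,
            ((tup W) ⁻¹' {g : Gi d | negc k ∈ com univ g 0}).indicator
              (1 : Ω → ℝ≥0∞) ω := by
        have hfun : ∀ ω, tup W ω ∈ Pos → ((A 0 ω ∩ A' 0 ω).encard : ℝ≥0∞)
            = ∑' k : Fin d → ℕ,
              ((tup W) ⁻¹' {g : Gi d | negc k ∈ com univ g 0}).indicator (1 : Ω → ℝ≥0∞) ω := by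
          intro ω hω
          rw [hcomeq ω, encard_tsum_of_range negc negc_inj (com_subset_negc hω)]
          refine tsum_congr fun k => ?_
          by_cases hk : negc k ∈ com univ (tup W ω) 0
          · rw [if_pos hk]
            exact (Set.indicator_of_mem
              (show ω ∈ (tup W) ⁻¹' {g : Gi d | negc k ∈ com univ g 0} from hk)
              (1 : Ω → ℝ≥0∞)).symm
          · rw [if_neg hk]
            exact (Set.indicator_of_notMem
              (show ω ∉ (tup W) ⁻¹' {g : Gi d | negc k ∈ com univ g 0} from hk)
              (1 : Ω → ℝ≥0∞)).symm
        exact haePos.mono hfun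
      rw [lintegral_congr_ae haeq,
        lintegral_tsum fun k => (measurable_one.indicator (hmeasCom k)).aemeasurable]
      refine tsum_congr fun k => ?_
      rw [lintegral_indicator_one (hmeasCom k)]
      have hEv : {ω | (0 : Fin d → ℤ) ∈ A (fun i => (k i : ℤ)) ω}
          = (tup W) ⁻¹' {g : Gi d | (0 : Fin d → ℤ) ∈ orb false univ g (fun i => (k i : ℤ))} := by
        ext ω
        simp only [mem_setOf_eq, mem_preimage, hAgen (fun i => (k i : ℤ)) ω]
      rw [hEv]
      exact com_prob_sq hW k
    refine ⟨part1, ?_, ?_⟩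
    · intro k
      rw [hset2 k, hsetNT]
      exact tke_pow hd hW hsupp k
    · -- part (3)
      have hpt : ∀ ω, ((A 0 ω ∩ A' 0 ω).encard : ℝ≥0∞)
          = ∑' k : ℕ, ((tup W) ⁻¹' (Tke d k)).indicator (1 : Ω → ℝ≥0∞) ω := by
        intro ω
        rw [hcomeq ω, enat_cast_eq_tsum]
        refine tsum_congr fun k => ?_
        by_cases hk : (k : ℕ∞) < (com univ (tup W ω) 0).encard
        · rw [if_pos hk]
          exact (Set.indicator_of_mem (show ω ∈ (tup W) ⁻¹' (Tke d k) from hk)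
            (1 : Ω → ℝ≥0∞)).symm
        · rw [if_neg hk]
          exact (Set.indicator_of_notMem (show ω ∉ (tup W) ⁻¹' (Tke d k) from hk)
            (1 : Ω → ℝ≥0∞)).symm
      have hmeasTk : ∀ k : ℕ, MeasurableSet ((tup W) ⁻¹' (Tke d k)) := fun k =>
        hW.tup_meas (meas_Tke k)
      calc ∫⁻ ω, ((A 0 ω ∩ A' 0 ω).encard : ℝ≥0∞) ∂P
          = ∫⁻ ω, ∑' k : ℕ, ((tup W) ⁻¹' (Tke d k)).indicator (1 : Ω → ℝ≥0∞) ω ∂P := by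
            exact lintegral_congr fun ω => hpt ω
        _ = ∑' k : ℕ, P ((tup W) ⁻¹' (Tke d k)) := by
            rw [lintegral_tsum fun k => (measurable_one.indicator (hmeasTk k)).aemeasurable]
            exact tsum_congr fun k => lintegral_indicator_one (hmeasTk k)
        _ = ∑' k : ℕ, (P ((tup W) ⁻¹' (NTe d))) ^ k :=
            tsum_congr fun k => tke_pow hd hW hsupp k
        _ = (1 - P ((tup W) ⁻¹' (NTe d)))⁻¹ := ENNReal.tsum_geometric _
        _ = (1 - P {ω | A 0 ω ∩ A' 0 ω ≠ {0}})⁻¹ := by rw [hsetNT]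
end

section
/- Let 0 < α_i < 1 for i = 1,…,d with Σ_{i=1}^d 1/α_i > 2, let E = diag(1/α_1,…,1/α_d), and let Λ : ℝ^d → ℂ be continuous, E-homogeneous (Λ(t^E x) = tΛ(x) for t > 0) and with Λ(x) ≠ 0 for x ≠ 0. For t, s ∈ ℝ^d define C(t,s) = ∫_{ℝ^d} Π_{k=1}^d [(e^{i t_k y_k} − 1)(e^{-i s_k y_k} − 1) / (2π |y_k|²)] · |Λ(y)|^{-2} dy. Then the integral converges absolutely for every t, s ∈ ℝ^d, and C satisfies the operator-scaling relation C(λ^E t, λ^E s) = λ^{2 + q(E)} C(t,s) for all λ > 0 and t, s ∈ ℝ^d, where q(E) = Σ_{i=1}^d 1/α_i and λ^E t = (λ^{1/α_1}t_1,…,λ^{1/α_d}t_d). -/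
open MeasureTheory

open Set

lemma exp_I_sub_one_bound (x : ℝ) :
    ‖Complex.exp (Complex.I * x) - 1‖ ≤ 2 * min 1 |x| := by
  rcases le_total |x| 1 with h | h
  · have hx : ‖Complex.I * x‖ ≤ 1 := by
      simpa [map_mul] using h
    have := Complex.norm_exp_sub_one_le hx
    simpa [map_mul, min_eq_right h] using this
  · rw [min_eq_left h]
    calc ‖Complex.exp (Complex.I * x) - 1‖
        ≤ ‖Complex.exp (Complex.I * x)‖ + ‖(1:ℂ)‖ :=
          norm_sub_le _ _
      _ ≤ 2 * 1 := by simp [Complex.norm_exp]; norm_num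

lemma exp_neg_I_sub_one_bound (x : ℝ) :
    ‖Complex.exp (-Complex.I * x) - 1‖ ≤ 2 * min 1 |x| := by
  have := exp_I_sub_one_bound (-x)
  have he : Complex.I * ((-x : ℝ) : ℂ) = -Complex.I * (x : ℂ) := by push_cast; ring
  rw [he] at this
  simpa using this

lemma integrable_g {M p : ℝ} (hM : 1 ≤ M) (hp0 : 0 < p) (hp1 : p < 1) :
    Integrable (fun u : ℝ => (min 1 (M * |u|)) ^ 2 * |u| ^ (-(2 + p))) := by
  set g : ℝ → ℝ := fun u => (min 1 (M * |u|)) ^ 2 * |u| ^ (-(2 + p)) with hg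
  have hMpos : (0 : ℝ) < M := lt_of_lt_of_le one_pos hM
  have hmeas : Measurable g := by unfold g; fun_prop
  have hnonneg : ∀ u, 0 ≤ g u := by
    intro u
    apply mul_nonneg (sq_nonneg _) (Real.rpow_nonneg (abs_nonneg _) _)
  have hIoi : IntegrableOn g (Ioi 0) := by
    have hsplit : Ioc (0:ℝ) M⁻¹ ∪ Ioi M⁻¹ = Ioi 0 :=
      Ioc_union_Ioi_eq_Ioi (by positivity)
    rw [← hsplit, integrableOn_union]
    constructor
    · -- near zero: bound by M^2 * u^(-p)
      have hmaj : IntegrableOn (fun u : ℝ => M ^ 2 * u ^ (-p)) (Ioc 0 M⁻¹) := by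
        refine (Integrable.const_mul ?_ _)
        refine ((intervalIntegral.integrableOn_Ioo_rpow_iff (t := 2 * M⁻¹) (by positivity)).2
          (by linarith)).mono_set ?_
        refine Ioc_subset_Ioo_right ?_
        nlinarith [inv_pos.mpr hMpos]
      refine Integrable.mono' hmaj hmeas.aestronglyMeasurable ?_
      filter_upwards [ae_restrict_mem measurableSet_Ioc] with u hu
      obtain ⟨hu0, hu1⟩ := hu
      have habs : |u| = u := abs_of_pos hu0
      rw [Real.norm_eq_abs, abs_of_nonneg (hnonneg u), hg]
      simp only [habs]
      have h1 : (min 1 (M * u)) ^ 2 ≤ (M * u) ^ 2 :=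
        pow_le_pow_left₀ (le_min one_pos.le (by positivity)) (min_le_right _ _) 2
      calc (min 1 (M * u)) ^ 2 * u ^ (-(2 + p))
          ≤ (M * u) ^ 2 * u ^ (-(2 + p)) :=
            mul_le_mul_of_nonneg_right h1 (Real.rpow_nonneg hu0.le _)
        _ = M ^ 2 * u ^ (-p) := by
            rw [mul_pow, mul_assoc]
            congr 1
            rw [← Real.rpow_two, ← Real.rpow_add hu0]
            norm_num
    · -- away from zero: bound by u^(-(2+p))
      refine Integrable.mono' (integrableOn_Ioi_rpow_of_lt (a := -(2+p)) (by linarith) (by positivity))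
        hmeas.aestronglyMeasurable ?_
      filter_upwards [ae_restrict_mem measurableSet_Ioi] with u hu
      have hu0 : (0:ℝ) < u := lt_trans (by positivity) hu
      rw [Real.norm_eq_abs, abs_of_nonneg (hnonneg u), hg]
      have habs : |u| = u := abs_of_pos hu0
      simp only [habs]
      calc (min 1 (M * u)) ^ 2 * u ^ (-(2 + p))
          ≤ 1 ^ 2 * u ^ (-(2 + p)) :=
            mul_le_mul_of_nonneg_right
              (pow_le_pow_left₀ (le_min one_pos.le (by positivity)) (min_le_left _ _) 2)
              (Real.rpow_nonneg hu0.le _)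
        _ = u ^ (-(2 + p)) := by ring
  have hIio : IntegrableOn g (Iio 0) := by
    rw [← (Measure.measurePreserving_neg (volume : Measure ℝ)).integrableOn_comp_preimage
      (Homeomorph.neg ℝ).measurableEmbedding]
    have heven : (fun u : ℝ => g (-u)) = g := by
      funext u; simp only [hg, abs_neg]
    simpa [Function.comp_def, heven] using hIoi
  rw [← integrableOn_univ, ← Iio_union_Ici (a := (0:ℝ)), integrableOn_union,
    integrableOn_Ici_iff_integrableOn_Ioi]
  exact ⟨hIio, hIoi⟩

lemma lambda_lower {d : ℕ} (α : Fin d → ℝ) (hα : ∀ i, 0 < α i ∧ α i < 1)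
    (Λ : (Fin d → ℝ) → ℂ) (hΛc : Continuous Λ)
    (hΛh : ∀ t : ℝ, 0 < t → ∀ x : Fin d → ℝ,
      Λ (fun i => t ^ (1 / α i) * x i) = (t : ℂ) * Λ x)
    (hΛ0 : ∀ x : Fin d → ℝ, x ≠ 0 → Λ x ≠ 0) (hd : 0 < d) :
    ∃ c : ℝ, 0 < c ∧ ∀ y : Fin d → ℝ, y ≠ 0 →
      c * (∑ k, |y k| ^ α k) ≤ ‖Λ y‖ := by
  classical
  set τ : (Fin d → ℝ) → ℝ := fun x => ∑ k, |x k| ^ α k with hτ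
  have hτc : Continuous τ := by
    apply continuous_finset_sum
    intro k _
    have : Continuous fun u : ℝ => |u| ^ α k :=
      (Real.continuous_rpow_const (hα k).1.le).comp continuous_abs
    exact this.comp (continuous_apply k)
  have hτnonneg : ∀ x, 0 ≤ τ x := fun x =>
    Finset.sum_nonneg fun k _ => Real.rpow_nonneg (abs_nonneg _) _
  have hτpos : ∀ x : Fin d → ℝ, x ≠ 0 → 0 < τ x := by
    intro x hx
    obtain ⟨k, hk⟩ : ∃ k, x k ≠ 0 := by
      by_contra h
      push_neg at h
      exact hx (funext h)
    have : 0 < |x k| ^ α k := Real.rpow_pos_of_pos (abs_pos.2 hk) _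
    exact lt_of_lt_of_le this (Finset.single_le_sum
      (fun i _ => Real.rpow_nonneg (abs_nonneg _) _) (Finset.mem_univ k))
  -- the "unit sphere" S
  set S : Set (Fin d → ℝ) := {x | τ x = 1} with hS
  have hSc : IsCompact S := by
    have hclosed : IsClosed S := isClosed_eq hτc continuous_const
    have hsub : S ⊆ Set.pi univ (fun _ : Fin d => Icc (-1:ℝ) 1) := by
      intro x hx k _
      have h1 : |x k| ^ α k ≤ 1 := by
        rw [← hx]
        exact Finset.single_le_sum
          (fun i _ => Real.rpow_nonneg (abs_nonneg _) _) (Finset.mem_univ k)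
      have h2 : |x k| ≤ 1 := by
        by_contra h
        push_neg at h
        have h3 : 1 < |x k| ^ α k :=
          (Real.one_lt_rpow_iff_of_pos (by linarith)).2 (Or.inl ⟨h, (hα k).1⟩)
        linarith
      exact abs_le.1 h2
    exact (isCompact_univ_pi fun _ => isCompact_Icc).of_isClosed_subset hclosed hsub
  have hSne : S.Nonempty := by
    refine ⟨Pi.single ⟨0, hd⟩ 1, ?_⟩
    simp only [hS, mem_setOf_eq, hτ]
    rw [Finset.sum_eq_single ⟨0, hd⟩]
    · simp
    · intro i _ hi
      rw [Pi.single_eq_of_ne hi]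
      simp [Real.zero_rpow (ne_of_gt (hα i).1)]
    · simp
  obtain ⟨x0, hx0S, hx0min⟩ := hSc.exists_isMinOn hSne ((continuous_norm.comp hΛc).continuousOn)
  have hx0ne : x0 ≠ 0 := by
    intro h
    rw [hS] at hx0S
    simp only [mem_setOf_eq, h] at hx0S
    have : τ 0 = 0 := by
      simp [hτ, Real.zero_rpow, fun i => ne_of_gt (hα i).1]
    rw [hx0S] at this
    norm_num at this
  refine ⟨‖Λ x0‖, by
    simpa [norm_pos_iff] using hΛ0 x0 hx0ne, ?_⟩
  intro y hy
  have hr : 0 < τ y := hτpos y hy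
  set θ : Fin d → ℝ := fun k => (τ y) ^ (-(1 / α k)) * y k with hθ
  have hyθ : (fun i => (τ y) ^ (1 / α i) * θ i) = y := by
    funext i
    simp only [hθ]
    rw [← mul_assoc, ← Real.rpow_add hr]
    simp
  have hΛy : Λ y = (τ y : ℂ) * Λ θ := by
    conv_lhs => rw [← hyθ]
    exact hΛh (τ y) hr θ
  have hθS : θ ∈ S := by
    simp only [hS, mem_setOf_eq, hτ]
    have : ∀ k : Fin d, |θ k| ^ α k = (τ y)⁻¹ * |y k| ^ α k := by
      intro k
      simp only [hθ, abs_mul]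
      rw [Real.mul_rpow (abs_nonneg _) (abs_nonneg _)]
      congr 1
      rw [abs_of_pos (Real.rpow_pos_of_pos hr _), ← Real.rpow_mul hr.le,
        show -(1 / α k) * α k = -1 by rw [neg_mul, one_div, inv_mul_cancel₀ (ne_of_gt (hα k).1)], Real.rpow_neg_one]
    rw [Finset.sum_congr rfl fun k _ => this k, ← Finset.mul_sum]
    exact inv_mul_cancel₀ (ne_of_gt hr)
  have hmin : ‖Λ x0‖ ≤ ‖Λ θ‖ := hx0min hθS
  rw [hΛy]
  rw [norm_mul]
  rw [Complex.norm_real, Real.norm_eq_abs, abs_of_pos hr]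
  calc ‖Λ x0‖ * τ y ≤ ‖Λ θ‖ * τ y :=
        mul_le_mul_of_nonneg_right hmin hr.le
    _ = τ y * ‖Λ θ‖ := mul_comm _ _

lemma tau_amgm {d : ℕ} (α : Fin d → ℝ) (hα : ∀ i, 0 < α i)
    (hq0 : 0 < ∑ i, 1 / α i) (y : Fin d → ℝ) :
    ∏ k, |y k| ^ (1 / ∑ i, 1 / α i) ≤ ∑ k, |y k| ^ α k := by
  set q : ℝ := ∑ i, 1 / α i with hqdef
  have hw : ∀ i ∈ Finset.univ, (0:ℝ) ≤ (1 / α i) / q := fun i _ => div_nonneg (div_nonneg one_pos.le (hα i).le) hq0.le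
  have hw' : ∑ i, (1 / α i) / q = 1 := by
    rw [← Finset.sum_div, ← hqdef, div_self (ne_of_gt hq0)]
  have hz : ∀ i ∈ Finset.univ, (0:ℝ) ≤ |y i| ^ α i :=
    fun i _ => Real.rpow_nonneg (abs_nonneg _) _
  have h := Real.geom_mean_le_arith_mean_weighted Finset.univ
    (fun i => (1 / α i) / q) (fun i => |y i| ^ α i) hw hw' hz
  calc ∏ k, |y k| ^ (1 / q)
      = ∏ k, (|y k| ^ α k) ^ ((1 / α k) / q) := by
        refine Finset.prod_congr rfl fun k _ => ?_
        rw [← Real.rpow_mul (abs_nonneg _)]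
        congr 1
        have := (hα k).ne'
        field_simp
    _ ≤ ∑ k, ((1 / α k) / q) * (|y k| ^ α k) := h
    _ ≤ ∑ k, |y k| ^ α k := by
        refine Finset.sum_le_sum fun k _ => ?_
        have h1 : (1 / α k) / q ≤ 1 := by
          rw [div_le_one hq0]
          exact Finset.single_le_sum (f := fun i => 1 / α i)
            (fun i _ => div_nonneg one_pos.le (hα i).le) (Finset.mem_univ k)
        exact mul_le_of_le_one_left (Real.rpow_nonneg (abs_nonneg _) _) h1


/-- In the critical regime, the covariance
`C(t,s) = ∫_{ℝ^d} Π_k (e^{i t_k y_k} − 1)(e^{−i s_k y_k} − 1)/(2π|y_k|²) · |Λ(y)|⁻² dy`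
is well defined (the integrand is integrable for all `t,s`) and satisfies the
operator-scaling relation `C(λ^E t, λ^E s) = λ^{2+q(E)} C(t,s)` for all `λ > 0`. -/
theorem critical_covariance_integrable_and_operator_scaling
    {d : ℕ} (α : Fin d → ℝ) (hα : ∀ i, 0 < α i ∧ α i < 1)
    (hq : 2 < ∑ i, 1 / α i)
    (Λ : (Fin d → ℝ) → ℂ) (hΛc : Continuous Λ)
    (hΛh : ∀ t : ℝ, 0 < t → ∀ x : Fin d → ℝ,
      Λ (fun i => t ^ (1 / α i) * x i) = (t : ℂ) * Λ x)
    (hΛ0 : ∀ x : Fin d → ℝ, x ≠ 0 → Λ x ≠ 0)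
    (C : (Fin d → ℝ) → (Fin d → ℝ) → ℂ)
    (hC : ∀ t s : Fin d → ℝ, C t s =
      ∫ y : Fin d → ℝ,
        (∏ k : Fin d,
          (Complex.exp (Complex.I * ((t k * y k : ℝ) : ℂ)) - 1) *
            (Complex.exp (-Complex.I * ((s k * y k : ℝ) : ℂ)) - 1) /
              ((2 * Real.pi * (y k) ^ 2 : ℝ) : ℂ)) *
        ((‖Λ y‖ ^ 2)⁻¹ : ℝ)) :
    (∀ t s : Fin d → ℝ, Integrable (fun y : Fin d → ℝ =>
      (∏ k : Fin d,
          (Complex.exp (Complex.I * ((t k * y k : ℝ) : ℂ)) - 1) *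
            (Complex.exp (-Complex.I * ((s k * y k : ℝ) : ℂ)) - 1) /
              ((2 * Real.pi * (y k) ^ 2 : ℝ) : ℂ)) *
        ((‖Λ y‖ ^ 2)⁻¹ : ℝ))) ∧
    ∀ lam : ℝ, 0 < lam → ∀ t s : Fin d → ℝ,
      C (fun k => lam ^ (1 / α k) * t k) (fun k => lam ^ (1 / α k) * s k) =
        ((lam ^ (2 + ∑ i, 1 / α i) : ℝ) : ℂ) * C t s := by
  classical
  have hd : 0 < d := by
    rcases Nat.eq_zero_or_pos d with h | h
    · exfalso; subst h; simp at hq; linarith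
    · exact h
  have hq0 : (0:ℝ) < ∑ i, 1 / α i := by linarith
  set q : ℝ := ∑ i, 1 / α i with hqdef
  set p : ℝ := 2 / q with hpdef
  have hp0 : 0 < p := by positivity
  have hp1 : p < 1 := by rw [hpdef, div_lt_one hq0]; exact hq
  obtain ⟨c, hc, hlow⟩ := lambda_lower α hα Λ hΛc hΛh hΛ0 hd
  have hΛm : Measurable Λ := hΛc.measurable
  -- measurability of the integrand
  have hFmeas : ∀ t s : Fin d → ℝ, Measurable (fun y : Fin d → ℝ =>
      (∏ k : Fin d,
          (Complex.exp (Complex.I * ((t k * y k : ℝ) : ℂ)) - 1) *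
            (Complex.exp (-Complex.I * ((s k * y k : ℝ) : ℂ)) - 1) /
              ((2 * Real.pi * (y k) ^ 2 : ℝ) : ℂ)) *
        ((‖Λ y‖ ^ 2)⁻¹ : ℝ)) := by
    intro t s
    apply Measurable.mul
    · apply Finset.measurable_prod
      intro k _
      have h1 : Continuous fun y : Fin d → ℝ =>
          Complex.exp (Complex.I * ((t k * y k : ℝ) : ℂ)) - 1 :=
        (Complex.continuous_exp.comp (continuous_const.mul
          (Complex.continuous_ofReal.comp (continuous_const.mul (continuous_apply k))))).sub
          continuous_const
      have h2 : Continuous fun y : Fin d → ℝ =>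
          Complex.exp (-Complex.I * ((s k * y k : ℝ) : ℂ)) - 1 :=
        (Complex.continuous_exp.comp (continuous_const.mul
          (Complex.continuous_ofReal.comp (continuous_const.mul (continuous_apply k))))).sub
          continuous_const
      have h3 : Continuous fun y : Fin d → ℝ => ((2 * Real.pi * (y k) ^ 2 : ℝ) : ℂ) :=
        Complex.continuous_ofReal.comp (continuous_const.mul ((continuous_apply k).pow 2))
      exact ((h1.mul h2).measurable).div h3.measurable
    · exact Complex.measurable_ofReal.comp
        ((((continuous_norm.comp hΛc).measurable).pow_const 2).inv)
  -- a.e. every coordinate is nonzero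
  have hae : ∀ᵐ y : Fin d → ℝ, ∀ k, y k ≠ 0 := by
    rw [ae_all_iff]
    intro k
    have h0 := MeasureTheory.Measure.ae_eval_ne (fun _ : Fin d => (volume : Measure ℝ)) k 0
    rwa [← MeasureTheory.volume_pi] at h0
  -- integrability
  have hInt : ∀ t s : Fin d → ℝ, Integrable (fun y : Fin d → ℝ =>
      (∏ k : Fin d,
          (Complex.exp (Complex.I * ((t k * y k : ℝ) : ℂ)) - 1) *
            (Complex.exp (-Complex.I * ((s k * y k : ℝ) : ℂ)) - 1) /
              ((2 * Real.pi * (y k) ^ 2 : ℝ) : ℂ)) *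
        ((‖Λ y‖ ^ 2)⁻¹ : ℝ)) := by
    intro t s
    set M : Fin d → ℝ := fun k => max (max |t k| |s k|) 1 with hMdef
    have hM1 : ∀ k, 1 ≤ M k := fun k => le_max_right _ _
    have hMt : ∀ k, |t k| ≤ M k := fun k => le_trans (le_max_left _ _) (le_max_left _ _)
    have hMs : ∀ k, |s k| ≤ M k := fun k => le_trans (le_max_right _ _) (le_max_left _ _)
    have hmaj : Integrable (fun y : Fin d → ℝ =>
        (c ^ 2)⁻¹ * ∏ k, ((2 / Real.pi) * ((min 1 (M k * |y k|)) ^ 2 * |y k| ^ (-(2 + p))))) := by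
      apply Integrable.const_mul
      exact Integrable.fintype_prod
        (f := fun k (u : ℝ) => (2 / Real.pi) * ((min 1 (M k * |u|)) ^ 2 * |u| ^ (-(2 + p))))
        (fun k => (integrable_g (hM1 k) hp0 hp1).const_mul _)
    refine hmaj.mono' (hFmeas t s).aestronglyMeasurable ?_
    filter_upwards [hae] with y hy
    have hyne : y ≠ 0 := fun h => hy ⟨0, hd⟩ (congrFun h _)
    -- per-factor bound
    have hfac : ∀ k : Fin d,
        ‖(Complex.exp (Complex.I * ((t k * y k : ℝ) : ℂ)) - 1) *
            (Complex.exp (-Complex.I * ((s k * y k : ℝ) : ℂ)) - 1) /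
              ((2 * Real.pi * (y k) ^ 2 : ℝ) : ℂ)‖ ≤
          (2 / Real.pi) * ((min 1 (M k * |y k|)) ^ 2 * ((y k) ^ 2)⁻¹) := by
      intro k
      have hyk := hy k
      have hden : (0:ℝ) < 2 * Real.pi * (y k) ^ 2 := by positivity
      have hminnn : (0:ℝ) ≤ min 1 (M k * |y k|) := le_min one_pos.le (by positivity)
      have h1 : ‖Complex.exp (Complex.I * ((t k * y k : ℝ) : ℂ)) - 1‖ ≤
          2 * min 1 (M k * |y k|) := by
        have ha : ‖Complex.exp (Complex.I * ((t k * y k : ℝ) : ℂ)) - 1‖ ≤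
            2 * min 1 |t k * y k| := by
          exact exp_I_sub_one_bound (t k * y k)
        refine ha.trans (mul_le_mul_of_nonneg_left
          (min_le_min le_rfl ?_) (by norm_num : (0:ℝ) ≤ 2))
        rw [abs_mul]; exact mul_le_mul_of_nonneg_right (hMt k) (abs_nonneg _)
      have h2 : ‖Complex.exp (-Complex.I * ((s k * y k : ℝ) : ℂ)) - 1‖ ≤
          2 * min 1 (M k * |y k|) := by
        have ha : ‖Complex.exp (-Complex.I * ((s k * y k : ℝ) : ℂ)) - 1‖ ≤
            2 * min 1 |s k * y k| := by
          exact exp_neg_I_sub_one_bound (s k * y k)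
        refine ha.trans (mul_le_mul_of_nonneg_left
          (min_le_min le_rfl ?_) (by norm_num : (0:ℝ) ≤ 2))
        rw [abs_mul]; exact mul_le_mul_of_nonneg_right (hMs k) (abs_nonneg _)
      rw [norm_div, norm_mul, Complex.norm_real, Real.norm_eq_abs, abs_of_pos hden]
      calc ‖Complex.exp (Complex.I * ((t k * y k : ℝ) : ℂ)) - 1‖ *
            ‖Complex.exp (-Complex.I * ((s k * y k : ℝ) : ℂ)) - 1‖ / (2 * Real.pi * (y k) ^ 2)
          ≤ (2 * min 1 (M k * |y k|)) * (2 * min 1 (M k * |y k|)) / (2 * Real.pi * (y k) ^ 2) := by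
            exact (div_le_div_iff_of_pos_right hden).2
              (mul_le_mul h1 h2 (norm_nonneg _) (mul_nonneg (by norm_num) hminnn))
        _ = (2 / Real.pi) * ((min 1 (M k * |y k|)) ^ 2 * ((y k) ^ 2)⁻¹) := by
            have hpi := Real.pi_pos
            field_simp
    -- lower bound via AM-GM
    have hamgm := tau_amgm α (fun i => (hα i).1) hq0 y
    have hchain : c * ∏ k, |y k| ^ (1 / q) ≤ ‖Λ y‖ :=
      le_trans (mul_le_mul_of_nonneg_left hamgm hc.le) (hlow y hyne)
    have hLpos : 0 < ∏ k, |y k| ^ (1 / q) :=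
      Finset.prod_pos fun k _ => Real.rpow_pos_of_pos (abs_pos.2 (hy k)) _
    have hR : (‖Λ y‖ ^ 2)⁻¹ ≤ (c ^ 2)⁻¹ * ∏ k, |y k| ^ (-p) := by
      have hcL : 0 < c * ∏ k, |y k| ^ (1 / q) := mul_pos hc hLpos
      have h1 : (c * ∏ k, |y k| ^ (1 / q)) ^ 2 ≤ (‖Λ y‖) ^ 2 :=
        pow_le_pow_left₀ hcL.le hchain 2
      have h2 : (‖Λ y‖ ^ 2)⁻¹ ≤ ((c * ∏ k, |y k| ^ (1 / q)) ^ 2)⁻¹ :=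
        inv_anti₀ (by positivity) h1
      refine h2.trans_eq ?_
      rw [mul_pow, mul_inv]
      congr 1
      rw [← Finset.prod_pow, ← Finset.prod_inv_distrib]
      refine Finset.prod_congr rfl fun k _ => ?_
      rw [Real.rpow_neg (abs_nonneg _), ← Real.rpow_natCast (|y k| ^ (1 / q)) 2,
        ← Real.rpow_mul (abs_nonneg _)]
      congr 2
      rw [hpdef]
      push_cast
      ring
    rw [norm_mul, norm_prod, Complex.norm_real, Real.norm_eq_abs,
      abs_of_nonneg (inv_nonneg.2 (sq_nonneg _) : (0:ℝ) ≤ (‖Λ y‖ ^ 2)⁻¹)]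
    calc (∏ k : Fin d, ‖(Complex.exp (Complex.I * ((t k * y k : ℝ) : ℂ)) - 1) *
            (Complex.exp (-Complex.I * ((s k * y k : ℝ) : ℂ)) - 1) /
              ((2 * Real.pi * (y k) ^ 2 : ℝ) : ℂ)‖) * (‖Λ y‖ ^ 2)⁻¹
        ≤ (∏ k : Fin d, (2 / Real.pi) * ((min 1 (M k * |y k|)) ^ 2 * ((y k) ^ 2)⁻¹)) *
          ((c ^ 2)⁻¹ * ∏ k, |y k| ^ (-p)) :=
          mul_le_mul (Finset.prod_le_prod (fun k _ => norm_nonneg _) (fun k _ => hfac k)) hR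
            (inv_nonneg.2 (sq_nonneg _))
            (Finset.prod_nonneg fun k _ => mul_nonneg (by positivity)
              (mul_nonneg (sq_nonneg _) (inv_nonneg.2 (sq_nonneg _))))
      _ = (c ^ 2)⁻¹ * ∏ k, ((2 / Real.pi) * ((min 1 (M k * |y k|)) ^ 2 * |y k| ^ (-(2 + p)))) := by
          rw [mul_left_comm, ← Finset.prod_mul_distrib]
          congr 1
          refine Finset.prod_congr rfl fun k _ => ?_
          have hsplit : |y k| ^ (-(2 + p)) = ((y k) ^ 2)⁻¹ * |y k| ^ (-p) := by
            rw [neg_add, Real.rpow_add (abs_pos.2 (hy k))]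
            congr 1
            rw [Real.rpow_neg (abs_nonneg _), Real.rpow_two, sq_abs]
          rw [hsplit]
          ring
  refine ⟨hInt, ?_⟩
  intro lam hlam t s
  set cc : Fin d → ℝ := fun k => lam ^ (-(1 / α k)) with hccdef
  have hcc : ∀ k, cc k = (lam ^ (1 / α k))⁻¹ := fun k => by
    simp only [hccdef]
    rw [Real.rpow_neg hlam.le]
  have hlk : ∀ k : Fin d, 0 < lam ^ (1 / α k) := fun k => Real.rpow_pos_of_pos hlam _
  set f : ((Fin d → ℝ) →ₗ[ℝ] (Fin d → ℝ)) := Matrix.toLin' (Matrix.diagonal cc) with hfdef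
  have hfapp : ∀ z : Fin d → ℝ, f z = fun k => cc k * z k := by
    intro z; funext k
    rw [hfdef, Matrix.toLin'_apply, Matrix.mulVec_diagonal]
  have hprodcc : ∏ k, cc k = lam ^ (-q) := by
    simp only [hccdef]
    rw [← Real.rpow_sum_of_pos hlam]
    congr 1
    rw [hqdef, ← Finset.sum_neg_distrib]
  have hdet : LinearMap.det f = lam ^ (-q) := by
    rw [hfdef, LinearMap.det_toLin', Matrix.det_diagonal, hprodcc]
  have hdetne : LinearMap.det f ≠ 0 := by
    rw [hdet]; positivity
  have hmap : Measure.map f volume = ENNReal.ofReal (lam ^ q) • volume := by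
    rw [Real.map_linearMap_volume_pi_eq_smul_volume_pi hdetne, hdet]
    congr 1
    rw [← Real.rpow_neg hlam.le, neg_neg, abs_of_pos (Real.rpow_pos_of_pos hlam q)]
  have hfm : Measurable (f : (Fin d → ℝ) → (Fin d → ℝ)) := by
    have : (f : (Fin d → ℝ) → (Fin d → ℝ)) = fun z => fun k => cc k * z k := funext hfapp
    rw [this]
    exact measurable_pi_lambda _ fun k => (measurable_pi_apply k).const_mul _
  have hGm := hFmeas (fun k => lam ^ (1 / α k) * t k) (fun k => lam ^ (1 / α k) * s k)
  have h1 := integral_map (μ := (volume : Measure (Fin d → ℝ))) hfm.aemeasurable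
    hGm.aestronglyMeasurable
  have h2 : ∫ y : Fin d → ℝ,
      (∏ k : Fin d,
          (Complex.exp (Complex.I * (((fun k => lam ^ (1 / α k) * t k) k * y k : ℝ) : ℂ)) - 1) *
            (Complex.exp (-Complex.I * (((fun k => lam ^ (1 / α k) * s k) k * y k : ℝ) : ℂ)) - 1) /
              ((2 * Real.pi * (y k) ^ 2 : ℝ) : ℂ)) *
        ((‖Λ y‖ ^ 2)⁻¹ : ℝ) ∂(Measure.map f volume) =
      (lam ^ q) • ∫ y : Fin d → ℝ,
      (∏ k : Fin d,
          (Complex.exp (Complex.I * (((fun k => lam ^ (1 / α k) * t k) k * y k : ℝ) : ℂ)) - 1) *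
            (Complex.exp (-Complex.I * (((fun k => lam ^ (1 / α k) * s k) k * y k : ℝ) : ℂ)) - 1) /
              ((2 * Real.pi * (y k) ^ 2 : ℝ) : ℂ)) *
        ((‖Λ y‖ ^ 2)⁻¹ : ℝ) := by
    rw [hmap, integral_smul_measure, ENNReal.toReal_ofReal (Real.rpow_nonneg hlam.le q)]
  -- pointwise identity for the substituted integrand
  have hpt : ∀ z : Fin d → ℝ,
      (∏ k : Fin d,
          (Complex.exp (Complex.I * (((fun k => lam ^ (1 / α k) * t k) k * (f z) k : ℝ) : ℂ)) - 1) *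
            (Complex.exp (-Complex.I * (((fun k => lam ^ (1 / α k) * s k) k * (f z) k : ℝ) : ℂ)) - 1) /
              ((2 * Real.pi * ((f z) k) ^ 2 : ℝ) : ℂ)) *
        ((‖Λ (f z)‖ ^ 2)⁻¹ : ℝ) =
      ((lam ^ (2 * q + 2) : ℝ) : ℂ) *
      ((∏ k : Fin d,
          (Complex.exp (Complex.I * ((t k * z k : ℝ) : ℂ)) - 1) *
            (Complex.exp (-Complex.I * ((s k * z k : ℝ) : ℂ)) - 1) /
              ((2 * Real.pi * (z k) ^ 2 : ℝ) : ℂ)) *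
        ((‖Λ z‖ ^ 2)⁻¹ : ℝ)) := by
    intro z
    have harg_t : ∀ k : Fin d, (lam ^ (1 / α k) * t k) * (cc k * z k) = t k * z k := by
      intro k
      rw [hcc k]
      have := (hlk k).ne'
      field_simp
    have harg_s : ∀ k : Fin d, (lam ^ (1 / α k) * s k) * (cc k * z k) = s k * z k := by
      intro k
      rw [hcc k]
      have := (hlk k).ne'
      field_simp
    have hΛf : Λ (fun k => cc k * z k) = ((lam⁻¹ : ℝ) : ℂ) * Λ z := by
      have h := hΛh lam⁻¹ (inv_pos.2 hlam) z
      rw [← h]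
      congr 1
      funext i
      rw [hcc i, Real.inv_rpow hlam.le]
    have hRpart : ((‖((lam⁻¹ : ℝ) : ℂ) * Λ z‖) ^ 2)⁻¹ =
        lam ^ 2 * (‖Λ z‖ ^ 2)⁻¹ := by
      rw [norm_mul, Complex.norm_real, Real.norm_eq_abs, abs_of_pos (inv_pos.2 hlam), mul_pow, mul_inv,
        inv_pow, inv_inv]
    have hden : ∀ (k : Fin d) (w : ℂ),
        w / ((2 * Real.pi * (cc k * z k) ^ 2 : ℝ) : ℂ) =
        ((lam ^ (2 * (1 / α k)) : ℝ) : ℂ) * (w / ((2 * Real.pi * (z k) ^ 2 : ℝ) : ℂ)) := by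
      intro k w
      have hde : ((2 * Real.pi * (cc k * z k) ^ 2 : ℝ) : ℂ) =
          ((lam ^ (2 * (1 / α k)) : ℝ) : ℂ)⁻¹ * ((2 * Real.pi * (z k) ^ 2 : ℝ) : ℂ) := by
        rw [← Complex.ofReal_inv, ← Complex.ofReal_mul]
        congr 1
        rw [hcc k, mul_comm (2:ℝ) (1 / α k), Real.rpow_mul hlam.le, Real.rpow_two]
        have := (hlk k).ne'
        field_simp
      rw [hde, div_eq_mul_inv, mul_inv, inv_inv, div_eq_mul_inv]
      ring
    simp only [hfapp z]
    simp only [harg_t, harg_s, hden, hΛf, hRpart]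
    rw [Finset.prod_mul_distrib]
    have hfac : ∏ k : Fin d, ((lam ^ (2 * (1 / α k)) : ℝ) : ℂ) = ((lam ^ (2 * q) : ℝ) : ℂ) := by
      rw [← Complex.ofReal_prod]
      congr 1
      rw [← Real.rpow_sum_of_pos hlam]
      congr 1
      rw [hqdef, Finset.mul_sum]
    rw [hfac]
    rw [Complex.ofReal_mul]
    have hexp : (lam ^ (2 * q + 2) : ℝ) = lam ^ (2 * q) * lam ^ 2 := by
      rw [Real.rpow_add hlam, Real.rpow_two]
    rw [hexp, Complex.ofReal_mul]
    push_cast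
    ring
  -- put everything together
  rw [hC (fun k => lam ^ (1 / α k) * t k) (fun k => lam ^ (1 / α k) * s k), hC t s]
  have h3 : ∫ z : Fin d → ℝ,
      (∏ k : Fin d,
          (Complex.exp (Complex.I * (((fun k => lam ^ (1 / α k) * t k) k * (f z) k : ℝ) : ℂ)) - 1) *
            (Complex.exp (-Complex.I * (((fun k => lam ^ (1 / α k) * s k) k * (f z) k : ℝ) : ℂ)) - 1) /
              ((2 * Real.pi * ((f z) k) ^ 2 : ℝ) : ℂ)) *
        ((‖Λ (f z)‖ ^ 2)⁻¹ : ℝ) =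
      ((lam ^ (2 * q + 2) : ℝ) : ℂ) * ∫ z : Fin d → ℝ,
      (∏ k : Fin d,
          (Complex.exp (Complex.I * ((t k * z k : ℝ) : ℂ)) - 1) *
            (Complex.exp (-Complex.I * ((s k * z k : ℝ) : ℂ)) - 1) /
              ((2 * Real.pi * (z k) ^ 2 : ℝ) : ℂ)) *
        ((‖Λ z‖ ^ 2)⁻¹ : ℝ) := by
    simp_rw [hpt]
    exact integral_const_mul _ _
  have hkey : (∫ z : Fin d → ℝ,
      (∏ k : Fin d,
          (Complex.exp (Complex.I * (((fun k => lam ^ (1 / α k) * t k) k * (f z) k : ℝ) : ℂ)) - 1) *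
            (Complex.exp (-Complex.I * (((fun k => lam ^ (1 / α k) * s k) k * (f z) k : ℝ) : ℂ)) - 1) /
              ((2 * Real.pi * ((f z) k) ^ 2 : ℝ) : ℂ)) *
        ((‖Λ (f z)‖ ^ 2)⁻¹ : ℝ)) =
      (lam ^ q) • ∫ y : Fin d → ℝ,
      (∏ k : Fin d,
          (Complex.exp (Complex.I * (((fun k => lam ^ (1 / α k) * t k) k * y k : ℝ) : ℂ)) - 1) *
            (Complex.exp (-Complex.I * (((fun k => lam ^ (1 / α k) * s k) k * y k : ℝ) : ℂ)) - 1) /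
              ((2 * Real.pi * (y k) ^ 2 : ℝ) : ℂ)) *
        ((‖Λ y‖ ^ 2)⁻¹ : ℝ) := h1.symm.trans h2
  have h4 : (lam ^ q) • (∫ y : Fin d → ℝ,
      (∏ k : Fin d,
          (Complex.exp (Complex.I * (((fun k => lam ^ (1 / α k) * t k) k * y k : ℝ) : ℂ)) - 1) *
            (Complex.exp (-Complex.I * (((fun k => lam ^ (1 / α k) * s k) k * y k : ℝ) : ℂ)) - 1) /
              ((2 * Real.pi * (y k) ^ 2 : ℝ) : ℂ)) *
        ((‖Λ y‖ ^ 2)⁻¹ : ℝ)) =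
      ((lam ^ (2 * q + 2) : ℝ) : ℂ) * ∫ z : Fin d → ℝ,
      (∏ k : Fin d,
          (Complex.exp (Complex.I * ((t k * z k : ℝ) : ℂ)) - 1) *
            (Complex.exp (-Complex.I * ((s k * z k : ℝ) : ℂ)) - 1) /
              ((2 * Real.pi * (z k) ^ 2 : ℝ) : ℂ)) *
        ((‖Λ z‖ ^ 2)⁻¹ : ℝ) := hkey.symm.trans h3
  have hlq : (lam : ℝ) ^ q ≠ 0 := (Real.rpow_pos_of_pos hlam q).ne'
  calc (∫ y : Fin d → ℝ,
      (∏ k : Fin d,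
          (Complex.exp (Complex.I * (((fun k => lam ^ (1 / α k) * t k) k * y k : ℝ) : ℂ)) - 1) *
            (Complex.exp (-Complex.I * (((fun k => lam ^ (1 / α k) * s k) k * y k : ℝ) : ℂ)) - 1) /
              ((2 * Real.pi * (y k) ^ 2 : ℝ) : ℂ)) *
        ((‖Λ y‖ ^ 2)⁻¹ : ℝ))
      = ((lam ^ q)⁻¹ : ℝ) • ((lam ^ q : ℝ) • ∫ y : Fin d → ℝ,
      (∏ k : Fin d,
          (Complex.exp (Complex.I * (((fun k => lam ^ (1 / α k) * t k) k * y k : ℝ) : ℂ)) - 1) *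
            (Complex.exp (-Complex.I * (((fun k => lam ^ (1 / α k) * s k) k * y k : ℝ) : ℂ)) - 1) /
              ((2 * Real.pi * (y k) ^ 2 : ℝ) : ℂ)) *
        ((‖Λ y‖ ^ 2)⁻¹ : ℝ)) := by
        rw [smul_smul, inv_mul_cancel₀ hlq, one_smul]
    _ = ((lam ^ q)⁻¹ : ℝ) • (((lam ^ (2 * q + 2) : ℝ) : ℂ) * ∫ z : Fin d → ℝ,
      (∏ k : Fin d,
          (Complex.exp (Complex.I * ((t k * z k : ℝ) : ℂ)) - 1) *
            (Complex.exp (-Complex.I * ((s k * z k : ℝ) : ℂ)) - 1) /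
              ((2 * Real.pi * (z k) ^ 2 : ℝ) : ℂ)) *
        ((‖Λ z‖ ^ 2)⁻¹ : ℝ)) := by rw [h4]
    _ = ((lam ^ (2 + q) : ℝ) : ℂ) * ∫ z : Fin d → ℝ,
      (∏ k : Fin d,
          (Complex.exp (Complex.I * ((t k * z k : ℝ) : ℂ)) - 1) *
            (Complex.exp (-Complex.I * ((s k * z k : ℝ) : ℂ)) - 1) /
              ((2 * Real.pi * (z k) ^ 2 : ℝ) : ℂ)) *
        ((‖Λ z‖ ^ 2)⁻¹ : ℝ) := by
        rw [Complex.real_smul, ← mul_assoc, ← Complex.ofReal_mul]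
        congr 2
        rw [← Real.rpow_neg hlam.le, ← Real.rpow_add hlam]
        congr 1
        ring
end

section
/- For an integer m ≥ 0 and x ∈ ℝ let D_m(x) = Σ_{l=0}^{m} e^{ilx} (with D_m = 0 when m < 0). Then for every δ ∈ (0,1), every integer n ≥ 1, every t ∈ [0,1], and every y ∈ ℝ with |y| ≤ πn, one has n^{-2} |D_{⌊nt⌋−1}(y/n)|² ≤ (π²/2^{1−δ}) · t^{1−δ} · min{1, |y|^{−(1+δ)}}. -/
open Complex


theorem exp_sub_one_abs' (x : ℝ) :
    ‖Complex.exp ((x:ℂ) * I) - 1‖ = 2 * |Real.sin (x/2)| := by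
  have hre : (Complex.exp ((x:ℂ) * I) - 1).re = Real.cos x - 1 := by
    simp [Complex.exp_ofReal_mul_I_re]
  have him : (Complex.exp ((x:ℂ) * I) - 1).im = Real.sin x := by
    simp [Complex.exp_ofReal_mul_I_im]
  have hsq : ‖Complex.exp ((x:ℂ) * I) - 1‖ ^ 2 = (2 * |Real.sin (x/2)|)^2 := by
    rw [Complex.sq_norm, Complex.normSq_apply, hre, him]
    have h1 : Real.sin (x/2) ^ 2 = 1/2 - Real.cos (2*(x/2))/2 := Real.sin_sq_eq_half_sub (x/2)
    have h2 : Real.cos x ^2 + Real.sin x ^2 = 1 := Real.cos_sq_add_sin_sq x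
    have h3 : |Real.sin (x/2)|^2 = Real.sin (x/2)^2 := sq_abs _
    have hx : 2*(x/2) = x := by ring
    rw [hx] at h1
    nlinarith
  calc ‖Complex.exp ((x:ℂ) * I) - 1‖
      = Real.sqrt (‖Complex.exp ((x:ℂ) * I) - 1‖ ^ 2) :=
        (Real.sqrt_sq (norm_nonneg _)).symm
    _ = Real.sqrt ((2 * |Real.sin (x/2)|)^2) := by rw [hsq]
    _ = 2 * |Real.sin (x/2)| := Real.sqrt_sq (by positivity)

theorem dirichlet_sum_bound' (x : ℝ) (m : ℕ) (hs : Real.sin (x/2) ≠ 0) :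
    ‖∑ l ∈ Finset.range m, Complex.exp (Complex.I * (l : ℂ) * (x : ℂ))‖
      ≤ 1 / |Real.sin (x/2)| := by
  have hterm : ∀ l : ℕ, Complex.exp (Complex.I * (l : ℂ) * (x : ℂ))
      = Complex.exp ((x:ℂ) * I) ^ l := by
    intro l
    rw [← Complex.exp_nat_mul]
    congr 1
    ring
  have hz1 : Complex.exp ((x:ℂ) * I) ≠ 1 := by
    intro h
    have := exp_sub_one_abs' x
    rw [h] at this
    simp at this
    exact hs this
  have hgeom : ∑ l ∈ Finset.range m, Complex.exp ((x:ℂ) * I) ^ l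
      = (Complex.exp ((x:ℂ) * I) ^ m - 1) / (Complex.exp ((x:ℂ) * I) - 1) :=
    geom_sum_eq hz1 m
  simp only [hterm]
  rw [hgeom, norm_div, exp_sub_one_abs']
  have hnum : ‖Complex.exp ((x:ℂ) * I) ^ m - 1‖ ≤ 2 := by
    have h1 := norm_sub_le (Complex.exp ((x:ℂ) * I) ^ m) 1
    rw [norm_pow, Complex.norm_exp_ofReal_mul_I] at h1
    simp only [one_pow, norm_one] at h1; linarith
  have hs' : 0 < |Real.sin (x/2)| := abs_pos.mpr hs
  have hden : 0 < 2 * |Real.sin (x/2)| := by positivity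
  rw [div_le_div_iff₀ hden hs', one_mul]
  nlinarith

theorem abs_sin_of_abs_le_pi (w : ℝ) (hw : |w| ≤ Real.pi) : |Real.sin w| = Real.sin |w| := by
  rcases le_or_gt 0 w with h | h
  · rw [_root_.abs_of_nonneg h, _root_.abs_of_nonneg
      (Real.sin_nonneg_of_nonneg_of_le_pi h (by rwa [_root_.abs_of_nonneg h] at hw))]
  · rw [abs_of_neg h, Real.sin_neg]
    rw [abs_of_neg h] at hw
    have hs : Real.sin w ≤ 0 :=
      Real.sin_nonpos_of_nonpos_of_neg_pi_le h.le (by linarith)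
    rw [_root_.abs_of_nonpos hs]

theorem t_sq_le (δ t : ℝ) (hδ0 : 0 < δ) (hδ1 : δ < 1) (ht0 : 0 ≤ t) (ht1 : t ≤ 1) :
    t ^ 2 ≤ Real.pi ^ 2 / (2:ℝ) ^ (1 - δ) * t ^ (1 - δ) := by
  have hπ := Real.pi_pos
  have h2 : (2:ℝ) ^ (1 - δ) ≤ 2 := by
    calc (2:ℝ) ^ (1 - δ) ≤ (2:ℝ) ^ (1:ℝ) :=
          Real.rpow_le_rpow_of_exponent_le (by norm_num) (by linarith)
      _ = 2 := Real.rpow_one 2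
  have h2' : (0:ℝ) < (2:ℝ) ^ (1 - δ) := Real.rpow_pos_of_pos (by norm_num) _
  have hπ2 : (2:ℝ) ≤ Real.pi ^ 2 := by nlinarith [Real.pi_gt_three]
  have hcoef : 1 ≤ Real.pi ^ 2 / (2:ℝ) ^ (1 - δ) := by
    rw [le_div_iff₀ h2']
    linarith
  have htt : t ^ 2 ≤ t ^ (1 - δ) := by
    rcases eq_or_lt_of_le ht0 with h | h
    · rw [← h, Real.zero_rpow (by linarith)]
      norm_num
    · calc t ^ 2 = t ^ (2:ℝ) := (Real.rpow_natCast t 2).symm ▸ by norm_num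
        _ ≤ t ^ (1 - δ) := Real.rpow_le_rpow_of_exponent_ge h ht1 (by linarith)
  calc t ^ 2 ≤ t ^ (1 - δ) := htt
    _ = 1 * t ^ (1 - δ) := (one_mul _).symm
    _ ≤ Real.pi ^ 2 / (2:ℝ) ^ (1 - δ) * t ^ (1 - δ) := by
        apply mul_le_mul_of_nonneg_right hcoef (Real.rpow_nonneg ht0 _)

theorem interp_bound (δ t a : ℝ) (hδ0 : 0 < δ) (hδ1 : δ < 1) (ht0 : 0 ≤ t) (ht1 : t ≤ 1)
    (ha : 1 ≤ a) :
    min (t ^ 2) (Real.pi ^ 2 / a ^ 2)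
      ≤ Real.pi ^ 2 / (2:ℝ) ^ (1 - δ) * t ^ (1 - δ) * a ^ (-(1 + δ)) := by
  have hπ := Real.pi_pos
  have ha0 : (0:ℝ) < a := lt_of_lt_of_le one_pos ha
  rcases eq_or_lt_of_le ht0 with h | h
  · rw [← h, Real.zero_rpow (by linarith : 1 - δ ≠ 0)]
    have h0 : min ((0:ℝ) ^ 2) (Real.pi ^ 2 / a ^ 2) = 0 := by
      rw [min_eq_left (by norm_num; positivity)]
      norm_num
    rw [h0]
    simp
  · set M := min (t ^ 2) (Real.pi ^ 2 / a ^ 2) with hM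
    have hM0 : 0 < M := lt_min (by positivity) (by positivity)
    have key : M = M ^ ((1 - δ)/2) * M ^ ((1 + δ)/2) := by
      rw [← Real.rpow_add hM0, show (1 - δ)/2 + (1 + δ)/2 = (1:ℝ) by ring, Real.rpow_one]
    have h1 : M ^ ((1 - δ)/2) ≤ (t ^ 2) ^ ((1 - δ)/2) :=
      Real.rpow_le_rpow hM0.le (min_le_left _ _) (by linarith)
    have h2 : M ^ ((1 + δ)/2) ≤ (Real.pi ^ 2 / a ^ 2) ^ ((1 + δ)/2) :=
      Real.rpow_le_rpow hM0.le (min_le_right _ _) (by linarith)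
    have e1 : (t ^ 2) ^ ((1 - δ)/2) = t ^ (1 - δ) := by
      rw [← Real.rpow_natCast t 2, ← Real.rpow_mul h.le]
      norm_num
      congr 1
      ring
    have e2 : (Real.pi ^ 2 / a ^ 2) ^ ((1 + δ)/2)
        = Real.pi ^ (1 + δ) / a ^ (1 + δ) := by
      rw [Real.div_rpow (by positivity) (by positivity),
        ← Real.rpow_natCast Real.pi 2, ← Real.rpow_natCast a 2,
        ← Real.rpow_mul hπ.le, ← Real.rpow_mul ha0.le]
      norm_num
      rw [show (2:ℝ) * ((1 + δ)/2) = 1 + δ by ring]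
    have hkey : Real.pi ^ (1 + δ) ≤ Real.pi ^ 2 / (2:ℝ) ^ (1 - δ) := by
      rw [le_div_iff₀ (Real.rpow_pos_of_pos (by norm_num) _)]
      have h21 : (2:ℝ) ^ (1 - δ) ≤ Real.pi ^ (1 - δ) :=
        Real.rpow_le_rpow (by norm_num) Real.two_le_pi (by linarith)
      calc Real.pi ^ (1 + δ) * (2:ℝ) ^ (1 - δ)
          ≤ Real.pi ^ (1 + δ) * Real.pi ^ (1 - δ) := by
            apply mul_le_mul_of_nonneg_left h21 (Real.rpow_nonneg hπ.le _)
        _ = Real.pi ^ ((1 + δ) + (1 - δ)) := (Real.rpow_add hπ _ _).symm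
        _ = Real.pi ^ 2 := by
            rw [show (1 + δ) + (1 - δ) = ((2:ℕ):ℝ) by push_cast; ring, Real.rpow_natCast]
    have hane : a ^ (-(1 + δ)) = (a ^ (1 + δ))⁻¹ := Real.rpow_neg ha0.le _
    calc M = M ^ ((1 - δ)/2) * M ^ ((1 + δ)/2) := key
      _ ≤ (t ^ 2) ^ ((1 - δ)/2) * (Real.pi ^ 2 / a ^ 2) ^ ((1 + δ)/2) := by
          apply mul_le_mul h1 h2 (Real.rpow_nonneg hM0.le _)
            (Real.rpow_nonneg (by positivity) _)
      _ = t ^ (1 - δ) * (Real.pi ^ (1 + δ) / a ^ (1 + δ)) := by rw [e1, e2]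
      _ ≤ t ^ (1 - δ) * (Real.pi ^ 2 / (2:ℝ) ^ (1 - δ) / a ^ (1 + δ)) := by
          have hap : (0:ℝ) < a ^ (1 + δ) := Real.rpow_pos_of_pos ha0 _
          gcongr
      _ = Real.pi ^ 2 / (2:ℝ) ^ (1 - δ) * t ^ (1 - δ) * a ^ (-(1 + δ)) := by
          rw [hane]; ring

/-- Bound on the Dirichlet-type kernel `D_m(x) = Σ_{l=0}^m e^{ilx}`:
for `δ ∈ (0,1)`, `n ≥ 1`, `t ∈ [0,1]` and `|y| ≤ πn`,
`n⁻² |D_{⌊nt⌋−1}(y/n)|² ≤ (π²/2^{1−δ}) t^{1−δ} min{1, |y|^{−(1+δ)}}`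
(with the convention that the minimum equals `1` when `y = 0`). -/
theorem dirichlet_kernel_bound
    (δ : ℝ) (hδ : δ ∈ Set.Ioo (0 : ℝ) 1) (n : ℕ) (hn : 1 ≤ n)
    (t : ℝ) (ht : t ∈ Set.Icc (0 : ℝ) 1) (y : ℝ) (hy : |y| ≤ Real.pi * n) :
    ((n : ℝ)⁻¹) ^ 2 *
        ‖∑ l ∈ Finset.range (⌊(n : ℝ) * t⌋.toNat),
          Complex.exp (Complex.I * (l : ℂ) * ((y / n : ℝ) : ℂ))‖ ^ 2
      ≤ (Real.pi ^ 2 / (2 : ℝ) ^ (1 - δ)) * t ^ (1 - δ) *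
          (if y = 0 then 1 else min 1 (|y| ^ (-(1 + δ)))) := by
  obtain ⟨hδ0, hδ1⟩ := hδ
  obtain ⟨ht0, ht1⟩ := ht
  have hπ := Real.pi_pos
  have hn0 : (0:ℝ) < n := by exact_mod_cast hn
  set m := ⌊(n : ℝ) * t⌋.toNat with hm
  set A := ‖∑ l ∈ Finset.range m,
    Complex.exp (Complex.I * (l : ℂ) * ((y / n : ℝ) : ℂ))‖ with hA
  have hA0 : 0 ≤ A := norm_nonneg _
  have hbound1 : A ≤ (n:ℝ) * t := by
    have hterm : ∀ l : ℕ,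
        ‖Complex.exp (Complex.I * (l : ℂ) * ((y / n : ℝ) : ℂ))‖ = 1 := by
      intro l
      rw [show Complex.I * (l : ℂ) * ((y / n : ℝ) : ℂ)
          = (((l : ℝ) * (y / n) : ℝ) : ℂ) * I by push_cast; ring,
        Complex.norm_exp_ofReal_mul_I]
    have h1 : A ≤ ∑ l ∈ Finset.range m,
        ‖Complex.exp (Complex.I * (l : ℂ) * ((y / n : ℝ) : ℂ))‖ :=
      norm_sum_le _ _
    have h2 : ∑ l ∈ Finset.range m,
        ‖Complex.exp (Complex.I * (l : ℂ) * ((y / n : ℝ) : ℂ))‖ = (m:ℝ) := by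
      simp only [hterm]
      simp
    have h0 : (0:ℤ) ≤ ⌊(n : ℝ) * t⌋ := Int.floor_nonneg.mpr (by positivity)
    have h3 : (m:ℝ) ≤ (n:ℝ) * t := by
      have : ((m:ℤ):ℝ) = ((⌊(n : ℝ) * t⌋ : ℤ) : ℝ) := by
        rw [hm, Int.toNat_of_nonneg h0]
      push_cast at this
      rw [this]
      exact Int.floor_le _
    linarith
  have hAn1 : A / n ≤ t := (div_le_iff₀ hn0).mpr (by linarith)
  have hEq : ((n:ℝ)⁻¹) ^ 2 * A ^ 2 = (A / n) ^ 2 := by ring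
  by_cases hy0 : y = 0
  · rw [if_pos hy0, mul_one, hEq]
    calc (A / n) ^ 2 ≤ t ^ 2 := pow_le_pow_left₀ (by positivity) hAn1 2
      _ ≤ Real.pi ^ 2 / (2:ℝ) ^ (1 - δ) * t ^ (1 - δ) := t_sq_le δ t hδ0 hδ1 ht0 ht1
  · rw [if_neg hy0]
    have hya : 0 < |y| := abs_pos.mpr hy0
    have hxabs : |y / (n:ℝ)| = |y| / n := by
      rw [abs_div, abs_of_pos hn0]
    have hu : |y / (n:ℝ) / 2| = |y| / (2 * n) := by
      rw [abs_div, hxabs]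
      rw [show |(2:ℝ)| = 2 by norm_num]
      ring
    have hupi : |y / (n:ℝ) / 2| ≤ Real.pi / 2 := by
      rw [hu, div_le_div_iff₀ (by positivity) (by norm_num)]
      nlinarith
    have hs_lb : |y| / (Real.pi * n) ≤ |Real.sin (y / (n:ℝ) / 2)| := by
      rw [abs_sin_of_abs_le_pi _ (le_trans hupi (by linarith)), hu]
      have h2 := Real.mul_le_sin (abs_nonneg (y / (n:ℝ) / 2)) hupi
      rw [hu] at h2
      have heq : |y| / (Real.pi * n) = 2 / Real.pi * (|y| / (2 * n)) := by
        field_simp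
      linarith
    have hsne : Real.sin (y / (n:ℝ) / 2) ≠ 0 := by
      intro hc
      rw [hc, abs_zero] at hs_lb
      have : 0 < |y| / (Real.pi * n) := by positivity
      linarith
    have hbound2 : A ≤ Real.pi * n / |y| := by
      calc A ≤ 1 / |Real.sin (y / (n:ℝ) / 2)| := dirichlet_sum_bound' (y / n) m hsne
        _ ≤ 1 / (|y| / (Real.pi * n)) :=
            one_div_le_one_div_of_le (by positivity) hs_lb
        _ = Real.pi * n / |y| := by rw [one_div_div]
    have hAn2 : A / n ≤ Real.pi / |y| := by
      rw [div_le_div_iff₀ hn0 hya]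
      have h := (le_div_iff₀ hya).mp hbound2
      linarith
    have hmin : (A / n) ^ 2 ≤ min (t ^ 2) (Real.pi ^ 2 / |y| ^ 2) := by
      refine le_min (pow_le_pow_left₀ (by positivity) hAn1 2) ?_
      calc (A / n) ^ 2 ≤ (Real.pi / |y|) ^ 2 := pow_le_pow_left₀ (by positivity) hAn2 2
        _ = Real.pi ^ 2 / |y| ^ 2 := div_pow _ _ _
    rcases le_or_gt 1 |y| with hge | hlt
    · rw [min_eq_right (Real.rpow_le_one_of_one_le_of_nonpos hge (by linarith)), hEq]
      exact le_trans hmin (interp_bound δ t |y| hδ0 hδ1 ht0 ht1 hge)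
    · rw [min_eq_left (Real.one_le_rpow_of_pos_of_le_one_of_nonpos hya hlt.le (by linarith)),
        mul_one, hEq]
      calc (A / n) ^ 2 ≤ t ^ 2 := pow_le_pow_left₀ (by positivity) hAn1 2
        _ ≤ Real.pi ^ 2 / (2:ℝ) ^ (1 - δ) * t ^ (1 - δ) := t_sq_le δ t hδ0 hδ1 ht0 ht1
end
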